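/- The PF-D3 coefficient function e1 satisfies lim_{v→0⁺} e1(v) = 90987349/53222400 and lim_{v→0⁺} (e1(v) − 90987349/53222400)/v² = −16301796103/72648576000; in particular e1 tends to the corresponding coefficient of the classical Quinlan–Tremaine method as v → 0, and its v²-Taylor coefficient is four times that of the PF-D0 coefficient b1. -/

import Mathlib

open Filter

/-- The variable coefficient `e₁(v)` of the method PF-D3 (phase lag and its first,
second and third derivatives vanish at frequency `v`). -/
noncomputable def pfd3e1 (v : ℝ) : ℝ :=
  ((-108) * v ^ 5 / (Real.sin (v / 2)) ^ 10
      + 9 * v ^ 3 * (53 * v ^ 2 + 12) / (Real.sin (v / 2)) ^ 8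
      + 486 * v / (Real.sin (v / 2)) ^ 6
      - 2484 * v / (Real.sin (v / 2)) ^ 4
      - 6144 * v * (4 * v ^ 2 - 9) * Real.cos v
      + 3 * (Real.cos (v / 2) / Real.sin (v / 2))
          * (99 * v ^ 2 / (Real.sin (v / 2)) ^ 6
            + 9 * (16 - 9 * v ^ 2) / (Real.sin (v / 2)) ^ 4
            - 8 * (113 * v ^ 2 + 276) / (Real.sin (v / 2)) ^ 2
            - 11266 * v ^ 2 + 10032)
      - 6144 * (v ^ 3 - 6 * v + 4 * Real.sin v)
      + 2 * v ^ 2 * (26624 * Real.sin v - 5635 * Real.tan (v / 2))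
      + 5520 * Real.tan (v / 2)
      - 9 * v / (Real.cos (v / 2)) ^ 4 * (v * Real.tan (v / 2) - 6)
      - 6 / (Real.cos (v / 2)) ^ 2 * ((61 * v ^ 2 + 24) * Real.tan (v / 2) - 363 * v)
      + 32508 * v / (Real.cos v - 1))
    / (3072 * v ^ 5)


open Complex in
private lemma expsum18 (x : ℝ) :
    (∑ m ∈ Finset.range 18, ((x:ℂ)*I)^m / m.factorial) =
      ((1 - x^2/2 + x^4/24 - x^6/720 + x^8/40320 - x^10/3628800 + x^12/479001600
        - x^14/87178291200 + x^16/20922789888000 : ℝ) : ℂ)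
      + ((x - x^3/6 + x^5/120 - x^7/5040 + x^9/362880 - x^11/39916800 + x^13/6227020800
        - x^15/1307674368000 + x^17/355687428096000 : ℝ) : ℂ) * I := by
  simp [Finset.sum_range_succ, mul_pow, Complex.ext_iff]
  norm_num [pow_succ]
  norm_num [Nat.factorial]
  constructor <;> ring

private lemma sincos_tb (x : ℝ) (h : |x| ≤ 1) :
    |Real.sin x - (x - x^3/6 + x^5/120 - x^7/5040 + x^9/362880 - x^11/39916800
        + x^13/6227020800 - x^15/1307674368000 + x^17/355687428096000)| ≤
      (19 / 115242726703104000) * |x|^18 ∧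
    |Real.cos x - (1 - x^2/2 + x^4/24 - x^6/720 + x^8/40320 - x^10/3628800
        + x^12/479001600 - x^14/87178291200 + x^16/20922789888000)| ≤
      (19 / 115242726703104000) * |x|^18 := by
  have hx : ‖(x:ℂ)*Complex.I‖ ≤ 1 := by
    simpa using h
  have hb := Complex.exp_bound hx (n := 18) (by norm_num)
  rw [expsum18] at hb
  have habs : ‖(x:ℂ)*Complex.I‖ = |x| := by simp
  rw [habs] at hb
  set z := Complex.exp ((x:ℂ)*Complex.I) - _ with hz
  have hb' : ‖z‖ ≤ 19 / 115242726703104000 * |x|^18 := by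
    refine le_trans hb (le_of_eq ?_)
    norm_num [Nat.factorial]; ring
  have him : z.im = Real.sin x - (x - x^3/6 + x^5/120 - x^7/5040 + x^9/362880 - x^11/39916800
      + x^13/6227020800 - x^15/1307674368000 + x^17/355687428096000) := by
    simp [hz, Complex.exp_ofReal_mul_I_im, ← Complex.ofReal_pow]
  have hre : z.re = Real.cos x - (1 - x^2/2 + x^4/24 - x^6/720 + x^8/40320 - x^10/3628800
      + x^12/479001600 - x^14/87178291200 + x^16/20922789888000) := by
    simp [hz, Complex.exp_ofReal_mul_I_re, ← Complex.ofReal_pow]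
  constructor
  · calc _ = |z.im| := by rw [him]
      _ ≤ ‖z‖ := Complex.abs_im_le_norm z
      _ ≤ _ := hb'
  · calc _ = |z.re| := by rw [hre]
      _ ≤ ‖z‖ := Complex.abs_re_le_norm z
      _ ≤ _ := hb'

def PA (f p : ℝ → ℝ) (e : ℝ) : Prop := ∀ v : ℝ, 0 ≤ v → v ≤ 1/8 → |f v - p v| ≤ e * v^18
def PB (p : ℝ → ℝ) (B : ℝ) : Prop := ∀ v : ℝ, 0 ≤ v → v ≤ 1/8 → |p v| ≤ B

lemma PB.const {a C : ℝ} (h : |a| ≤ C) : PB (fun _ => a) C := fun _ _ _ => h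

lemma PB.horner {q : ℝ → ℝ} {B C : ℝ} (a : ℝ) (hq : PB q B) (hB : 0 ≤ B)
    (h : |a| + B/8 ≤ C) : PB (fun v => a + v * q v) C := by
  intro v h0 h1
  have := hq v h0 h1
  calc |a + v * q v| ≤ |a| + |v * q v| := abs_add_le _ _
    _ = |a| + v * |q v| := by rw [abs_mul, abs_of_nonneg h0]
    _ ≤ |a| + (1/8) * B := by
        have : v * |q v| ≤ (1/8) * B := by
          apply mul_le_mul h1 this (abs_nonneg _) (by norm_num)
        linarith
    _ ≤ C := by linarith

lemma PA.exact (p : ℝ → ℝ) : PA p p 0 := by intro v _ _; simp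

lemma PA.add' {f g p q r : ℝ → ℝ} {e d E : ℝ} (hf : PA f p e) (hg : PA g q d)
    (hid : ∀ v : ℝ, p v + q v = r v) (h : e + d ≤ E) :
    PA (fun v => f v + g v) r E := by
  intro v h0 h1
  have h2 := hf v h0 h1; have h3 := hg v h0 h1
  have h4 : (0:ℝ) ≤ v^18 := by positivity
  calc |f v + g v - r v| = |(f v - p v) + (g v - q v)| := by rw [← hid]; ring_nf
    _ ≤ |f v - p v| + |g v - q v| := abs_add_le _ _
    _ ≤ e * v^18 + d * v^18 := by linarith
    _ ≤ E * v^18 := by nlinarith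

lemma PA.mul {f g p q r t : ℝ → ℝ} {e d P Q T E : ℝ} (hf : PA f p e) (hg : PA g q d)
    (hp : PB p P) (hq : PB q Q) (ht : PB t T)
    (hid : ∀ v : ℝ, p v * q v = r v + v^18 * t v)
    (he : 0 ≤ e) (hd : 0 ≤ d)
    (hE : (P + e * (1/8)^18) * d + Q * e + T ≤ E) :
    PA (fun v => f v * g v) r E := by
  intro v h0 h1
  have h2 := hf v h0 h1; have h3 := hg v h0 h1
  have h4 := hp v h0 h1; have h5 := hq v h0 h1
  have h6 := ht v h0 h1
  have h7 : (0:ℝ) ≤ v^18 := by positivity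
  have h8 : v^18 ≤ (1/8)^18 := by
    apply pow_le_pow_left₀ h0 h1
  have hfb : |f v| ≤ P + e * (1/8)^18 := by
    calc |f v| = |p v + (f v - p v)| := by ring_nf
      _ ≤ |p v| + |f v - p v| := abs_add_le _ _
      _ ≤ P + e * (1/8)^18 := by nlinarith
  calc |f v * g v - r v|
      = |f v * (g v - q v) + q v * (f v - p v) + v^18 * t v| := by
        rw [show r v = p v * q v - v^18 * t v by rw [hid]; ring]; ring_nf
    _ ≤ |f v * (g v - q v)| + |q v * (f v - p v)| + |v^18 * t v| := by
        refine le_trans (abs_add_le _ _) ?_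
        have := abs_add_le (f v * (g v - q v)) (q v * (f v - p v))
        linarith
    _ = |f v| * |g v - q v| + |q v| * |f v - p v| + v^18 * |t v| := by
        rw [abs_mul, abs_mul, abs_mul, abs_of_nonneg h7]
    _ ≤ (P + e * (1/8)^18) * (d * v^18) + Q * (e * v^18) + v^18 * T := by
        have hP : (0:ℝ) ≤ P := le_trans (abs_nonneg _) h4
        have hQ : (0:ℝ) ≤ Q := le_trans (abs_nonneg _) h5
        have b1 : |f v| * |g v - q v| ≤ (P + e * (1/8)^18) * (d * v^18) := by
          apply mul_le_mul hfb h3 (abs_nonneg _); nlinarith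
        have b2 : |q v| * |f v - p v| ≤ Q * (e * v^18) := by
          apply mul_le_mul h5 h2 (abs_nonneg _) hQ
        have b3 : v^18 * |t v| ≤ v^18 * T := by nlinarith
        linarith
    _ ≤ E * v^18 := by nlinarith

lemma PA.out {f p : ℝ → ℝ} {e : ℝ} (h : PA f p e) {F : ℝ → ℝ}
    (hf : ∀ v, f v - p v = F v) :
    ∀ v : ℝ, 0 ≤ v → v ≤ 1/8 → |F v| ≤ e * v^18 := by
  intro v h0 h1
  rw [← hf v]; exact h v h0 h1

private lemma sinTM : PA (fun v => Real.sin (v / 2)) (fun v : ℝ => (0) + v * ((1 / 2) + v * ((0) + v * ((-1 / 48) + v * ((0) + v * ((1 / 3840) + v * ((0) + v * ((-1 / 645120) + v * ((0) + v * ((1 / 185794560) + v * ((0) + v * ((-1 / 81749606400) + v * ((0) + v * ((1 / 51011754393600) + v * ((0) + v * ((-1 / 42849873690624000) + v * ((0) + v * ((1 / 46620662575398912000))))))))))))))))))) ((19 / 30210189348858494976000)) := by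
  intro v h0 h1
  have hn : (0:ℝ) ≤ v/2 := by linarith
  have habs : |v/2| ≤ 1 := by rw [abs_of_nonneg hn]; linarith
  have h := (sincos_tb (v/2) habs).1
  rw [abs_of_nonneg hn] at h
  have h2 : v/2 - (v/2)^3/6 + (v/2)^5/120 - (v/2)^7/5040 + (v/2)^9/362880 - (v/2)^11/39916800 + (v/2)^13/6227020800 - (v/2)^15/1307674368000 + (v/2)^17/355687428096000 = (0) + v * ((1 / 2) + v * ((0) + v * ((-1 / 48) + v * ((0) + v * ((1 / 3840) + v * ((0) + v * ((-1 / 645120) + v * ((0) + v * ((1 / 185794560) + v * ((0) + v * ((-1 / 81749606400) + v * ((0) + v * ((1 / 51011754393600) + v * ((0) + v * ((-1 / 42849873690624000) + v * ((0) + v * ((1 / 46620662575398912000)))))))))))))))))) := by ring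
  have h3 : (v/2)^18 = v^18 / 262144 := by ring
  rw [h2, h3] at h
  beta_reduce
  linarith

private lemma cosTM : PA (fun v => Real.cos (v / 2)) (fun v : ℝ => (1) + v * ((0) + v * ((-1 / 8) + v * ((0) + v * ((1 / 384) + v * ((0) + v * ((-1 / 46080) + v * ((0) + v * ((1 / 10321920) + v * ((0) + v * ((-1 / 3715891200) + v * ((0) + v * ((1 / 1961990553600) + v * ((0) + v * ((-1 / 1428329123020800) + v * ((0) + v * ((1 / 1371195958099968000)))))))))))))))))) ((19 / 30210189348858494976000)) := by
  intro v h0 h1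
  have hn : (0:ℝ) ≤ v/2 := by linarith
  have habs : |v/2| ≤ 1 := by rw [abs_of_nonneg hn]; linarith
  have h := (sincos_tb (v/2) habs).2
  rw [abs_of_nonneg hn] at h
  have h2 : 1 - (v/2)^2/2 + (v/2)^4/24 - (v/2)^6/720 + (v/2)^8/40320 - (v/2)^10/3628800 + (v/2)^12/479001600 - (v/2)^14/87178291200 + (v/2)^16/20922789888000 = (1) + v * ((0) + v * ((-1 / 8) + v * ((0) + v * ((1 / 384) + v * ((0) + v * ((-1 / 46080) + v * ((0) + v * ((1 / 10321920) + v * ((0) + v * ((-1 / 3715891200) + v * ((0) + v * ((1 / 1961990553600) + v * ((0) + v * ((-1 / 1428329123020800) + v * ((0) + v * ((1 / 1371195958099968000))))))))))))))))) := by ring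
  have h3 : (v/2)^18 = v^18 / 262144 := by ring
  rw [h2, h3] at h
  beta_reduce
  linarith

private lemma pb0 : PB (fun v : ℝ => (1) + v * ((0) + v * ((-1 / 8) + v * ((0) + v * ((1 / 384) + v * ((0) + v * ((-1 / 46080) + v * ((0) + v * ((1 / 10321920) + v * ((0) + v * ((-1 / 3715891200) + v * ((0) + v * ((1 / 1961990553600) + v * ((0) + v * ((-1 / 1428329123020800) + v * ((0) + v * ((1 / 1371195958099968000)))))))))))))))))) (10019537608656676078415507096325973787797 / 10000000000000000000000000000000000000000) := by
  intro v h0 h1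
  beta_reduce
  have hu2 : v^2 ≤ (1/8:ℝ)^2 := pow_le_pow_left₀ h0 h1 2
  have hl2 : (0:ℝ) ≤ v^2 := pow_nonneg h0 2
  have hu3 : v^3 ≤ (1/8:ℝ)^3 := pow_le_pow_left₀ h0 h1 3
  have hl3 : (0:ℝ) ≤ v^3 := pow_nonneg h0 3
  have hu4 : v^4 ≤ (1/8:ℝ)^4 := pow_le_pow_left₀ h0 h1 4
  have hl4 : (0:ℝ) ≤ v^4 := pow_nonneg h0 4
  have hu5 : v^5 ≤ (1/8:ℝ)^5 := pow_le_pow_left₀ h0 h1 5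
  have hl5 : (0:ℝ) ≤ v^5 := pow_nonneg h0 5
  have hu6 : v^6 ≤ (1/8:ℝ)^6 := pow_le_pow_left₀ h0 h1 6
  have hl6 : (0:ℝ) ≤ v^6 := pow_nonneg h0 6
  have hu7 : v^7 ≤ (1/8:ℝ)^7 := pow_le_pow_left₀ h0 h1 7
  have hl7 : (0:ℝ) ≤ v^7 := pow_nonneg h0 7
  have hu8 : v^8 ≤ (1/8:ℝ)^8 := pow_le_pow_left₀ h0 h1 8
  have hl8 : (0:ℝ) ≤ v^8 := pow_nonneg h0 8
  have hu9 : v^9 ≤ (1/8:ℝ)^9 := pow_le_pow_left₀ h0 h1 9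
  have hl9 : (0:ℝ) ≤ v^9 := pow_nonneg h0 9
  have hu10 : v^10 ≤ (1/8:ℝ)^10 := pow_le_pow_left₀ h0 h1 10
  have hl10 : (0:ℝ) ≤ v^10 := pow_nonneg h0 10
  have hu11 : v^11 ≤ (1/8:ℝ)^11 := pow_le_pow_left₀ h0 h1 11
  have hl11 : (0:ℝ) ≤ v^11 := pow_nonneg h0 11
  have hu12 : v^12 ≤ (1/8:ℝ)^12 := pow_le_pow_left₀ h0 h1 12
  have hl12 : (0:ℝ) ≤ v^12 := pow_nonneg h0 12
  have hu13 : v^13 ≤ (1/8:ℝ)^13 := pow_le_pow_left₀ h0 h1 13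
  have hl13 : (0:ℝ) ≤ v^13 := pow_nonneg h0 13
  have hu14 : v^14 ≤ (1/8:ℝ)^14 := pow_le_pow_left₀ h0 h1 14
  have hl14 : (0:ℝ) ≤ v^14 := pow_nonneg h0 14
  have hu15 : v^15 ≤ (1/8:ℝ)^15 := pow_le_pow_left₀ h0 h1 15
  have hl15 : (0:ℝ) ≤ v^15 := pow_nonneg h0 15
  have hu16 : v^16 ≤ (1/8:ℝ)^16 := pow_le_pow_left₀ h0 h1 16
  have hl16 : (0:ℝ) ≤ v^16 := pow_nonneg h0 16
  rw [abs_le]; constructor <;> linarith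
private lemma pb1 : PB (fun v : ℝ => (-257 / 3290870299439923200) + v * ((0) + v * ((811 / 3949044359327907840000) + v * ((0) + v * ((-293 / 663439452367088517120000) + v * ((0) + v * ((109 / 140118412339929094815744000) + v * ((0) + v * ((-31 / 28023682467985818963148800000) + v * ((0) + v * ((151 / 122407445020162057231033958400000) + v * ((0) + v * ((-1 / 979259560161296457848271667200000) + v * ((0) + v * ((1 / 1880178355509689199068681601024000000)))))))))))))))) (48811282591114917763501 / 625000000000000000000000000000000000000) := by
  intro v h0 h1
  beta_reduce
  have hu2 : v^2 ≤ (1/8:ℝ)^2 := pow_le_pow_left₀ h0 h1 2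
  have hl2 : (0:ℝ) ≤ v^2 := pow_nonneg h0 2
  have hu3 : v^3 ≤ (1/8:ℝ)^3 := pow_le_pow_left₀ h0 h1 3
  have hl3 : (0:ℝ) ≤ v^3 := pow_nonneg h0 3
  have hu4 : v^4 ≤ (1/8:ℝ)^4 := pow_le_pow_left₀ h0 h1 4
  have hl4 : (0:ℝ) ≤ v^4 := pow_nonneg h0 4
  have hu5 : v^5 ≤ (1/8:ℝ)^5 := pow_le_pow_left₀ h0 h1 5
  have hl5 : (0:ℝ) ≤ v^5 := pow_nonneg h0 5
  have hu6 : v^6 ≤ (1/8:ℝ)^6 := pow_le_pow_left₀ h0 h1 6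
  have hl6 : (0:ℝ) ≤ v^6 := pow_nonneg h0 6
  have hu7 : v^7 ≤ (1/8:ℝ)^7 := pow_le_pow_left₀ h0 h1 7
  have hl7 : (0:ℝ) ≤ v^7 := pow_nonneg h0 7
  have hu8 : v^8 ≤ (1/8:ℝ)^8 := pow_le_pow_left₀ h0 h1 8
  have hl8 : (0:ℝ) ≤ v^8 := pow_nonneg h0 8
  have hu9 : v^9 ≤ (1/8:ℝ)^9 := pow_le_pow_left₀ h0 h1 9
  have hl9 : (0:ℝ) ≤ v^9 := pow_nonneg h0 9
  have hu10 : v^10 ≤ (1/8:ℝ)^10 := pow_le_pow_left₀ h0 h1 10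
  have hl10 : (0:ℝ) ≤ v^10 := pow_nonneg h0 10
  have hu11 : v^11 ≤ (1/8:ℝ)^11 := pow_le_pow_left₀ h0 h1 11
  have hl11 : (0:ℝ) ≤ v^11 := pow_nonneg h0 11
  have hu12 : v^12 ≤ (1/8:ℝ)^12 := pow_le_pow_left₀ h0 h1 12
  have hl12 : (0:ℝ) ≤ v^12 := pow_nonneg h0 12
  have hu13 : v^13 ≤ (1/8:ℝ)^13 := pow_le_pow_left₀ h0 h1 13
  have hl13 : (0:ℝ) ≤ v^13 := pow_nonneg h0 13
  have hu14 : v^14 ≤ (1/8:ℝ)^14 := pow_le_pow_left₀ h0 h1 14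
  have hl14 : (0:ℝ) ≤ v^14 := pow_nonneg h0 14
  rw [abs_le]; constructor <;> linarith
private lemma pb2 : PB (fun v : ℝ => (1) + v * ((0) + v * ((-1 / 4) + v * ((0) + v * ((1 / 48) + v * ((0) + v * ((-1 / 1440) + v * ((0) + v * ((1 / 80640) + v * ((0) + v * ((-1 / 7257600) + v * ((0) + v * ((1 / 958003200) + v * ((0) + v * ((-1 / 174356582400) + v * ((0) + v * ((1 / 41845579776000)))))))))))))))))) (10039113389128554299234748427602068168179 / 10000000000000000000000000000000000000000) := by
  intro v h0 h1
  beta_reduce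
  have hu2 : v^2 ≤ (1/8:ℝ)^2 := pow_le_pow_left₀ h0 h1 2
  have hl2 : (0:ℝ) ≤ v^2 := pow_nonneg h0 2
  have hu3 : v^3 ≤ (1/8:ℝ)^3 := pow_le_pow_left₀ h0 h1 3
  have hl3 : (0:ℝ) ≤ v^3 := pow_nonneg h0 3
  have hu4 : v^4 ≤ (1/8:ℝ)^4 := pow_le_pow_left₀ h0 h1 4
  have hl4 : (0:ℝ) ≤ v^4 := pow_nonneg h0 4
  have hu5 : v^5 ≤ (1/8:ℝ)^5 := pow_le_pow_left₀ h0 h1 5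
  have hl5 : (0:ℝ) ≤ v^5 := pow_nonneg h0 5
  have hu6 : v^6 ≤ (1/8:ℝ)^6 := pow_le_pow_left₀ h0 h1 6
  have hl6 : (0:ℝ) ≤ v^6 := pow_nonneg h0 6
  have hu7 : v^7 ≤ (1/8:ℝ)^7 := pow_le_pow_left₀ h0 h1 7
  have hl7 : (0:ℝ) ≤ v^7 := pow_nonneg h0 7
  have hu8 : v^8 ≤ (1/8:ℝ)^8 := pow_le_pow_left₀ h0 h1 8
  have hl8 : (0:ℝ) ≤ v^8 := pow_nonneg h0 8
  have hu9 : v^9 ≤ (1/8:ℝ)^9 := pow_le_pow_left₀ h0 h1 9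
  have hl9 : (0:ℝ) ≤ v^9 := pow_nonneg h0 9
  have hu10 : v^10 ≤ (1/8:ℝ)^10 := pow_le_pow_left₀ h0 h1 10
  have hl10 : (0:ℝ) ≤ v^10 := pow_nonneg h0 10
  have hu11 : v^11 ≤ (1/8:ℝ)^11 := pow_le_pow_left₀ h0 h1 11
  have hl11 : (0:ℝ) ≤ v^11 := pow_nonneg h0 11
  have hu12 : v^12 ≤ (1/8:ℝ)^12 := pow_le_pow_left₀ h0 h1 12
  have hl12 : (0:ℝ) ≤ v^12 := pow_nonneg h0 12
  have hu13 : v^13 ≤ (1/8:ℝ)^13 := pow_le_pow_left₀ h0 h1 13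
  have hl13 : (0:ℝ) ≤ v^13 := pow_nonneg h0 13
  have hu14 : v^14 ≤ (1/8:ℝ)^14 := pow_le_pow_left₀ h0 h1 14
  have hl14 : (0:ℝ) ≤ v^14 := pow_nonneg h0 14
  have hu15 : v^15 ≤ (1/8:ℝ)^15 := pow_le_pow_left₀ h0 h1 15
  have hl15 : (0:ℝ) ≤ v^15 := pow_nonneg h0 15
  have hu16 : v^16 ≤ (1/8:ℝ)^16 := pow_le_pow_left₀ h0 h1 16
  have hl16 : (0:ℝ) ≤ v^16 := pow_nonneg h0 16
  rw [abs_le]; constructor <;> linarith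
private lemma pb3 : PB (fun v : ℝ => (-37931 / 658174059887984640) + v * ((0) + v * ((29773 / 89751008166543360000) + v * ((0) + v * ((-11897 / 8292993154588606464000) + v * ((0) + v * ((49219 / 10946750964056960532480000) + v * ((0) + v * ((-223 / 21893501928113921064960000) + v * ((0) + v * ((2027 / 119538520527502009014681600000) + v * ((0) + v * ((-1 / 47815408211000803605872640000) + v * ((0) + v * ((1 / 57378489853200964327047168000000)))))))))))))))) (576358353086261856232265919 / 10000000000000000000000000000000000000000) := by
  intro v h0 h1
  beta_reduce
  have hu2 : v^2 ≤ (1/8:ℝ)^2 := pow_le_pow_left₀ h0 h1 2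
  have hl2 : (0:ℝ) ≤ v^2 := pow_nonneg h0 2
  have hu3 : v^3 ≤ (1/8:ℝ)^3 := pow_le_pow_left₀ h0 h1 3
  have hl3 : (0:ℝ) ≤ v^3 := pow_nonneg h0 3
  have hu4 : v^4 ≤ (1/8:ℝ)^4 := pow_le_pow_left₀ h0 h1 4
  have hl4 : (0:ℝ) ≤ v^4 := pow_nonneg h0 4
  have hu5 : v^5 ≤ (1/8:ℝ)^5 := pow_le_pow_left₀ h0 h1 5
  have hl5 : (0:ℝ) ≤ v^5 := pow_nonneg h0 5
  have hu6 : v^6 ≤ (1/8:ℝ)^6 := pow_le_pow_left₀ h0 h1 6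
  have hl6 : (0:ℝ) ≤ v^6 := pow_nonneg h0 6
  have hu7 : v^7 ≤ (1/8:ℝ)^7 := pow_le_pow_left₀ h0 h1 7
  have hl7 : (0:ℝ) ≤ v^7 := pow_nonneg h0 7
  have hu8 : v^8 ≤ (1/8:ℝ)^8 := pow_le_pow_left₀ h0 h1 8
  have hl8 : (0:ℝ) ≤ v^8 := pow_nonneg h0 8
  have hu9 : v^9 ≤ (1/8:ℝ)^9 := pow_le_pow_left₀ h0 h1 9
  have hl9 : (0:ℝ) ≤ v^9 := pow_nonneg h0 9
  have hu10 : v^10 ≤ (1/8:ℝ)^10 := pow_le_pow_left₀ h0 h1 10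
  have hl10 : (0:ℝ) ≤ v^10 := pow_nonneg h0 10
  have hu11 : v^11 ≤ (1/8:ℝ)^11 := pow_le_pow_left₀ h0 h1 11
  have hl11 : (0:ℝ) ≤ v^11 := pow_nonneg h0 11
  have hu12 : v^12 ≤ (1/8:ℝ)^12 := pow_le_pow_left₀ h0 h1 12
  have hl12 : (0:ℝ) ≤ v^12 := pow_nonneg h0 12
  have hu13 : v^13 ≤ (1/8:ℝ)^13 := pow_le_pow_left₀ h0 h1 13
  have hl13 : (0:ℝ) ≤ v^13 := pow_nonneg h0 13
  have hu14 : v^14 ≤ (1/8:ℝ)^14 := pow_le_pow_left₀ h0 h1 14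
  have hl14 : (0:ℝ) ≤ v^14 := pow_nonneg h0 14
  rw [abs_le]; constructor <;> linarith
private lemma pb4 : PB (fun v : ℝ => (1) + v * ((0) + v * ((-3 / 8) + v * ((0) + v * ((7 / 128) + v * ((0) + v * ((-61 / 15360) + v * ((0) + v * ((547 / 3440640) + v * ((0) + v * ((-703 / 176947200) + v * ((0) + v * ((44287 / 653996851200) + v * ((0) + v * ((-398581 / 476109707673600) + v * ((0) + v * ((512461 / 65295045623808000)))))))))))))))))) (10058727415994233375899419721949336849651 / 10000000000000000000000000000000000000000) := by
  intro v h0 h1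
  beta_reduce
  have hu2 : v^2 ≤ (1/8:ℝ)^2 := pow_le_pow_left₀ h0 h1 2
  have hl2 : (0:ℝ) ≤ v^2 := pow_nonneg h0 2
  have hu3 : v^3 ≤ (1/8:ℝ)^3 := pow_le_pow_left₀ h0 h1 3
  have hl3 : (0:ℝ) ≤ v^3 := pow_nonneg h0 3
  have hu4 : v^4 ≤ (1/8:ℝ)^4 := pow_le_pow_left₀ h0 h1 4
  have hl4 : (0:ℝ) ≤ v^4 := pow_nonneg h0 4
  have hu5 : v^5 ≤ (1/8:ℝ)^5 := pow_le_pow_left₀ h0 h1 5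
  have hl5 : (0:ℝ) ≤ v^5 := pow_nonneg h0 5
  have hu6 : v^6 ≤ (1/8:ℝ)^6 := pow_le_pow_left₀ h0 h1 6
  have hl6 : (0:ℝ) ≤ v^6 := pow_nonneg h0 6
  have hu7 : v^7 ≤ (1/8:ℝ)^7 := pow_le_pow_left₀ h0 h1 7
  have hl7 : (0:ℝ) ≤ v^7 := pow_nonneg h0 7
  have hu8 : v^8 ≤ (1/8:ℝ)^8 := pow_le_pow_left₀ h0 h1 8
  have hl8 : (0:ℝ) ≤ v^8 := pow_nonneg h0 8
  have hu9 : v^9 ≤ (1/8:ℝ)^9 := pow_le_pow_left₀ h0 h1 9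
  have hl9 : (0:ℝ) ≤ v^9 := pow_nonneg h0 9
  have hu10 : v^10 ≤ (1/8:ℝ)^10 := pow_le_pow_left₀ h0 h1 10
  have hl10 : (0:ℝ) ≤ v^10 := pow_nonneg h0 10
  have hu11 : v^11 ≤ (1/8:ℝ)^11 := pow_le_pow_left₀ h0 h1 11
  have hl11 : (0:ℝ) ≤ v^11 := pow_nonneg h0 11
  have hu12 : v^12 ≤ (1/8:ℝ)^12 := pow_le_pow_left₀ h0 h1 12
  have hl12 : (0:ℝ) ≤ v^12 := pow_nonneg h0 12
  have hu13 : v^13 ≤ (1/8:ℝ)^13 := pow_le_pow_left₀ h0 h1 13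
  have hl13 : (0:ℝ) ≤ v^13 := pow_nonneg h0 13
  have hu14 : v^14 ≤ (1/8:ℝ)^14 := pow_le_pow_left₀ h0 h1 14
  have hl14 : (0:ℝ) ≤ v^14 := pow_nonneg h0 14
  have hu15 : v^15 ≤ (1/8:ℝ)^15 := pow_le_pow_left₀ h0 h1 15
  have hl15 : (0:ℝ) ≤ v^15 := pow_nonneg h0 15
  have hu16 : v^16 ≤ (1/8:ℝ)^16 := pow_le_pow_left₀ h0 h1 16
  have hl16 : (0:ℝ) ≤ v^16 := pow_nonneg h0 16
  rw [abs_le]; constructor <;> linarith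
private lemma pb5 : PB (fun v : ℝ => (-2775559 / 548478383239987200) + v * ((0) + v * ((60972811 / 1316348119775969280000) + v * ((0) + v * ((-15026303 / 55286621030590709760000) + v * ((0) + v * ((238917311 / 233530687233215158026240000) + v * ((0) + v * ((-12092747 / 4670613744664303160524800000) + v * ((0) + v * ((189148747 / 40802481673387352410344652800000) + v * ((0) + v * ((-249113 / 40802481673387352410344652800000) + v * ((0) + v * ((512461 / 89532302643318533288984838144000000)))))))))))))))) (25305974488940098782691292819 / 5000000000000000000000000000000000000000) := by
  intro v h0 h1
  beta_reduce
  have hu2 : v^2 ≤ (1/8:ℝ)^2 := pow_le_pow_left₀ h0 h1 2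
  have hl2 : (0:ℝ) ≤ v^2 := pow_nonneg h0 2
  have hu3 : v^3 ≤ (1/8:ℝ)^3 := pow_le_pow_left₀ h0 h1 3
  have hl3 : (0:ℝ) ≤ v^3 := pow_nonneg h0 3
  have hu4 : v^4 ≤ (1/8:ℝ)^4 := pow_le_pow_left₀ h0 h1 4
  have hl4 : (0:ℝ) ≤ v^4 := pow_nonneg h0 4
  have hu5 : v^5 ≤ (1/8:ℝ)^5 := pow_le_pow_left₀ h0 h1 5
  have hl5 : (0:ℝ) ≤ v^5 := pow_nonneg h0 5
  have hu6 : v^6 ≤ (1/8:ℝ)^6 := pow_le_pow_left₀ h0 h1 6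
  have hl6 : (0:ℝ) ≤ v^6 := pow_nonneg h0 6
  have hu7 : v^7 ≤ (1/8:ℝ)^7 := pow_le_pow_left₀ h0 h1 7
  have hl7 : (0:ℝ) ≤ v^7 := pow_nonneg h0 7
  have hu8 : v^8 ≤ (1/8:ℝ)^8 := pow_le_pow_left₀ h0 h1 8
  have hl8 : (0:ℝ) ≤ v^8 := pow_nonneg h0 8
  have hu9 : v^9 ≤ (1/8:ℝ)^9 := pow_le_pow_left₀ h0 h1 9
  have hl9 : (0:ℝ) ≤ v^9 := pow_nonneg h0 9
  have hu10 : v^10 ≤ (1/8:ℝ)^10 := pow_le_pow_left₀ h0 h1 10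
  have hl10 : (0:ℝ) ≤ v^10 := pow_nonneg h0 10
  have hu11 : v^11 ≤ (1/8:ℝ)^11 := pow_le_pow_left₀ h0 h1 11
  have hl11 : (0:ℝ) ≤ v^11 := pow_nonneg h0 11
  have hu12 : v^12 ≤ (1/8:ℝ)^12 := pow_le_pow_left₀ h0 h1 12
  have hl12 : (0:ℝ) ≤ v^12 := pow_nonneg h0 12
  have hu13 : v^13 ≤ (1/8:ℝ)^13 := pow_le_pow_left₀ h0 h1 13
  have hl13 : (0:ℝ) ≤ v^13 := pow_nonneg h0 13
  have hu14 : v^14 ≤ (1/8:ℝ)^14 := pow_le_pow_left₀ h0 h1 14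
  have hl14 : (0:ℝ) ≤ v^14 := pow_nonneg h0 14
  rw [abs_le]; constructor <;> linarith
private lemma pb6 : PB (fun v : ℝ => (1) + v * ((0) + v * ((-1 / 2) + v * ((0) + v * ((5 / 48) + v * ((0) + v * ((-17 / 1440) + v * ((0) + v * ((13 / 16128) + v * ((0) + v * ((-257 / 7257600) + v * ((0) + v * ((41 / 38320128) + v * ((0) + v * ((-4097 / 174356582400) + v * ((0) + v * ((3277 / 8369115955200)))))))))))))))))) (10078379763978020769433867696660956810199 / 10000000000000000000000000000000000000000) := by
  intro v h0 h1
  beta_reduce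
  have hu2 : v^2 ≤ (1/8:ℝ)^2 := pow_le_pow_left₀ h0 h1 2
  have hl2 : (0:ℝ) ≤ v^2 := pow_nonneg h0 2
  have hu3 : v^3 ≤ (1/8:ℝ)^3 := pow_le_pow_left₀ h0 h1 3
  have hl3 : (0:ℝ) ≤ v^3 := pow_nonneg h0 3
  have hu4 : v^4 ≤ (1/8:ℝ)^4 := pow_le_pow_left₀ h0 h1 4
  have hl4 : (0:ℝ) ≤ v^4 := pow_nonneg h0 4
  have hu5 : v^5 ≤ (1/8:ℝ)^5 := pow_le_pow_left₀ h0 h1 5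
  have hl5 : (0:ℝ) ≤ v^5 := pow_nonneg h0 5
  have hu6 : v^6 ≤ (1/8:ℝ)^6 := pow_le_pow_left₀ h0 h1 6
  have hl6 : (0:ℝ) ≤ v^6 := pow_nonneg h0 6
  have hu7 : v^7 ≤ (1/8:ℝ)^7 := pow_le_pow_left₀ h0 h1 7
  have hl7 : (0:ℝ) ≤ v^7 := pow_nonneg h0 7
  have hu8 : v^8 ≤ (1/8:ℝ)^8 := pow_le_pow_left₀ h0 h1 8
  have hl8 : (0:ℝ) ≤ v^8 := pow_nonneg h0 8
  have hu9 : v^9 ≤ (1/8:ℝ)^9 := pow_le_pow_left₀ h0 h1 9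
  have hl9 : (0:ℝ) ≤ v^9 := pow_nonneg h0 9
  have hu10 : v^10 ≤ (1/8:ℝ)^10 := pow_le_pow_left₀ h0 h1 10
  have hl10 : (0:ℝ) ≤ v^10 := pow_nonneg h0 10
  have hu11 : v^11 ≤ (1/8:ℝ)^11 := pow_le_pow_left₀ h0 h1 11
  have hl11 : (0:ℝ) ≤ v^11 := pow_nonneg h0 11
  have hu12 : v^12 ≤ (1/8:ℝ)^12 := pow_le_pow_left₀ h0 h1 12
  have hl12 : (0:ℝ) ≤ v^12 := pow_nonneg h0 12
  have hu13 : v^13 ≤ (1/8:ℝ)^13 := pow_le_pow_left₀ h0 h1 13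
  have hl13 : (0:ℝ) ≤ v^13 := pow_nonneg h0 13
  have hu14 : v^14 ≤ (1/8:ℝ)^14 := pow_le_pow_left₀ h0 h1 14
  have hl14 : (0:ℝ) ≤ v^14 := pow_nonneg h0 14
  have hu15 : v^15 ≤ (1/8:ℝ)^15 := pow_le_pow_left₀ h0 h1 15
  have hl15 : (0:ℝ) ≤ v^15 := pow_nonneg h0 15
  have hu16 : v^16 ≤ (1/8:ℝ)^16 := pow_le_pow_left₀ h0 h1 16
  have hl16 : (0:ℝ) ≤ v^16 := pow_nonneg h0 16
  rw [abs_le]; constructor <;> linarith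
private lemma pb7 : PB (fun v : ℝ => (-225440767 / 1645435149719961600) + v * ((0) + v * ((1622291851 / 987261089831976960000) + v * ((0) + v * ((-459449261 / 41464965772943032320000) + v * ((0) + v * ((490731779 / 10946750964056960532480000) + v * ((0) + v * ((-106867 / 904690162318757068800000) + v * ((0) + v * ((5183279 / 23907704105500401802936320000) + v * ((0) + v * ((-69637 / 239077041055004018029363200000) + v * ((0) + v * ((3277 / 11475697970640192865409433600000)))))))))))))))) (1370354940293307704715208169053 / 10000000000000000000000000000000000000000) := by
  intro v h0 h1
  beta_reduce
  have hu2 : v^2 ≤ (1/8:ℝ)^2 := pow_le_pow_left₀ h0 h1 2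
  have hl2 : (0:ℝ) ≤ v^2 := pow_nonneg h0 2
  have hu3 : v^3 ≤ (1/8:ℝ)^3 := pow_le_pow_left₀ h0 h1 3
  have hl3 : (0:ℝ) ≤ v^3 := pow_nonneg h0 3
  have hu4 : v^4 ≤ (1/8:ℝ)^4 := pow_le_pow_left₀ h0 h1 4
  have hl4 : (0:ℝ) ≤ v^4 := pow_nonneg h0 4
  have hu5 : v^5 ≤ (1/8:ℝ)^5 := pow_le_pow_left₀ h0 h1 5
  have hl5 : (0:ℝ) ≤ v^5 := pow_nonneg h0 5
  have hu6 : v^6 ≤ (1/8:ℝ)^6 := pow_le_pow_left₀ h0 h1 6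
  have hl6 : (0:ℝ) ≤ v^6 := pow_nonneg h0 6
  have hu7 : v^7 ≤ (1/8:ℝ)^7 := pow_le_pow_left₀ h0 h1 7
  have hl7 : (0:ℝ) ≤ v^7 := pow_nonneg h0 7
  have hu8 : v^8 ≤ (1/8:ℝ)^8 := pow_le_pow_left₀ h0 h1 8
  have hl8 : (0:ℝ) ≤ v^8 := pow_nonneg h0 8
  have hu9 : v^9 ≤ (1/8:ℝ)^9 := pow_le_pow_left₀ h0 h1 9
  have hl9 : (0:ℝ) ≤ v^9 := pow_nonneg h0 9
  have hu10 : v^10 ≤ (1/8:ℝ)^10 := pow_le_pow_left₀ h0 h1 10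
  have hl10 : (0:ℝ) ≤ v^10 := pow_nonneg h0 10
  have hu11 : v^11 ≤ (1/8:ℝ)^11 := pow_le_pow_left₀ h0 h1 11
  have hl11 : (0:ℝ) ≤ v^11 := pow_nonneg h0 11
  have hu12 : v^12 ≤ (1/8:ℝ)^12 := pow_le_pow_left₀ h0 h1 12
  have hl12 : (0:ℝ) ≤ v^12 := pow_nonneg h0 12
  have hu13 : v^13 ≤ (1/8:ℝ)^13 := pow_le_pow_left₀ h0 h1 13
  have hl13 : (0:ℝ) ≤ v^13 := pow_nonneg h0 13
  have hu14 : v^14 ≤ (1/8:ℝ)^14 := pow_le_pow_left₀ h0 h1 14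
  have hl14 : (0:ℝ) ≤ v^14 := pow_nonneg h0 14
  rw [abs_le]; constructor <;> linarith
private lemma pb8 : PB (fun v : ℝ => (1) + v * ((0) + v * ((-5 / 8) + v * ((0) + v * ((65 / 384) + v * ((0) + v * ((-241 / 9216) + v * ((0) + v * ((5293 / 2064384) + v * ((0) + v * ((-125761 / 743178240) + v * ((0) + v * ((3084973 / 392398110720) + v * ((0) + v * ((-76592881 / 285665824604160) + v * ((0) + v * ((146926081 / 21095322432307200)))))))))))))))))) (10098070507950217368493902416336632443749 / 10000000000000000000000000000000000000000) := by
  intro v h0 h1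
  beta_reduce
  have hu2 : v^2 ≤ (1/8:ℝ)^2 := pow_le_pow_left₀ h0 h1 2
  have hl2 : (0:ℝ) ≤ v^2 := pow_nonneg h0 2
  have hu3 : v^3 ≤ (1/8:ℝ)^3 := pow_le_pow_left₀ h0 h1 3
  have hl3 : (0:ℝ) ≤ v^3 := pow_nonneg h0 3
  have hu4 : v^4 ≤ (1/8:ℝ)^4 := pow_le_pow_left₀ h0 h1 4
  have hl4 : (0:ℝ) ≤ v^4 := pow_nonneg h0 4
  have hu5 : v^5 ≤ (1/8:ℝ)^5 := pow_le_pow_left₀ h0 h1 5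
  have hl5 : (0:ℝ) ≤ v^5 := pow_nonneg h0 5
  have hu6 : v^6 ≤ (1/8:ℝ)^6 := pow_le_pow_left₀ h0 h1 6
  have hl6 : (0:ℝ) ≤ v^6 := pow_nonneg h0 6
  have hu7 : v^7 ≤ (1/8:ℝ)^7 := pow_le_pow_left₀ h0 h1 7
  have hl7 : (0:ℝ) ≤ v^7 := pow_nonneg h0 7
  have hu8 : v^8 ≤ (1/8:ℝ)^8 := pow_le_pow_left₀ h0 h1 8
  have hl8 : (0:ℝ) ≤ v^8 := pow_nonneg h0 8
  have hu9 : v^9 ≤ (1/8:ℝ)^9 := pow_le_pow_left₀ h0 h1 9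
  have hl9 : (0:ℝ) ≤ v^9 := pow_nonneg h0 9
  have hu10 : v^10 ≤ (1/8:ℝ)^10 := pow_le_pow_left₀ h0 h1 10
  have hl10 : (0:ℝ) ≤ v^10 := pow_nonneg h0 10
  have hu11 : v^11 ≤ (1/8:ℝ)^11 := pow_le_pow_left₀ h0 h1 11
  have hl11 : (0:ℝ) ≤ v^11 := pow_nonneg h0 11
  have hu12 : v^12 ≤ (1/8:ℝ)^12 := pow_le_pow_left₀ h0 h1 12
  have hl12 : (0:ℝ) ≤ v^12 := pow_nonneg h0 12
  have hu13 : v^13 ≤ (1/8:ℝ)^13 := pow_le_pow_left₀ h0 h1 13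
  have hl13 : (0:ℝ) ≤ v^13 := pow_nonneg h0 13
  have hu14 : v^14 ≤ (1/8:ℝ)^14 := pow_le_pow_left₀ h0 h1 14
  have hl14 : (0:ℝ) ≤ v^14 := pow_nonneg h0 14
  have hu15 : v^15 ≤ (1/8:ℝ)^15 := pow_le_pow_left₀ h0 h1 15
  have hl15 : (0:ℝ) ≤ v^15 := pow_nonneg h0 15
  have hu16 : v^16 ≤ (1/8:ℝ)^16 := pow_le_pow_left₀ h0 h1 16
  have hl16 : (0:ℝ) ≤ v^16 := pow_nonneg h0 16
  rw [abs_le]; constructor <;> linarith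
private lemma pb9 : PB (fun v : ℝ => (-165159329 / 94024865698283520) + v * ((0) + v * ((19559449831 / 789808871865581568000) + v * ((0) + v * ((-23794507211 / 132687890473417703424000) + v * ((0) + v * ((306809099 / 408508490786965291008000) + v * ((0) + v * ((-869437309 / 431133576430551060971520000) + v * ((0) + v * ((91642716043 / 24481489004032411446206791680000) + v * ((0) + v * ((-141902281 / 27978844576037041652807761920000) + v * ((0) + v * ((146926081 / 28925820853995218447210486169600000)))))))))))))))) (2196170592682078743581539390253 / 1250000000000000000000000000000000000000) := by
  intro v h0 h1
  beta_reduce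
  have hu2 : v^2 ≤ (1/8:ℝ)^2 := pow_le_pow_left₀ h0 h1 2
  have hl2 : (0:ℝ) ≤ v^2 := pow_nonneg h0 2
  have hu3 : v^3 ≤ (1/8:ℝ)^3 := pow_le_pow_left₀ h0 h1 3
  have hl3 : (0:ℝ) ≤ v^3 := pow_nonneg h0 3
  have hu4 : v^4 ≤ (1/8:ℝ)^4 := pow_le_pow_left₀ h0 h1 4
  have hl4 : (0:ℝ) ≤ v^4 := pow_nonneg h0 4
  have hu5 : v^5 ≤ (1/8:ℝ)^5 := pow_le_pow_left₀ h0 h1 5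
  have hl5 : (0:ℝ) ≤ v^5 := pow_nonneg h0 5
  have hu6 : v^6 ≤ (1/8:ℝ)^6 := pow_le_pow_left₀ h0 h1 6
  have hl6 : (0:ℝ) ≤ v^6 := pow_nonneg h0 6
  have hu7 : v^7 ≤ (1/8:ℝ)^7 := pow_le_pow_left₀ h0 h1 7
  have hl7 : (0:ℝ) ≤ v^7 := pow_nonneg h0 7
  have hu8 : v^8 ≤ (1/8:ℝ)^8 := pow_le_pow_left₀ h0 h1 8
  have hl8 : (0:ℝ) ≤ v^8 := pow_nonneg h0 8
  have hu9 : v^9 ≤ (1/8:ℝ)^9 := pow_le_pow_left₀ h0 h1 9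
  have hl9 : (0:ℝ) ≤ v^9 := pow_nonneg h0 9
  have hu10 : v^10 ≤ (1/8:ℝ)^10 := pow_le_pow_left₀ h0 h1 10
  have hl10 : (0:ℝ) ≤ v^10 := pow_nonneg h0 10
  have hu11 : v^11 ≤ (1/8:ℝ)^11 := pow_le_pow_left₀ h0 h1 11
  have hl11 : (0:ℝ) ≤ v^11 := pow_nonneg h0 11
  have hu12 : v^12 ≤ (1/8:ℝ)^12 := pow_le_pow_left₀ h0 h1 12
  have hl12 : (0:ℝ) ≤ v^12 := pow_nonneg h0 12
  have hu13 : v^13 ≤ (1/8:ℝ)^13 := pow_le_pow_left₀ h0 h1 13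
  have hl13 : (0:ℝ) ≤ v^13 := pow_nonneg h0 13
  have hu14 : v^14 ≤ (1/8:ℝ)^14 := pow_le_pow_left₀ h0 h1 14
  have hl14 : (0:ℝ) ≤ v^14 := pow_nonneg h0 14
  rw [abs_le]; constructor <;> linarith
private lemma pb10 : PB (fun v : ℝ => (0) + v * ((0) + v * ((0) + v * ((0) + v * ((0) + v * ((-108))))))) (32958984375000000000000000000000000001 / 10000000000000000000000000000000000000000) := by
  intro v h0 h1
  beta_reduce
  have hu2 : v^2 ≤ (1/8:ℝ)^2 := pow_le_pow_left₀ h0 h1 2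
  have hl2 : (0:ℝ) ≤ v^2 := pow_nonneg h0 2
  have hu3 : v^3 ≤ (1/8:ℝ)^3 := pow_le_pow_left₀ h0 h1 3
  have hl3 : (0:ℝ) ≤ v^3 := pow_nonneg h0 3
  have hu4 : v^4 ≤ (1/8:ℝ)^4 := pow_le_pow_left₀ h0 h1 4
  have hl4 : (0:ℝ) ≤ v^4 := pow_nonneg h0 4
  have hu5 : v^5 ≤ (1/8:ℝ)^5 := pow_le_pow_left₀ h0 h1 5
  have hl5 : (0:ℝ) ≤ v^5 := pow_nonneg h0 5
  rw [abs_le]; constructor <;> linarith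
private lemma pb11 : PB (fun v : ℝ => (0) + v * ((76592881 / 2645053931520) + v * ((0) + v * ((-146926081 / 195327059558400))))) (9052741794093950247830307549393243 / 2500000000000000000000000000000000000000) := by
  intro v h0 h1
  beta_reduce
  have hu2 : v^2 ≤ (1/8:ℝ)^2 := pow_le_pow_left₀ h0 h1 2
  have hl2 : (0:ℝ) ≤ v^2 := pow_nonneg h0 2
  have hu3 : v^3 ≤ (1/8:ℝ)^3 := pow_le_pow_left₀ h0 h1 3
  have hl3 : (0:ℝ) ≤ v^3 := pow_nonneg h0 3
  rw [abs_le]; constructor <;> linarith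
private lemma pb12 : PB (fun v : ℝ => (0) + v * ((0) + v * ((0) + v * ((108) + v * ((0) + v * ((477))))))) (2254943847656250000000000000000000000001 / 10000000000000000000000000000000000000000) := by
  intro v h0 h1
  beta_reduce
  have hu2 : v^2 ≤ (1/8:ℝ)^2 := pow_le_pow_left₀ h0 h1 2
  have hl2 : (0:ℝ) ≤ v^2 := pow_nonneg h0 2
  have hu3 : v^3 ≤ (1/8:ℝ)^3 := pow_le_pow_left₀ h0 h1 3
  have hl3 : (0:ℝ) ≤ v^3 := pow_nonneg h0 3
  have hu4 : v^4 ≤ (1/8:ℝ)^4 := pow_le_pow_left₀ h0 h1 4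
  have hl4 : (0:ℝ) ≤ v^4 := pow_nonneg h0 4
  have hu5 : v^5 ≤ (1/8:ℝ)^5 := pow_le_pow_left₀ h0 h1 5
  have hl5 : (0:ℝ) ≤ v^5 := pow_nonneg h0 5
  rw [abs_le]; constructor <;> linarith
private lemma pb13 : PB (fun v : ℝ => (0) + v * ((-9783144739 / 76947023462400) + v * ((0) + v * ((7787082293 / 2343924714700800))))) (31798302973729521838024705700668603 / 2000000000000000000000000000000000000000) := by
  intro v h0 h1
  beta_reduce
  have hu2 : v^2 ≤ (1/8:ℝ)^2 := pow_le_pow_left₀ h0 h1 2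
  have hl2 : (0:ℝ) ≤ v^2 := pow_nonneg h0 2
  have hu3 : v^3 ≤ (1/8:ℝ)^3 := pow_le_pow_left₀ h0 h1 3
  have hl3 : (0:ℝ) ≤ v^3 := pow_nonneg h0 3
  rw [abs_le]; constructor <;> linarith
private lemma pb14 : PB (fun v : ℝ => (0) + v * ((486))) (607500000000000000000000000000000000000001 / 10000000000000000000000000000000000000000) := by
  intro v h0 h1
  beta_reduce
  rw [abs_le]; constructor <;> linarith
private lemma pb15 : PB (fun v : ℝ => (0)) (0) := by
  intro v h0 h1
  beta_reduce
  rw [abs_le]; constructor <;> linarith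
private lemma pb16 : PB (fun v : ℝ => (0) + v * ((-2484))) (3105000000000000000000000000000000000000001 / 10000000000000000000000000000000000000000) := by
  intro v h0 h1
  beta_reduce
  rw [abs_le]; constructor <;> linarith
private lemma pb17 : PB (fun v : ℝ => (0) + v * ((54))) (67500000000000000000000000000000000000001 / 10000000000000000000000000000000000000000) := by
  intro v h0 h1
  beta_reduce
  rw [abs_le]; constructor <;> linarith
private lemma pb18 : PB (fun v : ℝ => (0) + v * ((2178))) (2722500000000000000000000000000000000000001 / 10000000000000000000000000000000000000000) := by
  intro v h0 h1
  beta_reduce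
  rw [abs_le]; constructor <;> linarith
private lemma pb19 : PB (fun v : ℝ => (0) + v * ((92160) + v * ((0) + v * ((-30720) + v * ((0) + v * ((-90987349 / 17325) + v * ((0) + v * ((16301796103 / 23648625))))))))) (57900803003826357106015832299314442171585029 / 5000000000000000000000000000000000000000) := by
  intro v h0 h1
  beta_reduce
  have hu2 : v^2 ≤ (1/8:ℝ)^2 := pow_le_pow_left₀ h0 h1 2
  have hl2 : (0:ℝ) ≤ v^2 := pow_nonneg h0 2
  have hu3 : v^3 ≤ (1/8:ℝ)^3 := pow_le_pow_left₀ h0 h1 3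
  have hl3 : (0:ℝ) ≤ v^3 := pow_nonneg h0 3
  have hu4 : v^4 ≤ (1/8:ℝ)^4 := pow_le_pow_left₀ h0 h1 4
  have hl4 : (0:ℝ) ≤ v^4 := pow_nonneg h0 4
  have hu5 : v^5 ≤ (1/8:ℝ)^5 := pow_le_pow_left₀ h0 h1 5
  have hl5 : (0:ℝ) ≤ v^5 := pow_nonneg h0 5
  have hu6 : v^6 ≤ (1/8:ℝ)^6 := pow_le_pow_left₀ h0 h1 6
  have hl6 : (0:ℝ) ≤ v^6 := pow_nonneg h0 6
  have hu7 : v^7 ≤ (1/8:ℝ)^7 := pow_le_pow_left₀ h0 h1 7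
  have hl7 : (0:ℝ) ≤ v^7 := pow_nonneg h0 7
  rw [abs_le]; constructor <;> linarith
private lemma pb20 : PB (fun v : ℝ => (0) + v * ((490975669786270787 / 74237406169006080000) + v * ((0) + v * ((-95725332338837520779 / 432358653528291409920000) + v * ((0) + v * ((2395159014674862343 / 498875369455720857600000))))))) (8271311596848936206745074516263347581 / 10000000000000000000000000000000000000000) := by
  intro v h0 h1
  beta_reduce
  have hu2 : v^2 ≤ (1/8:ℝ)^2 := pow_le_pow_left₀ h0 h1 2
  have hl2 : (0:ℝ) ≤ v^2 := pow_nonneg h0 2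
  have hu3 : v^3 ≤ (1/8:ℝ)^3 := pow_le_pow_left₀ h0 h1 3
  have hl3 : (0:ℝ) ≤ v^3 := pow_nonneg h0 3
  have hu4 : v^4 ≤ (1/8:ℝ)^4 := pow_le_pow_left₀ h0 h1 4
  have hl4 : (0:ℝ) ≤ v^4 := pow_nonneg h0 4
  have hu5 : v^5 ≤ (1/8:ℝ)^5 := pow_le_pow_left₀ h0 h1 5
  have hl5 : (0:ℝ) ≤ v^5 := pow_nonneg h0 5
  rw [abs_le]; constructor <;> linarith
private lemma pb21 : PB (fun v : ℝ => (0) + v * ((-110592) + v * ((0) + v * ((49152))))) (139200000000000000000000000000000000000000001 / 10000000000000000000000000000000000000000) := by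
  intro v h0 h1
  beta_reduce
  have hu2 : v^2 ≤ (1/8:ℝ)^2 := pow_le_pow_left₀ h0 h1 2
  have hl2 : (0:ℝ) ≤ v^2 := pow_nonneg h0 2
  have hu3 : v^3 ≤ (1/8:ℝ)^3 := pow_le_pow_left₀ h0 h1 3
  have hl3 : (0:ℝ) ≤ v^3 := pow_nonneg h0 3
  rw [abs_le]; constructor <;> linarith
private lemma pb22 : PB (fun v : ℝ => (0) + v * ((146926081 / 429185433600))) (427921329271320358249921741985234049 / 10000000000000000000000000000000000000000) := by
  intro v h0 h1
  beta_reduce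
  rw [abs_le]; constructor <;> linarith
private lemma pb23 : PB (fun v : ℝ => (0) + v * ((0) + v * ((297)))) (46406250000000000000000000000000000000001 / 10000000000000000000000000000000000000000) := by
  intro v h0 h1
  beta_reduce
  have hu2 : v^2 ≤ (1/8:ℝ)^2 := pow_le_pow_left₀ h0 h1 2
  have hl2 : (0:ℝ) ≤ v^2 := pow_nonneg h0 2
  rw [abs_le]; constructor <;> linarith
private lemma pb24 : PB (fun v : ℝ => (1) + v * ((0) + v * ((-3 / 4) + v * ((0) + v * ((1 / 4) + v * ((0) + v * ((-47 / 960) + v * ((0) + v * ((169 / 26880) + v * ((0) + v * ((-2717 / 4838400) + v * ((0) + v * ((181 / 4989600) + v * ((0) + v * ((-203387 / 116237721600) + v * ((0) + v * ((904999 / 13948526592000)))))))))))))))))) (10117799722927402725612347634225373298687 / 10000000000000000000000000000000000000000) := by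
  intro v h0 h1
  beta_reduce
  have hu2 : v^2 ≤ (1/8:ℝ)^2 := pow_le_pow_left₀ h0 h1 2
  have hl2 : (0:ℝ) ≤ v^2 := pow_nonneg h0 2
  have hu3 : v^3 ≤ (1/8:ℝ)^3 := pow_le_pow_left₀ h0 h1 3
  have hl3 : (0:ℝ) ≤ v^3 := pow_nonneg h0 3
  have hu4 : v^4 ≤ (1/8:ℝ)^4 := pow_le_pow_left₀ h0 h1 4
  have hl4 : (0:ℝ) ≤ v^4 := pow_nonneg h0 4
  have hu5 : v^5 ≤ (1/8:ℝ)^5 := pow_le_pow_left₀ h0 h1 5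
  have hl5 : (0:ℝ) ≤ v^5 := pow_nonneg h0 5
  have hu6 : v^6 ≤ (1/8:ℝ)^6 := pow_le_pow_left₀ h0 h1 6
  have hl6 : (0:ℝ) ≤ v^6 := pow_nonneg h0 6
  have hu7 : v^7 ≤ (1/8:ℝ)^7 := pow_le_pow_left₀ h0 h1 7
  have hl7 : (0:ℝ) ≤ v^7 := pow_nonneg h0 7
  have hu8 : v^8 ≤ (1/8:ℝ)^8 := pow_le_pow_left₀ h0 h1 8
  have hl8 : (0:ℝ) ≤ v^8 := pow_nonneg h0 8
  have hu9 : v^9 ≤ (1/8:ℝ)^9 := pow_le_pow_left₀ h0 h1 9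
  have hl9 : (0:ℝ) ≤ v^9 := pow_nonneg h0 9
  have hu10 : v^10 ≤ (1/8:ℝ)^10 := pow_le_pow_left₀ h0 h1 10
  have hl10 : (0:ℝ) ≤ v^10 := pow_nonneg h0 10
  have hu11 : v^11 ≤ (1/8:ℝ)^11 := pow_le_pow_left₀ h0 h1 11
  have hl11 : (0:ℝ) ≤ v^11 := pow_nonneg h0 11
  have hu12 : v^12 ≤ (1/8:ℝ)^12 := pow_le_pow_left₀ h0 h1 12
  have hl12 : (0:ℝ) ≤ v^12 := pow_nonneg h0 12
  have hu13 : v^13 ≤ (1/8:ℝ)^13 := pow_le_pow_left₀ h0 h1 13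
  have hl13 : (0:ℝ) ≤ v^13 := pow_nonneg h0 13
  have hu14 : v^14 ≤ (1/8:ℝ)^14 := pow_le_pow_left₀ h0 h1 14
  have hl14 : (0:ℝ) ≤ v^14 := pow_nonneg h0 14
  have hu15 : v^15 ≤ (1/8:ℝ)^15 := pow_le_pow_left₀ h0 h1 15
  have hl15 : (0:ℝ) ≤ v^15 := pow_nonneg h0 15
  have hu16 : v^16 ≤ (1/8:ℝ)^16 := pow_le_pow_left₀ h0 h1 16
  have hl16 : (0:ℝ) ≤ v^16 := pow_nonneg h0 16
  rw [abs_le]; constructor <;> linarith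
private lemma pb25 : PB (fun v : ℝ => (904999 / 46964736000)) (24087194911518293214721786150357579 / 1250000000000000000000000000000000000000) := by
  intro v h0 h1
  beta_reduce
  rw [abs_le]; constructor <;> linarith
private lemma pb26 : PB (fun v : ℝ => (432) + v * ((0) + v * ((-243)))) (4357968750000000000000000000000000000000001 / 10000000000000000000000000000000000000000) := by
  intro v h0 h1
  beta_reduce
  have hu2 : v^2 ≤ (1/8:ℝ)^2 := pow_le_pow_left₀ h0 h1 2
  have hl2 : (0:ℝ) ≤ v^2 := pow_nonneg h0 2
  rw [abs_le]; constructor <;> linarith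
private lemma pb27 : PB (fun v : ℝ => (-904999 / 57401344000)) (157661639420847010132724418438704153 / 10000000000000000000000000000000000000000) := by
  intro v h0 h1
  beta_reduce
  rw [abs_le]; constructor <;> linarith
private lemma pb28 : PB (fun v : ℝ => (-6624) + v * ((0) + v * ((-2712)))) (66663750000000000000000000000000000000000001 / 10000000000000000000000000000000000000000) := by
  intro v h0 h1
  beta_reduce
  have hu2 : v^2 ≤ (1/8:ℝ)^2 := pow_le_pow_left₀ h0 h1 2
  have hl2 : (0:ℝ) ≤ v^2 := pow_nonneg h0 2
  rw [abs_le]; constructor <;> linarith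
private lemma pb29 : PB (fun v : ℝ => (-102264887 / 581188608000)) (879790876768183315802363421411040459 / 5000000000000000000000000000000000000000) := by
  intro v h0 h1
  beta_reduce
  rw [abs_le]; constructor <;> linarith
private lemma pb30 : PB (fun v : ℝ => (30096) + v * ((0) + v * ((-33798)))) (306240937500000000000000000000000000000000001 / 10000000000000000000000000000000000000000) := by
  intro v h0 h1
  beta_reduce
  have hu2 : v^2 ≤ (1/8:ℝ)^2 := pow_le_pow_left₀ h0 h1 2
  have hl2 : (0:ℝ) ≤ v^2 := pow_nonneg h0 2
  rw [abs_le]; constructor <;> linarith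
private lemma pb31 : PB (fun v : ℝ => (-5097859367 / 2324754432000)) (21414641561960629052797951607475417 / 9765625000000000000000000000000000000) := by
  intro v h0 h1
  beta_reduce
  rw [abs_le]; constructor <;> linarith
private lemma pb32 : PB (fun v : ℝ => (-144) + v * ((0) + v * ((-366)))) (1497187500000000000000000000000000000000001 / 10000000000000000000000000000000000000000) := by
  intro v h0 h1
  beta_reduce
  have hu2 : v^2 ≤ (1/8:ℝ)^2 := pow_le_pow_left₀ h0 h1 2
  have hl2 : (0:ℝ) ≤ v^2 := pow_nonneg h0 2
  rw [abs_le]; constructor <;> linarith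
private lemma pb33 : PB (fun v : ℝ => (-61 / 6974263296000)) (2733263599459035966972474909 / 312500000000000000000000000000000000000) := by
  intro v h0 h1
  beta_reduce
  rw [abs_le]; constructor <;> linarith
private lemma pb34 : PB (fun v : ℝ => (5520) + v * ((0) + v * ((-11270)))) (56960937500000000000000000000000000000000001 / 10000000000000000000000000000000000000000) := by
  intro v h0 h1
  beta_reduce
  have hu2 : v^2 ≤ (1/8:ℝ)^2 := pow_le_pow_left₀ h0 h1 2
  have hl2 : (0:ℝ) ≤ v^2 := pow_nonneg h0 2
  rw [abs_le]; constructor <;> linarith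
private lemma pb35 : PB (fun v : ℝ => (-75371 / 17079828480)) (44128663287372778113518854259595001 / 10000000000000000000000000000000000000000) := by
  intro v h0 h1
  beta_reduce
  rw [abs_le]; constructor <;> linarith
private lemma pb36 : PB (fun v : ℝ => (-49152) + v * ((0) + v * ((106496)))) (508160000000000000000000000000000000000000001 / 10000000000000000000000000000000000000000) := by
  intro v h0 h1
  beta_reduce
  have hu2 : v^2 ≤ (1/8:ℝ)^2 := pow_le_pow_left₀ h0 h1 2
  have hl2 : (0:ℝ) ≤ v^2 := pow_nonneg h0 2
  rw [abs_le]; constructor <;> linarith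
private lemma pb37 : PB (fun v : ℝ => (904999 / 130977000)) (8637003061606236209410812585415760019 / 1250000000000000000000000000000000000000) := by
  intro v h0 h1
  beta_reduce
  rw [abs_le]; constructor <;> linarith
private lemma pb38 : PB (fun v : ℝ => (0) + v * ((-16254))) (20317500000000000000000000000000000000000001 / 10000000000000000000000000000000000000000) := by
  intro v h0 h1
  beta_reduce
  rw [abs_le]; constructor <;> linarith
private lemma pb39 : PB (fun v : ℝ => (0) + v * ((1 / 2) + v * ((0) + v * ((-1 / 48) + v * ((0) + v * ((1 / 3840) + v * ((0) + v * ((-1 / 645120) + v * ((0) + v * ((1 / 185794560) + v * ((0) + v * ((-1 / 81749606400) + v * ((0) + v * ((1 / 51011754393600) + v * ((0) + v * ((-1 / 42849873690624000) + v * ((0) + v * ((1 / 46620662575398912000))))))))))))))))))) (3908793628261988857614992813143268393 / 62500000000000000000000000000000000000) := by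
  intro v h0 h1
  beta_reduce
  have hu2 : v^2 ≤ (1/8:ℝ)^2 := pow_le_pow_left₀ h0 h1 2
  have hl2 : (0:ℝ) ≤ v^2 := pow_nonneg h0 2
  have hu3 : v^3 ≤ (1/8:ℝ)^3 := pow_le_pow_left₀ h0 h1 3
  have hl3 : (0:ℝ) ≤ v^3 := pow_nonneg h0 3
  have hu4 : v^4 ≤ (1/8:ℝ)^4 := pow_le_pow_left₀ h0 h1 4
  have hl4 : (0:ℝ) ≤ v^4 := pow_nonneg h0 4
  have hu5 : v^5 ≤ (1/8:ℝ)^5 := pow_le_pow_left₀ h0 h1 5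
  have hl5 : (0:ℝ) ≤ v^5 := pow_nonneg h0 5
  have hu6 : v^6 ≤ (1/8:ℝ)^6 := pow_le_pow_left₀ h0 h1 6
  have hl6 : (0:ℝ) ≤ v^6 := pow_nonneg h0 6
  have hu7 : v^7 ≤ (1/8:ℝ)^7 := pow_le_pow_left₀ h0 h1 7
  have hl7 : (0:ℝ) ≤ v^7 := pow_nonneg h0 7
  have hu8 : v^8 ≤ (1/8:ℝ)^8 := pow_le_pow_left₀ h0 h1 8
  have hl8 : (0:ℝ) ≤ v^8 := pow_nonneg h0 8
  have hu9 : v^9 ≤ (1/8:ℝ)^9 := pow_le_pow_left₀ h0 h1 9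
  have hl9 : (0:ℝ) ≤ v^9 := pow_nonneg h0 9
  have hu10 : v^10 ≤ (1/8:ℝ)^10 := pow_le_pow_left₀ h0 h1 10
  have hl10 : (0:ℝ) ≤ v^10 := pow_nonneg h0 10
  have hu11 : v^11 ≤ (1/8:ℝ)^11 := pow_le_pow_left₀ h0 h1 11
  have hl11 : (0:ℝ) ≤ v^11 := pow_nonneg h0 11
  have hu12 : v^12 ≤ (1/8:ℝ)^12 := pow_le_pow_left₀ h0 h1 12
  have hl12 : (0:ℝ) ≤ v^12 := pow_nonneg h0 12
  have hu13 : v^13 ≤ (1/8:ℝ)^13 := pow_le_pow_left₀ h0 h1 13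
  have hl13 : (0:ℝ) ≤ v^13 := pow_nonneg h0 13
  have hu14 : v^14 ≤ (1/8:ℝ)^14 := pow_le_pow_left₀ h0 h1 14
  have hl14 : (0:ℝ) ≤ v^14 := pow_nonneg h0 14
  have hu15 : v^15 ≤ (1/8:ℝ)^15 := pow_le_pow_left₀ h0 h1 15
  have hl15 : (0:ℝ) ≤ v^15 := pow_nonneg h0 15
  have hu16 : v^16 ≤ (1/8:ℝ)^16 := pow_le_pow_left₀ h0 h1 16
  have hl16 : (0:ℝ) ≤ v^16 := pow_nonneg h0 16
  have hu17 : v^17 ≤ (1/8:ℝ)^17 := pow_le_pow_left₀ h0 h1 17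
  have hl17 : (0:ℝ) ≤ v^17 := pow_nonneg h0 17
  rw [abs_le]; constructor <;> linarith
private lemma pb40 : PB (fun v : ℝ => (0) + v * ((-110592) + v * ((0) + v * ((118272) + v * ((0) + v * ((-49440) + v * ((0) + v * ((11212) + v * ((0) + v * ((-263573 / 168) + v * ((0) + v * ((972641 / 6720) + v * ((0) + v * ((-97790663 / 10644480) + v * ((0) + v * ((1934555461 / 4649508864) + v * ((0) + v * ((-103769004839 / 7439214182400))))))))))))))))))) (140565141470667025769435097881000299355832997 / 10000000000000000000000000000000000000000) := by
  intro v h0 h1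
  beta_reduce
  have hu2 : v^2 ≤ (1/8:ℝ)^2 := pow_le_pow_left₀ h0 h1 2
  have hl2 : (0:ℝ) ≤ v^2 := pow_nonneg h0 2
  have hu3 : v^3 ≤ (1/8:ℝ)^3 := pow_le_pow_left₀ h0 h1 3
  have hl3 : (0:ℝ) ≤ v^3 := pow_nonneg h0 3
  have hu4 : v^4 ≤ (1/8:ℝ)^4 := pow_le_pow_left₀ h0 h1 4
  have hl4 : (0:ℝ) ≤ v^4 := pow_nonneg h0 4
  have hu5 : v^5 ≤ (1/8:ℝ)^5 := pow_le_pow_left₀ h0 h1 5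
  have hl5 : (0:ℝ) ≤ v^5 := pow_nonneg h0 5
  have hu6 : v^6 ≤ (1/8:ℝ)^6 := pow_le_pow_left₀ h0 h1 6
  have hl6 : (0:ℝ) ≤ v^6 := pow_nonneg h0 6
  have hu7 : v^7 ≤ (1/8:ℝ)^7 := pow_le_pow_left₀ h0 h1 7
  have hl7 : (0:ℝ) ≤ v^7 := pow_nonneg h0 7
  have hu8 : v^8 ≤ (1/8:ℝ)^8 := pow_le_pow_left₀ h0 h1 8
  have hl8 : (0:ℝ) ≤ v^8 := pow_nonneg h0 8
  have hu9 : v^9 ≤ (1/8:ℝ)^9 := pow_le_pow_left₀ h0 h1 9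
  have hl9 : (0:ℝ) ≤ v^9 := pow_nonneg h0 9
  have hu10 : v^10 ≤ (1/8:ℝ)^10 := pow_le_pow_left₀ h0 h1 10
  have hl10 : (0:ℝ) ≤ v^10 := pow_nonneg h0 10
  have hu11 : v^11 ≤ (1/8:ℝ)^11 := pow_le_pow_left₀ h0 h1 11
  have hl11 : (0:ℝ) ≤ v^11 := pow_nonneg h0 11
  have hu12 : v^12 ≤ (1/8:ℝ)^12 := pow_le_pow_left₀ h0 h1 12
  have hl12 : (0:ℝ) ≤ v^12 := pow_nonneg h0 12
  have hu13 : v^13 ≤ (1/8:ℝ)^13 := pow_le_pow_left₀ h0 h1 13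
  have hl13 : (0:ℝ) ≤ v^13 := pow_nonneg h0 13
  have hu14 : v^14 ≤ (1/8:ℝ)^14 := pow_le_pow_left₀ h0 h1 14
  have hl14 : (0:ℝ) ≤ v^14 := pow_nonneg h0 14
  have hu15 : v^15 ≤ (1/8:ℝ)^15 := pow_le_pow_left₀ h0 h1 15
  have hl15 : (0:ℝ) ≤ v^15 := pow_nonneg h0 15
  have hu16 : v^16 ≤ (1/8:ℝ)^16 := pow_le_pow_left₀ h0 h1 16
  have hl16 : (0:ℝ) ≤ v^16 := pow_nonneg h0 16
  have hu17 : v^17 ≤ (1/8:ℝ)^17 := pow_le_pow_left₀ h0 h1 17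
  have hl17 : (0:ℝ) ≤ v^17 := pow_nonneg h0 17
  rw [abs_le]; constructor <;> linarith
private lemma pb41 : PB (fun v : ℝ => (-2115150337 / 115783668000) + v * ((0) + v * ((15102858811 / 36480761856000) + v * ((0) + v * ((-66218504378687 / 15297404907552768000) + v * ((0) + v * ((9683111833849 / 403851489559393075200) + v * ((0) + v * ((-51919329286079 / 646162383295028920320000) + v * ((0) + v * ((47734982293 / 266670189931281776640000) + v * ((0) + v * ((-19193864646001 / 67738494965584471774986240000) + v * ((0) + v * ((453109242197 / 1354769899311689435499724800000) + v * ((0) + v * ((-103769004839 / 346821094223792495487929548800000)))))))))))))))))) (182745931508923002004777625119590119711 / 10000000000000000000000000000000000000000) := by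
  intro v h0 h1
  beta_reduce
  have hu2 : v^2 ≤ (1/8:ℝ)^2 := pow_le_pow_left₀ h0 h1 2
  have hl2 : (0:ℝ) ≤ v^2 := pow_nonneg h0 2
  have hu3 : v^3 ≤ (1/8:ℝ)^3 := pow_le_pow_left₀ h0 h1 3
  have hl3 : (0:ℝ) ≤ v^3 := pow_nonneg h0 3
  have hu4 : v^4 ≤ (1/8:ℝ)^4 := pow_le_pow_left₀ h0 h1 4
  have hl4 : (0:ℝ) ≤ v^4 := pow_nonneg h0 4
  have hu5 : v^5 ≤ (1/8:ℝ)^5 := pow_le_pow_left₀ h0 h1 5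
  have hl5 : (0:ℝ) ≤ v^5 := pow_nonneg h0 5
  have hu6 : v^6 ≤ (1/8:ℝ)^6 := pow_le_pow_left₀ h0 h1 6
  have hl6 : (0:ℝ) ≤ v^6 := pow_nonneg h0 6
  have hu7 : v^7 ≤ (1/8:ℝ)^7 := pow_le_pow_left₀ h0 h1 7
  have hl7 : (0:ℝ) ≤ v^7 := pow_nonneg h0 7
  have hu8 : v^8 ≤ (1/8:ℝ)^8 := pow_le_pow_left₀ h0 h1 8
  have hl8 : (0:ℝ) ≤ v^8 := pow_nonneg h0 8
  have hu9 : v^9 ≤ (1/8:ℝ)^9 := pow_le_pow_left₀ h0 h1 9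
  have hl9 : (0:ℝ) ≤ v^9 := pow_nonneg h0 9
  have hu10 : v^10 ≤ (1/8:ℝ)^10 := pow_le_pow_left₀ h0 h1 10
  have hl10 : (0:ℝ) ≤ v^10 := pow_nonneg h0 10
  have hu11 : v^11 ≤ (1/8:ℝ)^11 := pow_le_pow_left₀ h0 h1 11
  have hl11 : (0:ℝ) ≤ v^11 := pow_nonneg h0 11
  have hu12 : v^12 ≤ (1/8:ℝ)^12 := pow_le_pow_left₀ h0 h1 12
  have hl12 : (0:ℝ) ≤ v^12 := pow_nonneg h0 12
  have hu13 : v^13 ≤ (1/8:ℝ)^13 := pow_le_pow_left₀ h0 h1 13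
  have hl13 : (0:ℝ) ≤ v^13 := pow_nonneg h0 13
  have hu14 : v^14 ≤ (1/8:ℝ)^14 := pow_le_pow_left₀ h0 h1 14
  have hl14 : (0:ℝ) ≤ v^14 := pow_nonneg h0 14
  have hu15 : v^15 ≤ (1/8:ℝ)^15 := pow_le_pow_left₀ h0 h1 15
  have hl15 : (0:ℝ) ≤ v^15 := pow_nonneg h0 15
  have hu16 : v^16 ≤ (1/8:ℝ)^16 := pow_le_pow_left₀ h0 h1 16
  have hl16 : (0:ℝ) ≤ v^16 := pow_nonneg h0 16
  rw [abs_le]; constructor <;> linarith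
private lemma pb42 : PB (fun v : ℝ => (-43776) + v * ((0) + v * ((73695) + v * ((0) + v * ((-48843 / 2) + v * ((0) + v * ((11419 / 20) + v * ((0) + v * ((3230203 / 2520) + v * ((0) + v * ((-20757143 / 60480) + v * ((0) + v * ((935462383 / 19958400) + v * ((0) + v * ((-89315844271 / 21794572800) + v * ((0) + v * ((992072443 / 3962649600)))))))))))))))))) (449334489099979788731249734904041487783053033 / 10000000000000000000000000000000000000000) := by
  intro v h0 h1
  beta_reduce
  have hu2 : v^2 ≤ (1/8:ℝ)^2 := pow_le_pow_left₀ h0 h1 2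
  have hl2 : (0:ℝ) ≤ v^2 := pow_nonneg h0 2
  have hu3 : v^3 ≤ (1/8:ℝ)^3 := pow_le_pow_left₀ h0 h1 3
  have hl3 : (0:ℝ) ≤ v^3 := pow_nonneg h0 3
  have hu4 : v^4 ≤ (1/8:ℝ)^4 := pow_le_pow_left₀ h0 h1 4
  have hl4 : (0:ℝ) ≤ v^4 := pow_nonneg h0 4
  have hu5 : v^5 ≤ (1/8:ℝ)^5 := pow_le_pow_left₀ h0 h1 5
  have hl5 : (0:ℝ) ≤ v^5 := pow_nonneg h0 5
  have hu6 : v^6 ≤ (1/8:ℝ)^6 := pow_le_pow_left₀ h0 h1 6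
  have hl6 : (0:ℝ) ≤ v^6 := pow_nonneg h0 6
  have hu7 : v^7 ≤ (1/8:ℝ)^7 := pow_le_pow_left₀ h0 h1 7
  have hl7 : (0:ℝ) ≤ v^7 := pow_nonneg h0 7
  have hu8 : v^8 ≤ (1/8:ℝ)^8 := pow_le_pow_left₀ h0 h1 8
  have hl8 : (0:ℝ) ≤ v^8 := pow_nonneg h0 8
  have hu9 : v^9 ≤ (1/8:ℝ)^9 := pow_le_pow_left₀ h0 h1 9
  have hl9 : (0:ℝ) ≤ v^9 := pow_nonneg h0 9
  have hu10 : v^10 ≤ (1/8:ℝ)^10 := pow_le_pow_left₀ h0 h1 10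
  have hl10 : (0:ℝ) ≤ v^10 := pow_nonneg h0 10
  have hu11 : v^11 ≤ (1/8:ℝ)^11 := pow_le_pow_left₀ h0 h1 11
  have hl11 : (0:ℝ) ≤ v^11 := pow_nonneg h0 11
  have hu12 : v^12 ≤ (1/8:ℝ)^12 := pow_le_pow_left₀ h0 h1 12
  have hl12 : (0:ℝ) ≤ v^12 := pow_nonneg h0 12
  have hu13 : v^13 ≤ (1/8:ℝ)^13 := pow_le_pow_left₀ h0 h1 13
  have hl13 : (0:ℝ) ≤ v^13 := pow_nonneg h0 13
  have hu14 : v^14 ≤ (1/8:ℝ)^14 := pow_le_pow_left₀ h0 h1 14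
  have hl14 : (0:ℝ) ≤ v^14 := pow_nonneg h0 14
  have hu15 : v^15 ≤ (1/8:ℝ)^15 := pow_le_pow_left₀ h0 h1 15
  have hl15 : (0:ℝ) ≤ v^15 := pow_nonneg h0 15
  have hu16 : v^16 ≤ (1/8:ℝ)^16 := pow_le_pow_left₀ h0 h1 16
  have hl16 : (0:ℝ) ≤ v^16 := pow_nonneg h0 16
  rw [abs_le]; constructor <;> linarith
private lemma pb43 : PB (fun v : ℝ => (0) + v * ((-52304032573413011 / 8227175748599808000) + v * ((0) + v * ((2109008008929580567 / 29371017422501314560000) + v * ((0) + v * ((-796162873319888443 / 1938487149885086760960000) + v * ((0) + v * ((5422118796213347 / 3876974299770173521920000) + v * ((0) + v * ((-19014610183483991 / 6048079907641470694195200000) + v * ((0) + v * ((6798006447293 / 1358392278721613738803200000) + v * ((0) + v * ((-2008625781061 / 338692474827922358874931200000) + v * ((0) + v * ((992072443 / 184741349906139468477235200000))))))))))))))))) (7948241535011924475227724766941404879 / 10000000000000000000000000000000000000000) := by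
  intro v h0 h1
  beta_reduce
  have hu2 : v^2 ≤ (1/8:ℝ)^2 := pow_le_pow_left₀ h0 h1 2
  have hl2 : (0:ℝ) ≤ v^2 := pow_nonneg h0 2
  have hu3 : v^3 ≤ (1/8:ℝ)^3 := pow_le_pow_left₀ h0 h1 3
  have hl3 : (0:ℝ) ≤ v^3 := pow_nonneg h0 3
  have hu4 : v^4 ≤ (1/8:ℝ)^4 := pow_le_pow_left₀ h0 h1 4
  have hl4 : (0:ℝ) ≤ v^4 := pow_nonneg h0 4
  have hu5 : v^5 ≤ (1/8:ℝ)^5 := pow_le_pow_left₀ h0 h1 5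
  have hl5 : (0:ℝ) ≤ v^5 := pow_nonneg h0 5
  have hu6 : v^6 ≤ (1/8:ℝ)^6 := pow_le_pow_left₀ h0 h1 6
  have hl6 : (0:ℝ) ≤ v^6 := pow_nonneg h0 6
  have hu7 : v^7 ≤ (1/8:ℝ)^7 := pow_le_pow_left₀ h0 h1 7
  have hl7 : (0:ℝ) ≤ v^7 := pow_nonneg h0 7
  have hu8 : v^8 ≤ (1/8:ℝ)^8 := pow_le_pow_left₀ h0 h1 8
  have hl8 : (0:ℝ) ≤ v^8 := pow_nonneg h0 8
  have hu9 : v^9 ≤ (1/8:ℝ)^9 := pow_le_pow_left₀ h0 h1 9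
  have hl9 : (0:ℝ) ≤ v^9 := pow_nonneg h0 9
  have hu10 : v^10 ≤ (1/8:ℝ)^10 := pow_le_pow_left₀ h0 h1 10
  have hl10 : (0:ℝ) ≤ v^10 := pow_nonneg h0 10
  have hu11 : v^11 ≤ (1/8:ℝ)^11 := pow_le_pow_left₀ h0 h1 11
  have hl11 : (0:ℝ) ≤ v^11 := pow_nonneg h0 11
  have hu12 : v^12 ≤ (1/8:ℝ)^12 := pow_le_pow_left₀ h0 h1 12
  have hl12 : (0:ℝ) ≤ v^12 := pow_nonneg h0 12
  have hu13 : v^13 ≤ (1/8:ℝ)^13 := pow_le_pow_left₀ h0 h1 13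
  have hl13 : (0:ℝ) ≤ v^13 := pow_nonneg h0 13
  have hu14 : v^14 ≤ (1/8:ℝ)^14 := pow_le_pow_left₀ h0 h1 14
  have hl14 : (0:ℝ) ≤ v^14 := pow_nonneg h0 14
  have hu15 : v^15 ≤ (1/8:ℝ)^15 := pow_le_pow_left₀ h0 h1 15
  have hl15 : (0:ℝ) ≤ v^15 := pow_nonneg h0 15
  rw [abs_le]; constructor <;> linarith
private lemma pb44 : PB (fun v : ℝ => (0) + v * ((72504) + v * ((0) + v * ((-51384) + v * ((0) + v * ((4410249911 / 277200) + v * ((0) + v * ((-4288429683533 / 1513512000) + v * ((0) + v * ((201190573933 / 587059200) + v * ((0) + v * ((-12739981469 / 331161600) + v * ((0) + v * ((596973550813579 / 111588212736000) + v * ((0) + v * ((-6814106957014699 / 9373409869824000) + v * ((0) + v * ((249848324031811551901 / 3365429079661608960000))))))))))))))))))) (9163846263080369643241652214571068830027371 / 1000000000000000000000000000000000000000) := by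
  intro v h0 h1
  beta_reduce
  have hu2 : v^2 ≤ (1/8:ℝ)^2 := pow_le_pow_left₀ h0 h1 2
  have hl2 : (0:ℝ) ≤ v^2 := pow_nonneg h0 2
  have hu3 : v^3 ≤ (1/8:ℝ)^3 := pow_le_pow_left₀ h0 h1 3
  have hl3 : (0:ℝ) ≤ v^3 := pow_nonneg h0 3
  have hu4 : v^4 ≤ (1/8:ℝ)^4 := pow_le_pow_left₀ h0 h1 4
  have hl4 : (0:ℝ) ≤ v^4 := pow_nonneg h0 4
  have hu5 : v^5 ≤ (1/8:ℝ)^5 := pow_le_pow_left₀ h0 h1 5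
  have hl5 : (0:ℝ) ≤ v^5 := pow_nonneg h0 5
  have hu6 : v^6 ≤ (1/8:ℝ)^6 := pow_le_pow_left₀ h0 h1 6
  have hl6 : (0:ℝ) ≤ v^6 := pow_nonneg h0 6
  have hu7 : v^7 ≤ (1/8:ℝ)^7 := pow_le_pow_left₀ h0 h1 7
  have hl7 : (0:ℝ) ≤ v^7 := pow_nonneg h0 7
  have hu8 : v^8 ≤ (1/8:ℝ)^8 := pow_le_pow_left₀ h0 h1 8
  have hl8 : (0:ℝ) ≤ v^8 := pow_nonneg h0 8
  have hu9 : v^9 ≤ (1/8:ℝ)^9 := pow_le_pow_left₀ h0 h1 9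
  have hl9 : (0:ℝ) ≤ v^9 := pow_nonneg h0 9
  have hu10 : v^10 ≤ (1/8:ℝ)^10 := pow_le_pow_left₀ h0 h1 10
  have hl10 : (0:ℝ) ≤ v^10 := pow_nonneg h0 10
  have hu11 : v^11 ≤ (1/8:ℝ)^11 := pow_le_pow_left₀ h0 h1 11
  have hl11 : (0:ℝ) ≤ v^11 := pow_nonneg h0 11
  have hu12 : v^12 ≤ (1/8:ℝ)^12 := pow_le_pow_left₀ h0 h1 12
  have hl12 : (0:ℝ) ≤ v^12 := pow_nonneg h0 12
  have hu13 : v^13 ≤ (1/8:ℝ)^13 := pow_le_pow_left₀ h0 h1 13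
  have hl13 : (0:ℝ) ≤ v^13 := pow_nonneg h0 13
  have hu14 : v^14 ≤ (1/8:ℝ)^14 := pow_le_pow_left₀ h0 h1 14
  have hl14 : (0:ℝ) ≤ v^14 := pow_nonneg h0 14
  have hu15 : v^15 ≤ (1/8:ℝ)^15 := pow_le_pow_left₀ h0 h1 15
  have hl15 : (0:ℝ) ≤ v^15 := pow_nonneg h0 15
  have hu16 : v^16 ≤ (1/8:ℝ)^16 := pow_le_pow_left₀ h0 h1 16
  have hl16 : (0:ℝ) ≤ v^16 := pow_nonneg h0 16
  have hu17 : v^17 ≤ (1/8:ℝ)^17 := pow_le_pow_left₀ h0 h1 17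
  have hl17 : (0:ℝ) ≤ v^17 := pow_nonneg h0 17
  rw [abs_le]; constructor <;> linarith
private lemma pb45 : PB (fun v : ℝ => (18390841588935899 / 342349149542400000) + v * ((0) + v * ((-18317245668137659100867 / 10500138728544219955200000) + v * ((0) + v * ((30119785922831457446213 / 1470019421996190793728000000) + v * ((0) + v * ((-50404960823486308739173 / 423365593534902948593664000000) + v * ((0) + v * ((1660586047433394600413 / 4064309697935068306499174400000) + v * ((0) + v * ((-219963148000809052591 / 238439502278857340647951564800000) + v * ((0) + v * ((221182997141038347433 / 150216886435680124608209485824000000) + v * ((0) + v * ((-36013854189660914653 / 20601172996893274231983015198720000000) + v * ((0) + v * ((249848324031811551901 / 156898533544339176550782643753451520000000)))))))))))))))))) (268734052496488781119401813934466453937 / 5000000000000000000000000000000000000000) := by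
  intro v h0 h1
  beta_reduce
  have hu2 : v^2 ≤ (1/8:ℝ)^2 := pow_le_pow_left₀ h0 h1 2
  have hl2 : (0:ℝ) ≤ v^2 := pow_nonneg h0 2
  have hu3 : v^3 ≤ (1/8:ℝ)^3 := pow_le_pow_left₀ h0 h1 3
  have hl3 : (0:ℝ) ≤ v^3 := pow_nonneg h0 3
  have hu4 : v^4 ≤ (1/8:ℝ)^4 := pow_le_pow_left₀ h0 h1 4
  have hl4 : (0:ℝ) ≤ v^4 := pow_nonneg h0 4
  have hu5 : v^5 ≤ (1/8:ℝ)^5 := pow_le_pow_left₀ h0 h1 5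
  have hl5 : (0:ℝ) ≤ v^5 := pow_nonneg h0 5
  have hu6 : v^6 ≤ (1/8:ℝ)^6 := pow_le_pow_left₀ h0 h1 6
  have hl6 : (0:ℝ) ≤ v^6 := pow_nonneg h0 6
  have hu7 : v^7 ≤ (1/8:ℝ)^7 := pow_le_pow_left₀ h0 h1 7
  have hl7 : (0:ℝ) ≤ v^7 := pow_nonneg h0 7
  have hu8 : v^8 ≤ (1/8:ℝ)^8 := pow_le_pow_left₀ h0 h1 8
  have hl8 : (0:ℝ) ≤ v^8 := pow_nonneg h0 8
  have hu9 : v^9 ≤ (1/8:ℝ)^9 := pow_le_pow_left₀ h0 h1 9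
  have hl9 : (0:ℝ) ≤ v^9 := pow_nonneg h0 9
  have hu10 : v^10 ≤ (1/8:ℝ)^10 := pow_le_pow_left₀ h0 h1 10
  have hl10 : (0:ℝ) ≤ v^10 := pow_nonneg h0 10
  have hu11 : v^11 ≤ (1/8:ℝ)^11 := pow_le_pow_left₀ h0 h1 11
  have hl11 : (0:ℝ) ≤ v^11 := pow_nonneg h0 11
  have hu12 : v^12 ≤ (1/8:ℝ)^12 := pow_le_pow_left₀ h0 h1 12
  have hl12 : (0:ℝ) ≤ v^12 := pow_nonneg h0 12
  have hu13 : v^13 ≤ (1/8:ℝ)^13 := pow_le_pow_left₀ h0 h1 13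
  have hl13 : (0:ℝ) ≤ v^13 := pow_nonneg h0 13
  have hu14 : v^14 ≤ (1/8:ℝ)^14 := pow_le_pow_left₀ h0 h1 14
  have hl14 : (0:ℝ) ≤ v^14 := pow_nonneg h0 14
  have hu15 : v^15 ≤ (1/8:ℝ)^15 := pow_le_pow_left₀ h0 h1 15
  have hl15 : (0:ℝ) ≤ v^15 := pow_nonneg h0 15
  have hu16 : v^16 ≤ (1/8:ℝ)^16 := pow_le_pow_left₀ h0 h1 16
  have hl16 : (0:ℝ) ≤ v^16 := pow_nonneg h0 16
  rw [abs_le]; constructor <;> linarith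
private lemma pb46 : PB (fun v : ℝ => (30096) + v * ((0) + v * ((-20118) + v * ((0) + v * ((5670) + v * ((0) + v * ((-121770151 / 138600) + v * ((0) + v * ((31120373569 / 378378000) + v * ((0) + v * ((860619007 / 165110400) + v * ((0) + v * ((-45839253143 / 6486480000) + v * ((0) + v * ((52436930037523 / 22884301440000) + v * ((0) + v * ((-1282024014895513 / 3020727790080000)))))))))))))))))) (304117313837391803159558965210551765859570399 / 10000000000000000000000000000000000000000) := by
  intro v h0 h1
  beta_reduce
  have hu2 : v^2 ≤ (1/8:ℝ)^2 := pow_le_pow_left₀ h0 h1 2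
  have hl2 : (0:ℝ) ≤ v^2 := pow_nonneg h0 2
  have hu3 : v^3 ≤ (1/8:ℝ)^3 := pow_le_pow_left₀ h0 h1 3
  have hl3 : (0:ℝ) ≤ v^3 := pow_nonneg h0 3
  have hu4 : v^4 ≤ (1/8:ℝ)^4 := pow_le_pow_left₀ h0 h1 4
  have hl4 : (0:ℝ) ≤ v^4 := pow_nonneg h0 4
  have hu5 : v^5 ≤ (1/8:ℝ)^5 := pow_le_pow_left₀ h0 h1 5
  have hl5 : (0:ℝ) ≤ v^5 := pow_nonneg h0 5
  have hu6 : v^6 ≤ (1/8:ℝ)^6 := pow_le_pow_left₀ h0 h1 6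
  have hl6 : (0:ℝ) ≤ v^6 := pow_nonneg h0 6
  have hu7 : v^7 ≤ (1/8:ℝ)^7 := pow_le_pow_left₀ h0 h1 7
  have hl7 : (0:ℝ) ≤ v^7 := pow_nonneg h0 7
  have hu8 : v^8 ≤ (1/8:ℝ)^8 := pow_le_pow_left₀ h0 h1 8
  have hl8 : (0:ℝ) ≤ v^8 := pow_nonneg h0 8
  have hu9 : v^9 ≤ (1/8:ℝ)^9 := pow_le_pow_left₀ h0 h1 9
  have hl9 : (0:ℝ) ≤ v^9 := pow_nonneg h0 9
  have hu10 : v^10 ≤ (1/8:ℝ)^10 := pow_le_pow_left₀ h0 h1 10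
  have hl10 : (0:ℝ) ≤ v^10 := pow_nonneg h0 10
  have hu11 : v^11 ≤ (1/8:ℝ)^11 := pow_le_pow_left₀ h0 h1 11
  have hl11 : (0:ℝ) ≤ v^11 := pow_nonneg h0 11
  have hu12 : v^12 ≤ (1/8:ℝ)^12 := pow_le_pow_left₀ h0 h1 12
  have hl12 : (0:ℝ) ≤ v^12 := pow_nonneg h0 12
  have hu13 : v^13 ≤ (1/8:ℝ)^13 := pow_le_pow_left₀ h0 h1 13
  have hl13 : (0:ℝ) ≤ v^13 := pow_nonneg h0 13
  have hu14 : v^14 ≤ (1/8:ℝ)^14 := pow_le_pow_left₀ h0 h1 14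
  have hl14 : (0:ℝ) ≤ v^14 := pow_nonneg h0 14
  have hu15 : v^15 ≤ (1/8:ℝ)^15 := pow_le_pow_left₀ h0 h1 15
  have hl15 : (0:ℝ) ≤ v^15 := pow_nonneg h0 15
  have hu16 : v^16 ≤ (1/8:ℝ)^16 := pow_le_pow_left₀ h0 h1 16
  have hl16 : (0:ℝ) ≤ v^16 := pow_nonneg h0 16
  rw [abs_le]; constructor <;> linarith
private lemma pb47 : PB (fun v : ℝ => (0) + v * ((3816215737505708252593 / 403851489559393075200000) + v * ((0) + v * ((-4193713961172290369743 / 36750485549904769843200000) + v * ((0) + v * ((17736253685565435333223 / 26460349595931434287104000000) + v * ((0) + v * ((-73426194807385252163 / 31752419515117721144524800000) + v * ((0) + v * ((121936102575006502063 / 23285107644419662172651520000000) + v * ((0) + v * ((-4094512211786138287 / 488987260532812905625681920000000) + v * ((0) + v * ((10012598592651937 / 1005916650238929405858545664000000) + v * ((0) + v * ((-1282024014895513 / 140828331033450116820196392960000000))))))))))))))))) (472566769813699014599929768202930429 / 400000000000000000000000000000000000000) := by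
  intro v h0 h1
  beta_reduce
  have hu2 : v^2 ≤ (1/8:ℝ)^2 := pow_le_pow_left₀ h0 h1 2
  have hl2 : (0:ℝ) ≤ v^2 := pow_nonneg h0 2
  have hu3 : v^3 ≤ (1/8:ℝ)^3 := pow_le_pow_left₀ h0 h1 3
  have hl3 : (0:ℝ) ≤ v^3 := pow_nonneg h0 3
  have hu4 : v^4 ≤ (1/8:ℝ)^4 := pow_le_pow_left₀ h0 h1 4
  have hl4 : (0:ℝ) ≤ v^4 := pow_nonneg h0 4
  have hu5 : v^5 ≤ (1/8:ℝ)^5 := pow_le_pow_left₀ h0 h1 5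
  have hl5 : (0:ℝ) ≤ v^5 := pow_nonneg h0 5
  have hu6 : v^6 ≤ (1/8:ℝ)^6 := pow_le_pow_left₀ h0 h1 6
  have hl6 : (0:ℝ) ≤ v^6 := pow_nonneg h0 6
  have hu7 : v^7 ≤ (1/8:ℝ)^7 := pow_le_pow_left₀ h0 h1 7
  have hl7 : (0:ℝ) ≤ v^7 := pow_nonneg h0 7
  have hu8 : v^8 ≤ (1/8:ℝ)^8 := pow_le_pow_left₀ h0 h1 8
  have hl8 : (0:ℝ) ≤ v^8 := pow_nonneg h0 8
  have hu9 : v^9 ≤ (1/8:ℝ)^9 := pow_le_pow_left₀ h0 h1 9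
  have hl9 : (0:ℝ) ≤ v^9 := pow_nonneg h0 9
  have hu10 : v^10 ≤ (1/8:ℝ)^10 := pow_le_pow_left₀ h0 h1 10
  have hl10 : (0:ℝ) ≤ v^10 := pow_nonneg h0 10
  have hu11 : v^11 ≤ (1/8:ℝ)^11 := pow_le_pow_left₀ h0 h1 11
  have hl11 : (0:ℝ) ≤ v^11 := pow_nonneg h0 11
  have hu12 : v^12 ≤ (1/8:ℝ)^12 := pow_le_pow_left₀ h0 h1 12
  have hl12 : (0:ℝ) ≤ v^12 := pow_nonneg h0 12
  have hu13 : v^13 ≤ (1/8:ℝ)^13 := pow_le_pow_left₀ h0 h1 13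
  have hl13 : (0:ℝ) ≤ v^13 := pow_nonneg h0 13
  have hu14 : v^14 ≤ (1/8:ℝ)^14 := pow_le_pow_left₀ h0 h1 14
  have hl14 : (0:ℝ) ≤ v^14 := pow_nonneg h0 14
  have hu15 : v^15 ≤ (1/8:ℝ)^15 := pow_le_pow_left₀ h0 h1 15
  have hl15 : (0:ℝ) ≤ v^15 := pow_nonneg h0 15
  rw [abs_le]; constructor <;> linarith
private lemma pb48 : PB (fun v : ℝ => (0) + v * ((-1206) + v * ((0) + v * ((-2109 / 4) + v * ((0) + v * ((163403 / 320) + v * ((0) + v * ((-1221028757 / 8870400) + v * ((0) + v * ((2487522608981 / 129153024000) + v * ((0) + v * ((84448358881 / 24797380608) + v * ((0) + v * ((-8362448945838857 / 2231764254720000) + v * ((0) + v * ((486857379932728159 / 374936394792960000) + v * ((0) + v * ((-17628320647764855328133 / 67308581593232179200000))))))))))))))))))) (379488585655497323363651389872807059976387 / 2500000000000000000000000000000000000000) := by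
  intro v h0 h1
  beta_reduce
  have hu2 : v^2 ≤ (1/8:ℝ)^2 := pow_le_pow_left₀ h0 h1 2
  have hl2 : (0:ℝ) ≤ v^2 := pow_nonneg h0 2
  have hu3 : v^3 ≤ (1/8:ℝ)^3 := pow_le_pow_left₀ h0 h1 3
  have hl3 : (0:ℝ) ≤ v^3 := pow_nonneg h0 3
  have hu4 : v^4 ≤ (1/8:ℝ)^4 := pow_le_pow_left₀ h0 h1 4
  have hl4 : (0:ℝ) ≤ v^4 := pow_nonneg h0 4
  have hu5 : v^5 ≤ (1/8:ℝ)^5 := pow_le_pow_left₀ h0 h1 5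
  have hl5 : (0:ℝ) ≤ v^5 := pow_nonneg h0 5
  have hu6 : v^6 ≤ (1/8:ℝ)^6 := pow_le_pow_left₀ h0 h1 6
  have hl6 : (0:ℝ) ≤ v^6 := pow_nonneg h0 6
  have hu7 : v^7 ≤ (1/8:ℝ)^7 := pow_le_pow_left₀ h0 h1 7
  have hl7 : (0:ℝ) ≤ v^7 := pow_nonneg h0 7
  have hu8 : v^8 ≤ (1/8:ℝ)^8 := pow_le_pow_left₀ h0 h1 8
  have hl8 : (0:ℝ) ≤ v^8 := pow_nonneg h0 8
  have hu9 : v^9 ≤ (1/8:ℝ)^9 := pow_le_pow_left₀ h0 h1 9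
  have hl9 : (0:ℝ) ≤ v^9 := pow_nonneg h0 9
  have hu10 : v^10 ≤ (1/8:ℝ)^10 := pow_le_pow_left₀ h0 h1 10
  have hl10 : (0:ℝ) ≤ v^10 := pow_nonneg h0 10
  have hu11 : v^11 ≤ (1/8:ℝ)^11 := pow_le_pow_left₀ h0 h1 11
  have hl11 : (0:ℝ) ≤ v^11 := pow_nonneg h0 11
  have hu12 : v^12 ≤ (1/8:ℝ)^12 := pow_le_pow_left₀ h0 h1 12
  have hl12 : (0:ℝ) ≤ v^12 := pow_nonneg h0 12
  have hu13 : v^13 ≤ (1/8:ℝ)^13 := pow_le_pow_left₀ h0 h1 13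
  have hl13 : (0:ℝ) ≤ v^13 := pow_nonneg h0 13
  have hu14 : v^14 ≤ (1/8:ℝ)^14 := pow_le_pow_left₀ h0 h1 14
  have hl14 : (0:ℝ) ≤ v^14 := pow_nonneg h0 14
  have hu15 : v^15 ≤ (1/8:ℝ)^15 := pow_le_pow_left₀ h0 h1 15
  have hl15 : (0:ℝ) ≤ v^15 := pow_nonneg h0 15
  have hu16 : v^16 ≤ (1/8:ℝ)^16 := pow_le_pow_left₀ h0 h1 16
  have hl16 : (0:ℝ) ≤ v^16 := pow_nonneg h0 16
  have hu17 : v^17 ≤ (1/8:ℝ)^17 := pow_le_pow_left₀ h0 h1 17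
  have hl17 : (0:ℝ) ≤ v^17 := pow_nonneg h0 17
  rw [abs_le]; constructor <;> linarith
private lemma pb49 : PB (fun v : ℝ => (-217713090490926911 / 1369396598169600000) + v * ((0) + v * ((4684913098310355946709 / 807702979118786150400000) + v * ((0) + v * ((-2477991761109167169968407 / 35280466127908579049472000000) + v * ((0) + v * ((499584100506548340317 / 1209615981528294138839040000) + v * ((0) + v * ((-6816541599842257813511 / 4781540821100080360587264000000) + v * ((0) + v * ((769984251196484052691 / 238439502278857340647951564800000) + v * ((0) + v * ((-62064257450219918699381 / 12017350914854409968656758865920000000) + v * ((0) + v * ((5646891618448263863 / 919695223075592599642098892800000000) + v * ((0) + v * ((-17628320647764855328133 / 3137970670886783531015652875069030400000000)))))))))))))))))) (39768833601608409735422635711767291357 / 250000000000000000000000000000000000000) := by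
  intro v h0 h1
  beta_reduce
  have hu2 : v^2 ≤ (1/8:ℝ)^2 := pow_le_pow_left₀ h0 h1 2
  have hl2 : (0:ℝ) ≤ v^2 := pow_nonneg h0 2
  have hu3 : v^3 ≤ (1/8:ℝ)^3 := pow_le_pow_left₀ h0 h1 3
  have hl3 : (0:ℝ) ≤ v^3 := pow_nonneg h0 3
  have hu4 : v^4 ≤ (1/8:ℝ)^4 := pow_le_pow_left₀ h0 h1 4
  have hl4 : (0:ℝ) ≤ v^4 := pow_nonneg h0 4
  have hu5 : v^5 ≤ (1/8:ℝ)^5 := pow_le_pow_left₀ h0 h1 5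
  have hl5 : (0:ℝ) ≤ v^5 := pow_nonneg h0 5
  have hu6 : v^6 ≤ (1/8:ℝ)^6 := pow_le_pow_left₀ h0 h1 6
  have hl6 : (0:ℝ) ≤ v^6 := pow_nonneg h0 6
  have hu7 : v^7 ≤ (1/8:ℝ)^7 := pow_le_pow_left₀ h0 h1 7
  have hl7 : (0:ℝ) ≤ v^7 := pow_nonneg h0 7
  have hu8 : v^8 ≤ (1/8:ℝ)^8 := pow_le_pow_left₀ h0 h1 8
  have hl8 : (0:ℝ) ≤ v^8 := pow_nonneg h0 8
  have hu9 : v^9 ≤ (1/8:ℝ)^9 := pow_le_pow_left₀ h0 h1 9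
  have hl9 : (0:ℝ) ≤ v^9 := pow_nonneg h0 9
  have hu10 : v^10 ≤ (1/8:ℝ)^10 := pow_le_pow_left₀ h0 h1 10
  have hl10 : (0:ℝ) ≤ v^10 := pow_nonneg h0 10
  have hu11 : v^11 ≤ (1/8:ℝ)^11 := pow_le_pow_left₀ h0 h1 11
  have hl11 : (0:ℝ) ≤ v^11 := pow_nonneg h0 11
  have hu12 : v^12 ≤ (1/8:ℝ)^12 := pow_le_pow_left₀ h0 h1 12
  have hl12 : (0:ℝ) ≤ v^12 := pow_nonneg h0 12
  have hu13 : v^13 ≤ (1/8:ℝ)^13 := pow_le_pow_left₀ h0 h1 13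
  have hl13 : (0:ℝ) ≤ v^13 := pow_nonneg h0 13
  have hu14 : v^14 ≤ (1/8:ℝ)^14 := pow_le_pow_left₀ h0 h1 14
  have hl14 : (0:ℝ) ≤ v^14 := pow_nonneg h0 14
  have hu15 : v^15 ≤ (1/8:ℝ)^15 := pow_le_pow_left₀ h0 h1 15
  have hl15 : (0:ℝ) ≤ v^15 := pow_nonneg h0 15
  have hu16 : v^16 ≤ (1/8:ℝ)^16 := pow_le_pow_left₀ h0 h1 16
  have hl16 : (0:ℝ) ≤ v^16 := pow_nonneg h0 16
  rw [abs_le]; constructor <;> linarith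
private lemma pb50 : PB (fun v : ℝ => (-6624) + v * ((0) + v * ((1653) + v * ((0) + v * ((279 / 2) + v * ((0) + v * ((-7017 / 80) + v * ((0) + v * ((6391619 / 554400) + v * ((0) + v * ((-4234891249 / 6054048000) + v * ((0) + v * ((82254455 / 32288256) + v * ((0) + v * ((-4415606271841 / 2179457280000) + v * ((0) + v * ((67049892369007 / 91537205760000)))))))))))))))))) (33249312589508430340180069597135043775069543 / 5000000000000000000000000000000000000000) := by
  intro v h0 h1
  beta_reduce
  have hu2 : v^2 ≤ (1/8:ℝ)^2 := pow_le_pow_left₀ h0 h1 2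
  have hl2 : (0:ℝ) ≤ v^2 := pow_nonneg h0 2
  have hu3 : v^3 ≤ (1/8:ℝ)^3 := pow_le_pow_left₀ h0 h1 3
  have hl3 : (0:ℝ) ≤ v^3 := pow_nonneg h0 3
  have hu4 : v^4 ≤ (1/8:ℝ)^4 := pow_le_pow_left₀ h0 h1 4
  have hl4 : (0:ℝ) ≤ v^4 := pow_nonneg h0 4
  have hu5 : v^5 ≤ (1/8:ℝ)^5 := pow_le_pow_left₀ h0 h1 5
  have hl5 : (0:ℝ) ≤ v^5 := pow_nonneg h0 5
  have hu6 : v^6 ≤ (1/8:ℝ)^6 := pow_le_pow_left₀ h0 h1 6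
  have hl6 : (0:ℝ) ≤ v^6 := pow_nonneg h0 6
  have hu7 : v^7 ≤ (1/8:ℝ)^7 := pow_le_pow_left₀ h0 h1 7
  have hl7 : (0:ℝ) ≤ v^7 := pow_nonneg h0 7
  have hu8 : v^8 ≤ (1/8:ℝ)^8 := pow_le_pow_left₀ h0 h1 8
  have hl8 : (0:ℝ) ≤ v^8 := pow_nonneg h0 8
  have hu9 : v^9 ≤ (1/8:ℝ)^9 := pow_le_pow_left₀ h0 h1 9
  have hl9 : (0:ℝ) ≤ v^9 := pow_nonneg h0 9
  have hu10 : v^10 ≤ (1/8:ℝ)^10 := pow_le_pow_left₀ h0 h1 10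
  have hl10 : (0:ℝ) ≤ v^10 := pow_nonneg h0 10
  have hu11 : v^11 ≤ (1/8:ℝ)^11 := pow_le_pow_left₀ h0 h1 11
  have hl11 : (0:ℝ) ≤ v^11 := pow_nonneg h0 11
  have hu12 : v^12 ≤ (1/8:ℝ)^12 := pow_le_pow_left₀ h0 h1 12
  have hl12 : (0:ℝ) ≤ v^12 := pow_nonneg h0 12
  have hu13 : v^13 ≤ (1/8:ℝ)^13 := pow_le_pow_left₀ h0 h1 13
  have hl13 : (0:ℝ) ≤ v^13 := pow_nonneg h0 13
  have hu14 : v^14 ≤ (1/8:ℝ)^14 := pow_le_pow_left₀ h0 h1 14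
  have hl14 : (0:ℝ) ≤ v^14 := pow_nonneg h0 14
  have hu15 : v^15 ≤ (1/8:ℝ)^15 := pow_le_pow_left₀ h0 h1 15
  have hl15 : (0:ℝ) ≤ v^15 := pow_nonneg h0 15
  have hu16 : v^16 ≤ (1/8:ℝ)^16 := pow_le_pow_left₀ h0 h1 16
  have hl16 : (0:ℝ) ≤ v^16 := pow_nonneg h0 16
  rw [abs_le]; constructor <;> linarith
private lemma pb51 : PB (fun v : ℝ => (0) + v * ((-4251674143020969702949 / 269234326372928716800000) + v * ((0) + v * ((104412457437458624401 / 538468652745857433600000) + v * ((0) + v * ((-14707010167968548827 / 12829260410148574199808000) + v * ((0) + v * ((7634617957699011187 / 1924389061522286129971200000) + v * ((0) + v * ((-2540169677045118289 / 282243729023268632395776000000) + v * ((0) + v * ((3696503509467343 / 256585208202971483996160000000) + v * ((0) + v * ((-36567869180448469 / 2133762591415910860912066560000000) + v * ((0) + v * ((67049892369007 / 4267525182831821721824133120000000))))))))))))))))) (9871721220482004605588166964365522141 / 5000000000000000000000000000000000000000) := by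
  intro v h0 h1
  beta_reduce
  have hu2 : v^2 ≤ (1/8:ℝ)^2 := pow_le_pow_left₀ h0 h1 2
  have hl2 : (0:ℝ) ≤ v^2 := pow_nonneg h0 2
  have hu3 : v^3 ≤ (1/8:ℝ)^3 := pow_le_pow_left₀ h0 h1 3
  have hl3 : (0:ℝ) ≤ v^3 := pow_nonneg h0 3
  have hu4 : v^4 ≤ (1/8:ℝ)^4 := pow_le_pow_left₀ h0 h1 4
  have hl4 : (0:ℝ) ≤ v^4 := pow_nonneg h0 4
  have hu5 : v^5 ≤ (1/8:ℝ)^5 := pow_le_pow_left₀ h0 h1 5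
  have hl5 : (0:ℝ) ≤ v^5 := pow_nonneg h0 5
  have hu6 : v^6 ≤ (1/8:ℝ)^6 := pow_le_pow_left₀ h0 h1 6
  have hl6 : (0:ℝ) ≤ v^6 := pow_nonneg h0 6
  have hu7 : v^7 ≤ (1/8:ℝ)^7 := pow_le_pow_left₀ h0 h1 7
  have hl7 : (0:ℝ) ≤ v^7 := pow_nonneg h0 7
  have hu8 : v^8 ≤ (1/8:ℝ)^8 := pow_le_pow_left₀ h0 h1 8
  have hl8 : (0:ℝ) ≤ v^8 := pow_nonneg h0 8
  have hu9 : v^9 ≤ (1/8:ℝ)^9 := pow_le_pow_left₀ h0 h1 9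
  have hl9 : (0:ℝ) ≤ v^9 := pow_nonneg h0 9
  have hu10 : v^10 ≤ (1/8:ℝ)^10 := pow_le_pow_left₀ h0 h1 10
  have hl10 : (0:ℝ) ≤ v^10 := pow_nonneg h0 10
  have hu11 : v^11 ≤ (1/8:ℝ)^11 := pow_le_pow_left₀ h0 h1 11
  have hl11 : (0:ℝ) ≤ v^11 := pow_nonneg h0 11
  have hu12 : v^12 ≤ (1/8:ℝ)^12 := pow_le_pow_left₀ h0 h1 12
  have hl12 : (0:ℝ) ≤ v^12 := pow_nonneg h0 12
  have hu13 : v^13 ≤ (1/8:ℝ)^13 := pow_le_pow_left₀ h0 h1 13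
  have hl13 : (0:ℝ) ≤ v^13 := pow_nonneg h0 13
  have hu14 : v^14 ≤ (1/8:ℝ)^14 := pow_le_pow_left₀ h0 h1 14
  have hl14 : (0:ℝ) ≤ v^14 := pow_nonneg h0 14
  have hu15 : v^15 ≤ (1/8:ℝ)^15 := pow_le_pow_left₀ h0 h1 15
  have hl15 : (0:ℝ) ≤ v^15 := pow_nonneg h0 15
  rw [abs_le]; constructor <;> linarith
private lemma pb52 : PB (fun v : ℝ => (0) + v * ((-5796) + v * ((0) + v * ((2517) + v * ((0) + v * ((-61901 / 160) + v * ((0) + v * ((41743 / 2240) + v * ((0) + v * ((178350677 / 141926400) + v * ((0) + v * ((-49762041397 / 258306048000) + v * ((0) + v * ((18924398214089 / 14878428364800) + v * ((0) + v * ((-1189098968193193 / 1115882127360000) + v * ((0) + v * ((2139543539664334619 / 5229882019676160000))))))))))))))))))) (3647139155995738119239483002074588272085141 / 5000000000000000000000000000000000000000) := by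
  intro v h0 h1
  beta_reduce
  have hu2 : v^2 ≤ (1/8:ℝ)^2 := pow_le_pow_left₀ h0 h1 2
  have hl2 : (0:ℝ) ≤ v^2 := pow_nonneg h0 2
  have hu3 : v^3 ≤ (1/8:ℝ)^3 := pow_le_pow_left₀ h0 h1 3
  have hl3 : (0:ℝ) ≤ v^3 := pow_nonneg h0 3
  have hu4 : v^4 ≤ (1/8:ℝ)^4 := pow_le_pow_left₀ h0 h1 4
  have hl4 : (0:ℝ) ≤ v^4 := pow_nonneg h0 4
  have hu5 : v^5 ≤ (1/8:ℝ)^5 := pow_le_pow_left₀ h0 h1 5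
  have hl5 : (0:ℝ) ≤ v^5 := pow_nonneg h0 5
  have hu6 : v^6 ≤ (1/8:ℝ)^6 := pow_le_pow_left₀ h0 h1 6
  have hl6 : (0:ℝ) ≤ v^6 := pow_nonneg h0 6
  have hu7 : v^7 ≤ (1/8:ℝ)^7 := pow_le_pow_left₀ h0 h1 7
  have hl7 : (0:ℝ) ≤ v^7 := pow_nonneg h0 7
  have hu8 : v^8 ≤ (1/8:ℝ)^8 := pow_le_pow_left₀ h0 h1 8
  have hl8 : (0:ℝ) ≤ v^8 := pow_nonneg h0 8
  have hu9 : v^9 ≤ (1/8:ℝ)^9 := pow_le_pow_left₀ h0 h1 9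
  have hl9 : (0:ℝ) ≤ v^9 := pow_nonneg h0 9
  have hu10 : v^10 ≤ (1/8:ℝ)^10 := pow_le_pow_left₀ h0 h1 10
  have hl10 : (0:ℝ) ≤ v^10 := pow_nonneg h0 10
  have hu11 : v^11 ≤ (1/8:ℝ)^11 := pow_le_pow_left₀ h0 h1 11
  have hl11 : (0:ℝ) ≤ v^11 := pow_nonneg h0 11
  have hu12 : v^12 ≤ (1/8:ℝ)^12 := pow_le_pow_left₀ h0 h1 12
  have hl12 : (0:ℝ) ≤ v^12 := pow_nonneg h0 12
  have hu13 : v^13 ≤ (1/8:ℝ)^13 := pow_le_pow_left₀ h0 h1 13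
  have hl13 : (0:ℝ) ≤ v^13 := pow_nonneg h0 13
  have hu14 : v^14 ≤ (1/8:ℝ)^14 := pow_le_pow_left₀ h0 h1 14
  have hl14 : (0:ℝ) ≤ v^14 := pow_nonneg h0 14
  have hu15 : v^15 ≤ (1/8:ℝ)^15 := pow_le_pow_left₀ h0 h1 15
  have hl15 : (0:ℝ) ≤ v^15 := pow_nonneg h0 15
  have hu16 : v^16 ≤ (1/8:ℝ)^16 := pow_le_pow_left₀ h0 h1 16
  have hl16 : (0:ℝ) ≤ v^16 := pow_nonneg h0 16
  have hu17 : v^17 ≤ (1/8:ℝ)^17 := pow_le_pow_left₀ h0 h1 17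
  have hl17 : (0:ℝ) ≤ v^17 := pow_nonneg h0 17
  rw [abs_le]; constructor <;> linarith
private lemma pb53 : PB (fun v : ℝ => (62821194439271 / 276645777408000) + v * ((0) + v * ((-1579936683488198820209 / 179489550915285811200000) + v * ((0) + v * ((7944497015793478219 / 73427543556253286400000) + v * ((0) + v * ((-36121339812526467992917 / 56448745804653726479155200000) + v * ((0) + v * ((10002506376505442024653 / 4515899664372298118332416000000) + v * ((0) + v * ((-40343818469326180229 / 8028266069995196654813184000000) + v * ((0) + v * ((104626537310451375341 / 13005791033392218580797358080000000) + v * ((0) + v * ((-5576131111571033771 / 582659438295971392419721641984000000) + v * ((0) + v * ((2139543539664334619 / 243820564948468028827945056337920000000)))))))))))))))))) (284024084216689475566730457651447584229 / 1250000000000000000000000000000000000000) := by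
  intro v h0 h1
  beta_reduce
  have hu2 : v^2 ≤ (1/8:ℝ)^2 := pow_le_pow_left₀ h0 h1 2
  have hl2 : (0:ℝ) ≤ v^2 := pow_nonneg h0 2
  have hu3 : v^3 ≤ (1/8:ℝ)^3 := pow_le_pow_left₀ h0 h1 3
  have hl3 : (0:ℝ) ≤ v^3 := pow_nonneg h0 3
  have hu4 : v^4 ≤ (1/8:ℝ)^4 := pow_le_pow_left₀ h0 h1 4
  have hl4 : (0:ℝ) ≤ v^4 := pow_nonneg h0 4
  have hu5 : v^5 ≤ (1/8:ℝ)^5 := pow_le_pow_left₀ h0 h1 5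
  have hl5 : (0:ℝ) ≤ v^5 := pow_nonneg h0 5
  have hu6 : v^6 ≤ (1/8:ℝ)^6 := pow_le_pow_left₀ h0 h1 6
  have hl6 : (0:ℝ) ≤ v^6 := pow_nonneg h0 6
  have hu7 : v^7 ≤ (1/8:ℝ)^7 := pow_le_pow_left₀ h0 h1 7
  have hl7 : (0:ℝ) ≤ v^7 := pow_nonneg h0 7
  have hu8 : v^8 ≤ (1/8:ℝ)^8 := pow_le_pow_left₀ h0 h1 8
  have hl8 : (0:ℝ) ≤ v^8 := pow_nonneg h0 8
  have hu9 : v^9 ≤ (1/8:ℝ)^9 := pow_le_pow_left₀ h0 h1 9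
  have hl9 : (0:ℝ) ≤ v^9 := pow_nonneg h0 9
  have hu10 : v^10 ≤ (1/8:ℝ)^10 := pow_le_pow_left₀ h0 h1 10
  have hl10 : (0:ℝ) ≤ v^10 := pow_nonneg h0 10
  have hu11 : v^11 ≤ (1/8:ℝ)^11 := pow_le_pow_left₀ h0 h1 11
  have hl11 : (0:ℝ) ≤ v^11 := pow_nonneg h0 11
  have hu12 : v^12 ≤ (1/8:ℝ)^12 := pow_le_pow_left₀ h0 h1 12
  have hl12 : (0:ℝ) ≤ v^12 := pow_nonneg h0 12
  have hu13 : v^13 ≤ (1/8:ℝ)^13 := pow_le_pow_left₀ h0 h1 13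
  have hl13 : (0:ℝ) ≤ v^13 := pow_nonneg h0 13
  have hu14 : v^14 ≤ (1/8:ℝ)^14 := pow_le_pow_left₀ h0 h1 14
  have hl14 : (0:ℝ) ≤ v^14 := pow_nonneg h0 14
  have hu15 : v^15 ≤ (1/8:ℝ)^15 := pow_le_pow_left₀ h0 h1 15
  have hl15 : (0:ℝ) ≤ v^15 := pow_nonneg h0 15
  have hu16 : v^16 ≤ (1/8:ℝ)^16 := pow_le_pow_left₀ h0 h1 16
  have hl16 : (0:ℝ) ≤ v^16 := pow_nonneg h0 16
  rw [abs_le]; constructor <;> linarith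
private lemma pb54 : PB (fun v : ℝ => (432) + v * ((0) + v * ((-3465) + v * ((0) + v * ((3339 / 2) + v * ((0) + v * ((-26343 / 80) + v * ((0) + v * ((109721 / 3360) + v * ((0) + v * ((-345307 / 211200) + v * ((0) + v * ((424871653 / 12108096000) + v * ((0) + v * ((18327973507 / 29059430400) + v * ((0) + v * ((-60905386429 / 108972864000)))))))))))))))))) (4865494758534799239059066456534586881745123 / 10000000000000000000000000000000000000000) := by
  intro v h0 h1
  beta_reduce
  have hu2 : v^2 ≤ (1/8:ℝ)^2 := pow_le_pow_left₀ h0 h1 2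
  have hl2 : (0:ℝ) ≤ v^2 := pow_nonneg h0 2
  have hu3 : v^3 ≤ (1/8:ℝ)^3 := pow_le_pow_left₀ h0 h1 3
  have hl3 : (0:ℝ) ≤ v^3 := pow_nonneg h0 3
  have hu4 : v^4 ≤ (1/8:ℝ)^4 := pow_le_pow_left₀ h0 h1 4
  have hl4 : (0:ℝ) ≤ v^4 := pow_nonneg h0 4
  have hu5 : v^5 ≤ (1/8:ℝ)^5 := pow_le_pow_left₀ h0 h1 5
  have hl5 : (0:ℝ) ≤ v^5 := pow_nonneg h0 5
  have hu6 : v^6 ≤ (1/8:ℝ)^6 := pow_le_pow_left₀ h0 h1 6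
  have hl6 : (0:ℝ) ≤ v^6 := pow_nonneg h0 6
  have hu7 : v^7 ≤ (1/8:ℝ)^7 := pow_le_pow_left₀ h0 h1 7
  have hl7 : (0:ℝ) ≤ v^7 := pow_nonneg h0 7
  have hu8 : v^8 ≤ (1/8:ℝ)^8 := pow_le_pow_left₀ h0 h1 8
  have hl8 : (0:ℝ) ≤ v^8 := pow_nonneg h0 8
  have hu9 : v^9 ≤ (1/8:ℝ)^9 := pow_le_pow_left₀ h0 h1 9
  have hl9 : (0:ℝ) ≤ v^9 := pow_nonneg h0 9
  have hu10 : v^10 ≤ (1/8:ℝ)^10 := pow_le_pow_left₀ h0 h1 10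
  have hl10 : (0:ℝ) ≤ v^10 := pow_nonneg h0 10
  have hu11 : v^11 ≤ (1/8:ℝ)^11 := pow_le_pow_left₀ h0 h1 11
  have hl11 : (0:ℝ) ≤ v^11 := pow_nonneg h0 11
  have hu12 : v^12 ≤ (1/8:ℝ)^12 := pow_le_pow_left₀ h0 h1 12
  have hl12 : (0:ℝ) ≤ v^12 := pow_nonneg h0 12
  have hu13 : v^13 ≤ (1/8:ℝ)^13 := pow_le_pow_left₀ h0 h1 13
  have hl13 : (0:ℝ) ≤ v^13 := pow_nonneg h0 13
  have hu14 : v^14 ≤ (1/8:ℝ)^14 := pow_le_pow_left₀ h0 h1 14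
  have hl14 : (0:ℝ) ≤ v^14 := pow_nonneg h0 14
  have hu15 : v^15 ≤ (1/8:ℝ)^15 := pow_le_pow_left₀ h0 h1 15
  have hl15 : (0:ℝ) ≤ v^15 := pow_nonneg h0 15
  have hu16 : v^16 ≤ (1/8:ℝ)^16 := pow_le_pow_left₀ h0 h1 16
  have hl16 : (0:ℝ) ≤ v^16 := pow_nonneg h0 16
  rw [abs_le]; constructor <;> linarith
private lemma pb55 : PB (fun v : ℝ => (0) + v * ((1751583561564197167 / 148338471830814720000) + v * ((0) + v * ((-15779867502124316471 / 107693730549171486720000) + v * ((0) + v * ((1605715496739323351 / 1846178237985796915200000) + v * ((0) + v * ((-3040065358654474541 / 1008013317940245115699200000) + v * ((0) + v * ((1933127964987306653 / 282243729023268632395776000000) + v * ((0) + v * ((-6193047230361707 / 564487458046537264791552000000) + v * ((0) + v * ((24121378303783 / 1847413499061394684772352000000) + v * ((0) + v * ((-60905386429 / 5080387122418835383123968000000))))))))))))))))) (922680400669375112385074248107445181 / 625000000000000000000000000000000000000) := by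
  intro v h0 h1
  beta_reduce
  have hu2 : v^2 ≤ (1/8:ℝ)^2 := pow_le_pow_left₀ h0 h1 2
  have hl2 : (0:ℝ) ≤ v^2 := pow_nonneg h0 2
  have hu3 : v^3 ≤ (1/8:ℝ)^3 := pow_le_pow_left₀ h0 h1 3
  have hl3 : (0:ℝ) ≤ v^3 := pow_nonneg h0 3
  have hu4 : v^4 ≤ (1/8:ℝ)^4 := pow_le_pow_left₀ h0 h1 4
  have hl4 : (0:ℝ) ≤ v^4 := pow_nonneg h0 4
  have hu5 : v^5 ≤ (1/8:ℝ)^5 := pow_le_pow_left₀ h0 h1 5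
  have hl5 : (0:ℝ) ≤ v^5 := pow_nonneg h0 5
  have hu6 : v^6 ≤ (1/8:ℝ)^6 := pow_le_pow_left₀ h0 h1 6
  have hl6 : (0:ℝ) ≤ v^6 := pow_nonneg h0 6
  have hu7 : v^7 ≤ (1/8:ℝ)^7 := pow_le_pow_left₀ h0 h1 7
  have hl7 : (0:ℝ) ≤ v^7 := pow_nonneg h0 7
  have hu8 : v^8 ≤ (1/8:ℝ)^8 := pow_le_pow_left₀ h0 h1 8
  have hl8 : (0:ℝ) ≤ v^8 := pow_nonneg h0 8
  have hu9 : v^9 ≤ (1/8:ℝ)^9 := pow_le_pow_left₀ h0 h1 9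
  have hl9 : (0:ℝ) ≤ v^9 := pow_nonneg h0 9
  have hu10 : v^10 ≤ (1/8:ℝ)^10 := pow_le_pow_left₀ h0 h1 10
  have hl10 : (0:ℝ) ≤ v^10 := pow_nonneg h0 10
  have hu11 : v^11 ≤ (1/8:ℝ)^11 := pow_le_pow_left₀ h0 h1 11
  have hl11 : (0:ℝ) ≤ v^11 := pow_nonneg h0 11
  have hu12 : v^12 ≤ (1/8:ℝ)^12 := pow_le_pow_left₀ h0 h1 12
  have hl12 : (0:ℝ) ≤ v^12 := pow_nonneg h0 12
  have hu13 : v^13 ≤ (1/8:ℝ)^13 := pow_le_pow_left₀ h0 h1 13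
  have hl13 : (0:ℝ) ≤ v^13 := pow_nonneg h0 13
  have hu14 : v^14 ≤ (1/8:ℝ)^14 := pow_le_pow_left₀ h0 h1 14
  have hl14 : (0:ℝ) ≤ v^14 := pow_nonneg h0 14
  have hu15 : v^15 ≤ (1/8:ℝ)^15 := pow_le_pow_left₀ h0 h1 15
  have hl15 : (0:ℝ) ≤ v^15 := pow_nonneg h0 15
  rw [abs_le]; constructor <;> linarith
private lemma pb56 : PB (fun v : ℝ => (0) + v * ((702) + v * ((0) + v * ((-8181 / 4) + v * ((0) + v * ((316581 / 320) + v * ((0) + v * ((-3817623 / 17920) + v * ((0) + v * ((2852739 / 114688) + v * ((0) + v * ((-757728731 / 454164480) + v * ((0) + v * ((3196440990629 / 49594761216000) + v * ((0) + v * ((17798213649253 / 56679727104000) + v * ((0) + v * ((-5683380455998100599 / 19425276073082880000))))))))))))))))))) (183549844385204508220046261848130181353639 / 2000000000000000000000000000000000000000) := by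
  intro v h0 h1
  beta_reduce
  have hu2 : v^2 ≤ (1/8:ℝ)^2 := pow_le_pow_left₀ h0 h1 2
  have hl2 : (0:ℝ) ≤ v^2 := pow_nonneg h0 2
  have hu3 : v^3 ≤ (1/8:ℝ)^3 := pow_le_pow_left₀ h0 h1 3
  have hl3 : (0:ℝ) ≤ v^3 := pow_nonneg h0 3
  have hu4 : v^4 ≤ (1/8:ℝ)^4 := pow_le_pow_left₀ h0 h1 4
  have hl4 : (0:ℝ) ≤ v^4 := pow_nonneg h0 4
  have hu5 : v^5 ≤ (1/8:ℝ)^5 := pow_le_pow_left₀ h0 h1 5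
  have hl5 : (0:ℝ) ≤ v^5 := pow_nonneg h0 5
  have hu6 : v^6 ≤ (1/8:ℝ)^6 := pow_le_pow_left₀ h0 h1 6
  have hl6 : (0:ℝ) ≤ v^6 := pow_nonneg h0 6
  have hu7 : v^7 ≤ (1/8:ℝ)^7 := pow_le_pow_left₀ h0 h1 7
  have hl7 : (0:ℝ) ≤ v^7 := pow_nonneg h0 7
  have hu8 : v^8 ≤ (1/8:ℝ)^8 := pow_le_pow_left₀ h0 h1 8
  have hl8 : (0:ℝ) ≤ v^8 := pow_nonneg h0 8
  have hu9 : v^9 ≤ (1/8:ℝ)^9 := pow_le_pow_left₀ h0 h1 9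
  have hl9 : (0:ℝ) ≤ v^9 := pow_nonneg h0 9
  have hu10 : v^10 ≤ (1/8:ℝ)^10 := pow_le_pow_left₀ h0 h1 10
  have hl10 : (0:ℝ) ≤ v^10 := pow_nonneg h0 10
  have hu11 : v^11 ≤ (1/8:ℝ)^11 := pow_le_pow_left₀ h0 h1 11
  have hl11 : (0:ℝ) ≤ v^11 := pow_nonneg h0 11
  have hu12 : v^12 ≤ (1/8:ℝ)^12 := pow_le_pow_left₀ h0 h1 12
  have hl12 : (0:ℝ) ≤ v^12 := pow_nonneg h0 12
  have hu13 : v^13 ≤ (1/8:ℝ)^13 := pow_le_pow_left₀ h0 h1 13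
  have hl13 : (0:ℝ) ≤ v^13 := pow_nonneg h0 13
  have hu14 : v^14 ≤ (1/8:ℝ)^14 := pow_le_pow_left₀ h0 h1 14
  have hl14 : (0:ℝ) ≤ v^14 := pow_nonneg h0 14
  have hu15 : v^15 ≤ (1/8:ℝ)^15 := pow_le_pow_left₀ h0 h1 15
  have hl15 : (0:ℝ) ≤ v^15 := pow_nonneg h0 15
  have hu16 : v^16 ≤ (1/8:ℝ)^16 := pow_le_pow_left₀ h0 h1 16
  have hl16 : (0:ℝ) ≤ v^16 := pow_nonneg h0 16
  have hu17 : v^17 ≤ (1/8:ℝ)^17 := pow_le_pow_left₀ h0 h1 17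
  have hl17 : (0:ℝ) ≤ v^17 := pow_nonneg h0 17
  rw [abs_le]; constructor <;> linarith
private lemma pb57 : PB (fun v : ℝ => (-10657422404323 / 69742632960000) + v * ((0) + v * ((4031668332527801003 / 652689276055584768000) + v * ((0) + v * ((-660620889020508018917 / 8615498443933718937600000) + v * ((0) + v * ((31375025182259480389 / 68923987551469751500800000) + v * ((0) + v * ((-407352584496274057699 / 258051409392702749618995200000) + v * ((0) + v * ((28782052982473937089 / 8028266069995196654813184000000) + v * ((0) + v * ((-19917242650422999437 / 3468210942237924954879295488000000) + v * ((0) + v * ((2844493446648807647 / 416185313068550994585515458560000000) + v * ((0) + v * ((-5683380455998100599 / 905619241237166964218081637826560000000)))))))))))))))))) (382268152290492366980434697284140479813 / 2500000000000000000000000000000000000000) := by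
  intro v h0 h1
  beta_reduce
  have hu2 : v^2 ≤ (1/8:ℝ)^2 := pow_le_pow_left₀ h0 h1 2
  have hl2 : (0:ℝ) ≤ v^2 := pow_nonneg h0 2
  have hu3 : v^3 ≤ (1/8:ℝ)^3 := pow_le_pow_left₀ h0 h1 3
  have hl3 : (0:ℝ) ≤ v^3 := pow_nonneg h0 3
  have hu4 : v^4 ≤ (1/8:ℝ)^4 := pow_le_pow_left₀ h0 h1 4
  have hl4 : (0:ℝ) ≤ v^4 := pow_nonneg h0 4
  have hu5 : v^5 ≤ (1/8:ℝ)^5 := pow_le_pow_left₀ h0 h1 5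
  have hl5 : (0:ℝ) ≤ v^5 := pow_nonneg h0 5
  have hu6 : v^6 ≤ (1/8:ℝ)^6 := pow_le_pow_left₀ h0 h1 6
  have hl6 : (0:ℝ) ≤ v^6 := pow_nonneg h0 6
  have hu7 : v^7 ≤ (1/8:ℝ)^7 := pow_le_pow_left₀ h0 h1 7
  have hl7 : (0:ℝ) ≤ v^7 := pow_nonneg h0 7
  have hu8 : v^8 ≤ (1/8:ℝ)^8 := pow_le_pow_left₀ h0 h1 8
  have hl8 : (0:ℝ) ≤ v^8 := pow_nonneg h0 8
  have hu9 : v^9 ≤ (1/8:ℝ)^9 := pow_le_pow_left₀ h0 h1 9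
  have hl9 : (0:ℝ) ≤ v^9 := pow_nonneg h0 9
  have hu10 : v^10 ≤ (1/8:ℝ)^10 := pow_le_pow_left₀ h0 h1 10
  have hl10 : (0:ℝ) ≤ v^10 := pow_nonneg h0 10
  have hu11 : v^11 ≤ (1/8:ℝ)^11 := pow_le_pow_left₀ h0 h1 11
  have hl11 : (0:ℝ) ≤ v^11 := pow_nonneg h0 11
  have hu12 : v^12 ≤ (1/8:ℝ)^12 := pow_le_pow_left₀ h0 h1 12
  have hl12 : (0:ℝ) ≤ v^12 := pow_nonneg h0 12
  have hu13 : v^13 ≤ (1/8:ℝ)^13 := pow_le_pow_left₀ h0 h1 13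
  have hl13 : (0:ℝ) ≤ v^13 := pow_nonneg h0 13
  have hu14 : v^14 ≤ (1/8:ℝ)^14 := pow_le_pow_left₀ h0 h1 14
  have hl14 : (0:ℝ) ≤ v^14 := pow_nonneg h0 14
  have hu15 : v^15 ≤ (1/8:ℝ)^15 := pow_le_pow_left₀ h0 h1 15
  have hl15 : (0:ℝ) ≤ v^15 := pow_nonneg h0 15
  have hu16 : v^16 ≤ (1/8:ℝ)^16 := pow_le_pow_left₀ h0 h1 16
  have hl16 : (0:ℝ) ≤ v^16 := pow_nonneg h0 16
  rw [abs_le]; constructor <;> linarith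
private lemma pb58 : PB (fun v : ℝ => (0) + v * ((0) + v * ((648) + v * ((0) + v * ((-1260) + v * ((0) + v * ((6117 / 10) + v * ((0) + v * ((-39817 / 280) + v * ((0) + v * ((5701 / 300) + v * ((0) + v * ((-79441 / 50400) + v * ((0) + v * ((1023992887 / 12108096000) + v * ((0) + v * ((5618287459 / 36324288000)))))))))))))))))) (104349591315319335882868540433604448019421 / 10000000000000000000000000000000000000000) := by
  intro v h0 h1
  beta_reduce
  have hu2 : v^2 ≤ (1/8:ℝ)^2 := pow_le_pow_left₀ h0 h1 2
  have hl2 : (0:ℝ) ≤ v^2 := pow_nonneg h0 2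
  have hu3 : v^3 ≤ (1/8:ℝ)^3 := pow_le_pow_left₀ h0 h1 3
  have hl3 : (0:ℝ) ≤ v^3 := pow_nonneg h0 3
  have hu4 : v^4 ≤ (1/8:ℝ)^4 := pow_le_pow_left₀ h0 h1 4
  have hl4 : (0:ℝ) ≤ v^4 := pow_nonneg h0 4
  have hu5 : v^5 ≤ (1/8:ℝ)^5 := pow_le_pow_left₀ h0 h1 5
  have hl5 : (0:ℝ) ≤ v^5 := pow_nonneg h0 5
  have hu6 : v^6 ≤ (1/8:ℝ)^6 := pow_le_pow_left₀ h0 h1 6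
  have hl6 : (0:ℝ) ≤ v^6 := pow_nonneg h0 6
  have hu7 : v^7 ≤ (1/8:ℝ)^7 := pow_le_pow_left₀ h0 h1 7
  have hl7 : (0:ℝ) ≤ v^7 := pow_nonneg h0 7
  have hu8 : v^8 ≤ (1/8:ℝ)^8 := pow_le_pow_left₀ h0 h1 8
  have hl8 : (0:ℝ) ≤ v^8 := pow_nonneg h0 8
  have hu9 : v^9 ≤ (1/8:ℝ)^9 := pow_le_pow_left₀ h0 h1 9
  have hl9 : (0:ℝ) ≤ v^9 := pow_nonneg h0 9
  have hu10 : v^10 ≤ (1/8:ℝ)^10 := pow_le_pow_left₀ h0 h1 10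
  have hl10 : (0:ℝ) ≤ v^10 := pow_nonneg h0 10
  have hu11 : v^11 ≤ (1/8:ℝ)^11 := pow_le_pow_left₀ h0 h1 11
  have hl11 : (0:ℝ) ≤ v^11 := pow_nonneg h0 11
  have hu12 : v^12 ≤ (1/8:ℝ)^12 := pow_le_pow_left₀ h0 h1 12
  have hl12 : (0:ℝ) ≤ v^12 := pow_nonneg h0 12
  have hu13 : v^13 ≤ (1/8:ℝ)^13 := pow_le_pow_left₀ h0 h1 13
  have hl13 : (0:ℝ) ≤ v^13 := pow_nonneg h0 13
  have hu14 : v^14 ≤ (1/8:ℝ)^14 := pow_le_pow_left₀ h0 h1 14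
  have hl14 : (0:ℝ) ≤ v^14 := pow_nonneg h0 14
  have hu15 : v^15 ≤ (1/8:ℝ)^15 := pow_le_pow_left₀ h0 h1 15
  have hl15 : (0:ℝ) ≤ v^15 := pow_nonneg h0 15
  have hu16 : v^16 ≤ (1/8:ℝ)^16 := pow_le_pow_left₀ h0 h1 16
  have hl16 : (0:ℝ) ≤ v^16 := pow_nonneg h0 16
  rw [abs_le]; constructor <;> linarith
private lemma pb59 : PB (fun v : ℝ => (0) + v * ((-383436521208233 / 119909111562240000) + v * ((0) + v * ((3274779034933723 / 81586159506948096000) + v * ((0) + v * ((-2342626690157959 / 9790339140833771520000) + v * ((0) + v * ((5372285976350873 / 6461623832950289203200000) + v * ((0) + v * ((-79393864215109 / 42000554914176879820800000) + v * ((0) + v * ((232900585831 / 76863760627251806208000000) + v * ((0) + v * ((-872803539533 / 241923196305658827767808000000) + v * ((0) + v * ((5618287459 / 1693462374139611794374656000000))))))))))))))))) (999485481804610938676372496287809879 / 2500000000000000000000000000000000000000) := by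
  intro v h0 h1
  beta_reduce
  have hu2 : v^2 ≤ (1/8:ℝ)^2 := pow_le_pow_left₀ h0 h1 2
  have hl2 : (0:ℝ) ≤ v^2 := pow_nonneg h0 2
  have hu3 : v^3 ≤ (1/8:ℝ)^3 := pow_le_pow_left₀ h0 h1 3
  have hl3 : (0:ℝ) ≤ v^3 := pow_nonneg h0 3
  have hu4 : v^4 ≤ (1/8:ℝ)^4 := pow_le_pow_left₀ h0 h1 4
  have hl4 : (0:ℝ) ≤ v^4 := pow_nonneg h0 4
  have hu5 : v^5 ≤ (1/8:ℝ)^5 := pow_le_pow_left₀ h0 h1 5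
  have hl5 : (0:ℝ) ≤ v^5 := pow_nonneg h0 5
  have hu6 : v^6 ≤ (1/8:ℝ)^6 := pow_le_pow_left₀ h0 h1 6
  have hl6 : (0:ℝ) ≤ v^6 := pow_nonneg h0 6
  have hu7 : v^7 ≤ (1/8:ℝ)^7 := pow_le_pow_left₀ h0 h1 7
  have hl7 : (0:ℝ) ≤ v^7 := pow_nonneg h0 7
  have hu8 : v^8 ≤ (1/8:ℝ)^8 := pow_le_pow_left₀ h0 h1 8
  have hl8 : (0:ℝ) ≤ v^8 := pow_nonneg h0 8
  have hu9 : v^9 ≤ (1/8:ℝ)^9 := pow_le_pow_left₀ h0 h1 9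
  have hl9 : (0:ℝ) ≤ v^9 := pow_nonneg h0 9
  have hu10 : v^10 ≤ (1/8:ℝ)^10 := pow_le_pow_left₀ h0 h1 10
  have hl10 : (0:ℝ) ≤ v^10 := pow_nonneg h0 10
  have hu11 : v^11 ≤ (1/8:ℝ)^11 := pow_le_pow_left₀ h0 h1 11
  have hl11 : (0:ℝ) ≤ v^11 := pow_nonneg h0 11
  have hu12 : v^12 ≤ (1/8:ℝ)^12 := pow_le_pow_left₀ h0 h1 12
  have hl12 : (0:ℝ) ≤ v^12 := pow_nonneg h0 12
  have hu13 : v^13 ≤ (1/8:ℝ)^13 := pow_le_pow_left₀ h0 h1 13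
  have hl13 : (0:ℝ) ≤ v^13 := pow_nonneg h0 13
  have hu14 : v^14 ≤ (1/8:ℝ)^14 := pow_le_pow_left₀ h0 h1 14
  have hl14 : (0:ℝ) ≤ v^14 := pow_nonneg h0 14
  have hu15 : v^15 ≤ (1/8:ℝ)^15 := pow_le_pow_left₀ h0 h1 15
  have hl15 : (0:ℝ) ≤ v^15 := pow_nonneg h0 15
  rw [abs_le]; constructor <;> linarith
private lemma pb60 : PB (fun v : ℝ => (0) + v * ((0) + v * ((0) + v * ((432) + v * ((0) + v * ((-234) + v * ((0) + v * ((2097 / 40) + v * ((0) + v * ((-2803 / 448) + v * ((0) + v * ((21953 / 51200) + v * ((0) + v * ((-108883 / 6307840) + v * ((0) + v * ((240419843 / 563576832000) + v * ((0) + v * ((3910729559323 / 49594761216000))))))))))))))))))) (2127290395338091497616820874140349228347 / 2500000000000000000000000000000000000000) := by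
  intro v h0 h1
  beta_reduce
  have hu2 : v^2 ≤ (1/8:ℝ)^2 := pow_le_pow_left₀ h0 h1 2
  have hl2 : (0:ℝ) ≤ v^2 := pow_nonneg h0 2
  have hu3 : v^3 ≤ (1/8:ℝ)^3 := pow_le_pow_left₀ h0 h1 3
  have hl3 : (0:ℝ) ≤ v^3 := pow_nonneg h0 3
  have hu4 : v^4 ≤ (1/8:ℝ)^4 := pow_le_pow_left₀ h0 h1 4
  have hl4 : (0:ℝ) ≤ v^4 := pow_nonneg h0 4
  have hu5 : v^5 ≤ (1/8:ℝ)^5 := pow_le_pow_left₀ h0 h1 5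
  have hl5 : (0:ℝ) ≤ v^5 := pow_nonneg h0 5
  have hu6 : v^6 ≤ (1/8:ℝ)^6 := pow_le_pow_left₀ h0 h1 6
  have hl6 : (0:ℝ) ≤ v^6 := pow_nonneg h0 6
  have hu7 : v^7 ≤ (1/8:ℝ)^7 := pow_le_pow_left₀ h0 h1 7
  have hl7 : (0:ℝ) ≤ v^7 := pow_nonneg h0 7
  have hu8 : v^8 ≤ (1/8:ℝ)^8 := pow_le_pow_left₀ h0 h1 8
  have hl8 : (0:ℝ) ≤ v^8 := pow_nonneg h0 8
  have hu9 : v^9 ≤ (1/8:ℝ)^9 := pow_le_pow_left₀ h0 h1 9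
  have hl9 : (0:ℝ) ≤ v^9 := pow_nonneg h0 9
  have hu10 : v^10 ≤ (1/8:ℝ)^10 := pow_le_pow_left₀ h0 h1 10
  have hl10 : (0:ℝ) ≤ v^10 := pow_nonneg h0 10
  have hu11 : v^11 ≤ (1/8:ℝ)^11 := pow_le_pow_left₀ h0 h1 11
  have hl11 : (0:ℝ) ≤ v^11 := pow_nonneg h0 11
  have hu12 : v^12 ≤ (1/8:ℝ)^12 := pow_le_pow_left₀ h0 h1 12
  have hl12 : (0:ℝ) ≤ v^12 := pow_nonneg h0 12
  have hu13 : v^13 ≤ (1/8:ℝ)^13 := pow_le_pow_left₀ h0 h1 13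
  have hl13 : (0:ℝ) ≤ v^13 := pow_nonneg h0 13
  have hu14 : v^14 ≤ (1/8:ℝ)^14 := pow_le_pow_left₀ h0 h1 14
  have hl14 : (0:ℝ) ≤ v^14 := pow_nonneg h0 14
  have hu15 : v^15 ≤ (1/8:ℝ)^15 := pow_le_pow_left₀ h0 h1 15
  have hl15 : (0:ℝ) ≤ v^15 := pow_nonneg h0 15
  have hu16 : v^16 ≤ (1/8:ℝ)^16 := pow_le_pow_left₀ h0 h1 16
  have hl16 : (0:ℝ) ≤ v^16 := pow_nonneg h0 16
  have hu17 : v^17 ≤ (1/8:ℝ)^17 := pow_le_pow_left₀ h0 h1 17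
  have hl17 : (0:ℝ) ≤ v^17 := pow_nonneg h0 17
  rw [abs_le]; constructor <;> linarith
private lemma pb61 : PB (fun v : ℝ => (3817707827 / 96864768000) + v * ((0) + v * ((-379867013047513 / 231253286584320000) + v * ((0) + v * ((5584315250306519 / 271953865023160320000) + v * ((0) + v * ((-52652979056630401 / 430774922196685946880000) + v * ((0) + v * ((187512009064019 / 441820433022241996800000) + v * ((0) + v * ((-20742320888100571 / 21504284116058562468249600000) + v * ((0) + v * ((27922422531385381 / 18063598657489192473329664000000) + v * ((0) + v * ((-35457105029977 / 19267838567988471971551641600000) + v * ((0) + v * ((3910729559323 / 2312140628158616636586196992000000)))))))))))))))))) (24649019414961290042455784689909651861 / 625000000000000000000000000000000000000) := by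
  intro v h0 h1
  beta_reduce
  have hu2 : v^2 ≤ (1/8:ℝ)^2 := pow_le_pow_left₀ h0 h1 2
  have hl2 : (0:ℝ) ≤ v^2 := pow_nonneg h0 2
  have hu3 : v^3 ≤ (1/8:ℝ)^3 := pow_le_pow_left₀ h0 h1 3
  have hl3 : (0:ℝ) ≤ v^3 := pow_nonneg h0 3
  have hu4 : v^4 ≤ (1/8:ℝ)^4 := pow_le_pow_left₀ h0 h1 4
  have hl4 : (0:ℝ) ≤ v^4 := pow_nonneg h0 4
  have hu5 : v^5 ≤ (1/8:ℝ)^5 := pow_le_pow_left₀ h0 h1 5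
  have hl5 : (0:ℝ) ≤ v^5 := pow_nonneg h0 5
  have hu6 : v^6 ≤ (1/8:ℝ)^6 := pow_le_pow_left₀ h0 h1 6
  have hl6 : (0:ℝ) ≤ v^6 := pow_nonneg h0 6
  have hu7 : v^7 ≤ (1/8:ℝ)^7 := pow_le_pow_left₀ h0 h1 7
  have hl7 : (0:ℝ) ≤ v^7 := pow_nonneg h0 7
  have hu8 : v^8 ≤ (1/8:ℝ)^8 := pow_le_pow_left₀ h0 h1 8
  have hl8 : (0:ℝ) ≤ v^8 := pow_nonneg h0 8
  have hu9 : v^9 ≤ (1/8:ℝ)^9 := pow_le_pow_left₀ h0 h1 9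
  have hl9 : (0:ℝ) ≤ v^9 := pow_nonneg h0 9
  have hu10 : v^10 ≤ (1/8:ℝ)^10 := pow_le_pow_left₀ h0 h1 10
  have hl10 : (0:ℝ) ≤ v^10 := pow_nonneg h0 10
  have hu11 : v^11 ≤ (1/8:ℝ)^11 := pow_le_pow_left₀ h0 h1 11
  have hl11 : (0:ℝ) ≤ v^11 := pow_nonneg h0 11
  have hu12 : v^12 ≤ (1/8:ℝ)^12 := pow_le_pow_left₀ h0 h1 12
  have hl12 : (0:ℝ) ≤ v^12 := pow_nonneg h0 12
  have hu13 : v^13 ≤ (1/8:ℝ)^13 := pow_le_pow_left₀ h0 h1 13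
  have hl13 : (0:ℝ) ≤ v^13 := pow_nonneg h0 13
  have hu14 : v^14 ≤ (1/8:ℝ)^14 := pow_le_pow_left₀ h0 h1 14
  have hl14 : (0:ℝ) ≤ v^14 := pow_nonneg h0 14
  have hu15 : v^15 ≤ (1/8:ℝ)^15 := pow_le_pow_left₀ h0 h1 15
  have hl15 : (0:ℝ) ≤ v^15 := pow_nonneg h0 15
  have hu16 : v^16 ≤ (1/8:ℝ)^16 := pow_le_pow_left₀ h0 h1 16
  have hl16 : (0:ℝ) ≤ v^16 := pow_nonneg h0 16
  rw [abs_le]; constructor <;> linarith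
private lemma pb62 : PB (fun v : ℝ => (0) + v * ((0) + v * ((0) + v * ((0) + v * ((216) + v * ((0) + v * ((-126) + v * ((0) + v * ((156 / 5) + v * ((0) + v * ((-1199 / 280) + v * ((0) + v * ((287 / 800) + v * ((0) + v * ((-8549 / 443520) + v * ((0) + v * ((2102437 / 3027024000)))))))))))))))))) (266084452568334687671596933421415102313 / 5000000000000000000000000000000000000000) := by
  intro v h0 h1
  beta_reduce
  have hu2 : v^2 ≤ (1/8:ℝ)^2 := pow_le_pow_left₀ h0 h1 2
  have hl2 : (0:ℝ) ≤ v^2 := pow_nonneg h0 2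
  have hu3 : v^3 ≤ (1/8:ℝ)^3 := pow_le_pow_left₀ h0 h1 3
  have hl3 : (0:ℝ) ≤ v^3 := pow_nonneg h0 3
  have hu4 : v^4 ≤ (1/8:ℝ)^4 := pow_le_pow_left₀ h0 h1 4
  have hl4 : (0:ℝ) ≤ v^4 := pow_nonneg h0 4
  have hu5 : v^5 ≤ (1/8:ℝ)^5 := pow_le_pow_left₀ h0 h1 5
  have hl5 : (0:ℝ) ≤ v^5 := pow_nonneg h0 5
  have hu6 : v^6 ≤ (1/8:ℝ)^6 := pow_le_pow_left₀ h0 h1 6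
  have hl6 : (0:ℝ) ≤ v^6 := pow_nonneg h0 6
  have hu7 : v^7 ≤ (1/8:ℝ)^7 := pow_le_pow_left₀ h0 h1 7
  have hl7 : (0:ℝ) ≤ v^7 := pow_nonneg h0 7
  have hu8 : v^8 ≤ (1/8:ℝ)^8 := pow_le_pow_left₀ h0 h1 8
  have hl8 : (0:ℝ) ≤ v^8 := pow_nonneg h0 8
  have hu9 : v^9 ≤ (1/8:ℝ)^9 := pow_le_pow_left₀ h0 h1 9
  have hl9 : (0:ℝ) ≤ v^9 := pow_nonneg h0 9
  have hu10 : v^10 ≤ (1/8:ℝ)^10 := pow_le_pow_left₀ h0 h1 10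
  have hl10 : (0:ℝ) ≤ v^10 := pow_nonneg h0 10
  have hu11 : v^11 ≤ (1/8:ℝ)^11 := pow_le_pow_left₀ h0 h1 11
  have hl11 : (0:ℝ) ≤ v^11 := pow_nonneg h0 11
  have hu12 : v^12 ≤ (1/8:ℝ)^12 := pow_le_pow_left₀ h0 h1 12
  have hl12 : (0:ℝ) ≤ v^12 := pow_nonneg h0 12
  have hu13 : v^13 ≤ (1/8:ℝ)^13 := pow_le_pow_left₀ h0 h1 13
  have hl13 : (0:ℝ) ≤ v^13 := pow_nonneg h0 13
  have hu14 : v^14 ≤ (1/8:ℝ)^14 := pow_le_pow_left₀ h0 h1 14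
  have hl14 : (0:ℝ) ≤ v^14 := pow_nonneg h0 14
  have hu15 : v^15 ≤ (1/8:ℝ)^15 := pow_le_pow_left₀ h0 h1 15
  have hl15 : (0:ℝ) ≤ v^15 := pow_nonneg h0 15
  have hu16 : v^16 ≤ (1/8:ℝ)^16 := pow_le_pow_left₀ h0 h1 16
  have hl16 : (0:ℝ) ≤ v^16 := pow_nonneg h0 16
  rw [abs_le]; constructor <;> linarith
private lemma pb63 : PB (fun v : ℝ => (0) + v * ((-796256287 / 39675808972800) + v * ((0) + v * ((688744158911 / 3237546012180480000) + v * ((0) + v * ((-966672708733 / 815861595069480960000) + v * ((0) + v * ((1531258033 / 384620466247041024000) + v * ((0) + v * ((-579748699 / 65268927605558476800000) + v * ((0) + v * ((315242321 / 22400295954227669237760000) + v * ((0) + v * ((-2345798381 / 141121864511634316197888000000) + v * ((0) + v * ((2102437 / 141121864511634316197888000000))))))))))))))))) (25090483401148962163158224883844169 / 10000000000000000000000000000000000000000) := by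
  intro v h0 h1
  beta_reduce
  have hu2 : v^2 ≤ (1/8:ℝ)^2 := pow_le_pow_left₀ h0 h1 2
  have hl2 : (0:ℝ) ≤ v^2 := pow_nonneg h0 2
  have hu3 : v^3 ≤ (1/8:ℝ)^3 := pow_le_pow_left₀ h0 h1 3
  have hl3 : (0:ℝ) ≤ v^3 := pow_nonneg h0 3
  have hu4 : v^4 ≤ (1/8:ℝ)^4 := pow_le_pow_left₀ h0 h1 4
  have hl4 : (0:ℝ) ≤ v^4 := pow_nonneg h0 4
  have hu5 : v^5 ≤ (1/8:ℝ)^5 := pow_le_pow_left₀ h0 h1 5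
  have hl5 : (0:ℝ) ≤ v^5 := pow_nonneg h0 5
  have hu6 : v^6 ≤ (1/8:ℝ)^6 := pow_le_pow_left₀ h0 h1 6
  have hl6 : (0:ℝ) ≤ v^6 := pow_nonneg h0 6
  have hu7 : v^7 ≤ (1/8:ℝ)^7 := pow_le_pow_left₀ h0 h1 7
  have hl7 : (0:ℝ) ≤ v^7 := pow_nonneg h0 7
  have hu8 : v^8 ≤ (1/8:ℝ)^8 := pow_le_pow_left₀ h0 h1 8
  have hl8 : (0:ℝ) ≤ v^8 := pow_nonneg h0 8
  have hu9 : v^9 ≤ (1/8:ℝ)^9 := pow_le_pow_left₀ h0 h1 9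
  have hl9 : (0:ℝ) ≤ v^9 := pow_nonneg h0 9
  have hu10 : v^10 ≤ (1/8:ℝ)^10 := pow_le_pow_left₀ h0 h1 10
  have hl10 : (0:ℝ) ≤ v^10 := pow_nonneg h0 10
  have hu11 : v^11 ≤ (1/8:ℝ)^11 := pow_le_pow_left₀ h0 h1 11
  have hl11 : (0:ℝ) ≤ v^11 := pow_nonneg h0 11
  have hu12 : v^12 ≤ (1/8:ℝ)^12 := pow_le_pow_left₀ h0 h1 12
  have hl12 : (0:ℝ) ≤ v^12 := pow_nonneg h0 12
  have hu13 : v^13 ≤ (1/8:ℝ)^13 := pow_le_pow_left₀ h0 h1 13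
  have hl13 : (0:ℝ) ≤ v^13 := pow_nonneg h0 13
  have hu14 : v^14 ≤ (1/8:ℝ)^14 := pow_le_pow_left₀ h0 h1 14
  have hl14 : (0:ℝ) ≤ v^14 := pow_nonneg h0 14
  have hu15 : v^15 ≤ (1/8:ℝ)^15 := pow_le_pow_left₀ h0 h1 15
  have hl15 : (0:ℝ) ≤ v^15 := pow_nonneg h0 15
  rw [abs_le]; constructor <;> linarith

set_option maxHeartbeats 4000000 in
private lemma Mmain : ∀ v : ℝ, 0 ≤ v → v ≤ 1/8 →
    |(432) * Real.sin (v / 2) ^ 5 * Real.cos (v / 2) ^ 6 + (-6624) * Real.sin (v / 2) ^ 7 * Real.cos (v / 2) ^ 6 + (30096) * Real.sin (v / 2) ^ 9 * Real.cos (v / 2) ^ 6 + (-144) * Real.sin (v / 2) ^ 11 * Real.cos (v / 2) ^ 2 + (5520) * Real.sin (v / 2) ^ 11 * Real.cos (v / 2) ^ 4 + (-49152) * Real.sin (v / 2) ^ 11 * Real.cos (v / 2) ^ 6 + (486) * v * Real.sin (v / 2) ^ 4 * Real.cos (v / 2) ^ 5 + (-2484) * v * Real.sin (v / 2) ^ 6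 * Real.cos (v / 2) ^ 5 + (-16254) * v * Real.sin (v / 2) ^ 8 * Real.cos (v / 2) ^ 5 + (54) * v * Real.sin (v / 2) ^ 10 * Real.cos (v / 2) + (2178) * v * Real.sin (v / 2) ^ 10 * Real.cos (v / 2) ^ 3 + (92160) * v * Real.sin (v / 2) ^ 10 * Real.cos (v / 2) ^ 5 + (-110592) * v * Real.sin (v / 2) ^ 12 * Real.cos (v / 2) ^ 5 + (297) * v ^ 2 * Real.sin (v / 2) ^ 3 * Real.cos (v / 2) ^ 6 + (-243) * v ^ 2 * Real.sin (v / 2) ^ 5 * Real.cos (v / 2) ^ 6 + (-2712) * v ^ 2 * Real.sin (v / 2) ^ 7 * Real.cos (v / 2) ^ 6 + (-33798) * v ^ 2 * Real.sin (v / 2) ^ 9 * Real.cos (v / 2) ^ 6 + (-9) * v ^ 2 * Real.sin (v / 2) ^ 11 + (-366) * v ^ 2 * Real.sin (v / 2) ^ 11 * Real.cos (v / 2) ^ 2 + (-11270) * v ^ 2 * Real.sin (v / 2) ^ 11 * Real.cos (v / 2) ^ 4 + (106496) * v ^ 2 * Real.sin (v / 2) ^ 11 * Real.cos (v / 2) ^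 6 + (108) * v ^ 3 * Real.sin (v / 2) ^ 2 * Real.cos (v / 2) ^ 5 + (-30720) * v ^ 3 * Real.sin (v / 2) ^ 10 * Real.cos (v / 2) ^ 5 + (49152) * v ^ 3 * Real.sin (v / 2) ^ 12 * Real.cos (v / 2) ^ 5 + (-108) * v ^ 5 * Real.cos (v / 2) ^ 5 + (477) * v ^ 5 * Real.sin (v / 2) ^ 2 * Real.cos (v / 2) ^ 5 + (-90987349 / 17325) * v ^ 5 * Real.sin (v / 2) ^ 10 * Real.cos (v / 2) ^ 5 + (16301796103 / 23648625) * v ^ 7 * Real.sin (v / 2) ^ 10 * Real.cos (v / 2) ^ 5| ≤ ((12559561758757443925088960830494963531 / 5000000000000000000000000000000000000000)) * v ^ 18 := by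
  have tm1 := PA.mul (r := (fun v : ℝ => (1) + v * ((0) + v * ((-1 / 4) + v * ((0) + v * ((1 / 48) + v * ((0) + v * ((-1 / 1440) + v * ((0) + v * ((1 / 80640) + v * ((0) + v * ((-1 / 7257600) + v * ((0) + v * ((1 / 958003200) + v * ((0) + v * ((-1 / 174356582400) + v * ((0) + v * ((1 / 41845579776000))))))))))))))))))) (t := (fun v : ℝ => (-257 / 3290870299439923200) + v * ((0) + v * ((811 / 3949044359327907840000) + v * ((0) + v * ((-293 / 663439452367088517120000) + v * ((0) + v * ((109 / 140118412339929094815744000) + v * ((0) + v * ((-31 / 28023682467985818963148800000) + v * ((0) + v * ((151 / 122407445020162057231033958400000) + v * ((0) + v * ((-1 / 979259560161296457848271667200000) + v * ((0) + v * ((1 / 1880178355509689199068681601024000000))))))))))))))))) (E := ((390496562285403021350617 / 5000000000000000000000000000000000000000):ℝ)) cosTM cosTM pb0 pb0 pb1 (by intro v; beta_reduce; ring) (by norm_num) (by norm_num) (by norm_num)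
  have tm2 := PA.mul (r := (fun v : ℝ => (1) + v * ((0) + v * ((-3 / 8) + v * ((0) + v * ((7 / 128) + v * ((0) + v * ((-61 / 15360) + v * ((0) + v * ((547 / 3440640) + v * ((0) + v * ((-703 / 176947200) + v * ((0) + v * ((44287 / 653996851200) + v * ((0) + v * ((-398581 / 476109707673600) + v * ((0) + v * ((512461 / 65295045623808000))))))))))))))))))) (t := (fun v : ℝ => (-37931 / 658174059887984640) + v * ((0) + v * ((29773 / 89751008166543360000) + v * ((0) + v * ((-11897 / 8292993154588606464000) + v * ((0) + v * ((49219 / 10946750964056960532480000) + v * ((0) + v * ((-223 / 21893501928113921064960000) + v * ((0) + v * ((2027 / 119538520527502009014681600000) + v * ((0) + v * ((-1 / 47815408211000803605872640000) + v * ((0) + v * ((1 / 57378489853200964327047168000000))))))))))))))))) (E := ((288570439199252011156359071 / 5000000000000000000000000000000000000000):ℝ)) cosTM tm1 pb0 pb2 pb3 (by intro v; beta_reduce; ring) (by norm_num) (by norm_num) (by norm_num)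
  have tm3 := PA.mul (r := (fun v : ℝ => (1) + v * ((0) + v * ((-1 / 2) + v * ((0) + v * ((5 / 48) + v * ((0) + v * ((-17 / 1440) + v * ((0) + v * ((13 / 16128) + v * ((0) + v * ((-257 / 7257600) + v * ((0) + v * ((41 / 38320128) + v * ((0) + v * ((-4097 / 174356582400) + v * ((0) + v * ((3277 / 8369115955200))))))))))))))))))) (t := (fun v : ℝ => (-2775559 / 548478383239987200) + v * ((0) + v * ((60972811 / 1316348119775969280000) + v * ((0) + v * ((-15026303 / 55286621030590709760000) + v * ((0) + v * ((238917311 / 233530687233215158026240000) + v * ((0) + v * ((-12092747 / 4670613744664303160524800000) + v * ((0) + v * ((189148747 / 40802481673387352410344652800000) + v * ((0) + v * ((-249113 / 40802481673387352410344652800000) + v * ((0) + v * ((512461 / 89532302643318533288984838144000000))))))))))))))))) (E := ((2047608698314683904770806217 / 400000000000000000000000000000000000000):ℝ)) cosTM tm2 pb0 pb4 pb5 (by intro v; beta_reduce; ring) (by norm_num) (by norm_num) (by norm_num)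
  have tm4 := PA.mul (r := (fun v : ℝ => (1) + v * ((0) + v * ((-5 / 8) + v * ((0) + v * ((65 / 384) + v * ((0) + v * ((-241 / 9216) + v * ((0) + v * ((5293 / 2064384) + v * ((0) + v * ((-125761 / 743178240) + v * ((0) + v * ((3084973 / 392398110720) + v * ((0) + v * ((-76592881 / 285665824604160) + v * ((0) + v * ((146926081 / 21095322432307200))))))))))))))))))) (t := (fun v : ℝ => (-225440767 / 1645435149719961600) + v * ((0) + v * ((1622291851 / 987261089831976960000) + v * ((0) + v * ((-459449261 / 41464965772943032320000) + v * ((0) + v * ((490731779 / 10946750964056960532480000) + v * ((0) + v * ((-106867 / 904690162318757068800000) + v * ((0) + v * ((5183279 / 23907704105500401802936320000) + v * ((0) + v * ((-69637 / 239077041055004018029363200000) + v * ((0) + v * ((3277 / 11475697970640192865409433600000))))))))))))))))) (E := ((1421645171201087561743345608833 / 10000000000000000000000000000000000000000):ℝ)) cosTM tm3 pb0 pb6 pb7 (by intro v; beta_reduce; ring) (by norm_num) (by norm_num) (by norm_num)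
  have tm5 := PA.mul (r := (fun v : ℝ => (1) + v * ((0) + v * ((-3 / 4) + v * ((0) + v * ((1 / 4) + v * ((0) + v * ((-47 / 960) + v * ((0) + v * ((169 / 26880) + v * ((0) + v * ((-2717 / 4838400) + v * ((0) + v * ((181 / 4989600) + v * ((0) + v * ((-203387 / 116237721600) + v * ((0) + v * ((904999 / 13948526592000))))))))))))))))))) (t := (fun v : ℝ => (-165159329 / 94024865698283520) + v * ((0) + v * ((19559449831 / 789808871865581568000) + v * ((0) + v * ((-23794507211 / 132687890473417703424000) + v * ((0) + v * ((306809099 / 408508490786965291008000) + v * ((0) + v * ((-869437309 / 431133576430551060971520000) + v * ((0) + v * ((91642716043 / 24481489004032411446206791680000) + v * ((0) + v * ((-141902281 / 27978844576037041652807761920000) + v * ((0) + v * ((146926081 / 28925820853995218447210486169600000))))))))))))))))) (E := ((18993787467364426469718097434977 / 10000000000000000000000000000000000000000):ℝ)) cosTM tm4 pb0 pb8 pb9 (by intro v; beta_reduce; ring) (by norm_num) (by norm_num) (by norm_num)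
  have tm6 := PA.exact (fun v : ℝ => (0) + v * ((0) + v * ((0) + v * ((0) + v * ((0) + v * ((-108)))))))
  have tm7 := PA.mul (r := (fun v : ℝ => (0) + v * ((0) + v * ((0) + v * ((0) + v * ((0) + v * ((-108) + v * ((0) + v * ((135 / 2) + v * ((0) + v * ((-585 / 32) + v * ((0) + v * ((723 / 256) + v * ((0) + v * ((-15879 / 57344) + v * ((0) + v * ((125761 / 6881280) + v * ((0) + v * ((-3084973 / 3633315840)))))))))))))))))))) (t := (fun v : ℝ => (0) + v * ((76592881 / 2645053931520) + v * ((0) + v * ((-146926081 / 195327059558400)))))) (E := ((36210971861973899432405723248150541 / 10000000000000000000000000000000000000000):ℝ)) tm6 tm4 pb10 pb8 pb11 (by intro v; beta_reduce; ring) (by norm_num) (by norm_num) (by norm_num)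
  have tm8 := PA.exact (fun v : ℝ => (0) + v * ((0) + v * ((0) + v * ((108) + v * ((0) + v * ((477)))))))
  have tm9 := PA.mul (r := (fun v : ℝ => (0) + v * ((0) + v * ((0) + v * ((108) + v * ((0) + v * ((819 / 2) + v * ((0) + v * ((-8955 / 32) + v * ((0) + v * ((19947 / 256) + v * ((0) + v * ((-699409 / 57344) + v * ((0) + v * ((8290109 / 6881280) + v * ((0) + v * ((-96729893 / 1211105280) + v * ((0) + v * ((5905574183 / 1587032358912)))))))))))))))))))) (t := (fun v : ℝ => (0) + v * ((-9783144739 / 76947023462400) + v * ((0) + v * ((7787082293 / 2343924714700800)))))) (E := ((79495917720825422100493797356845819 / 5000000000000000000000000000000000000000):ℝ)) tm8 tm4 pb12 pb8 pb13 (by intro v; beta_reduce; ring) (by norm_num) (by norm_num) (by norm_num)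
  have tm10 := PA.exact (fun v : ℝ => (0) + v * ((486)))
  have tm11 := PA.mul (r := (fun v : ℝ => (0) + v * ((486) + v * ((0) + v * ((-1215 / 4) + v * ((0) + v * ((5265 / 64) + v * ((0) + v * ((-6507 / 512) + v * ((0) + v * ((142911 / 114688) + v * ((0) + v * ((-377283 / 4587520) + v * ((0) + v * ((3084973 / 807403520) + v * ((0) + v * ((-76592881 / 587789762560) + v * ((0) + v * ((146926081 / 43406013235200)))))))))))))))))))) (t := (fun v : ℝ => (0))) (E := ((17272988830093213875181649147321 / 2000000000000000000000000000000000000000):ℝ)) tm10 tm4 pb14 pb8 pb15 (by intro v; beta_reduce; ring) (by norm_num) (by norm_num) (by norm_num)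
  have tm12 := PA.exact (fun v : ℝ => (0) + v * ((-2484)))
  have tm13 := PA.mul (r := (fun v : ℝ => (0) + v * ((-2484) + v * ((0) + v * ((3105 / 2) + v * ((0) + v * ((-13455 / 32) + v * ((0) + v * ((16629 / 256) + v * ((0) + v * ((-365217 / 57344) + v * ((0) + v * ((2892503 / 6881280) + v * ((0) + v * ((-70954379 / 3633315840) + v * ((0) + v * ((1761636263 / 2645053931520) + v * ((0) + v * ((-3379299863 / 195327059558400)))))))))))))))))))) (t := (fun v : ℝ => (0))) (E := ((441420825657937687921308811542647 / 10000000000000000000000000000000000000000):ℝ)) tm12 tm4 pb16 pb8 pb15 (by intro v; beta_reduce; ring) (by norm_num) (by norm_num) (by norm_num)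
  have tm14 := PA.exact (fun v : ℝ => (0) + v * ((54)))
  have tm15 := PA.mul (r := (fun v : ℝ => (0) + v * ((54) + v * ((0) + v * ((-27 / 4) + v * ((0) + v * ((9 / 64) + v * ((0) + v * ((-3 / 2560) + v * ((0) + v * ((3 / 573440) + v * ((0) + v * ((-1 / 68812800) + v * ((0) + v * ((1 / 36333158400) + v * ((0) + v * ((-1 / 26450539315200) + v * ((0) + v * ((1 / 25392517742592000)))))))))))))))))))) (t := (fun v : ℝ => (0))) (E := ((42452564106436486643 / 10000000000000000000000000000000000000000):ℝ)) tm14 cosTM pb17 pb0 pb15 (by intro v; beta_reduce; ring) (by norm_num) (by norm_num) (by norm_num)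
  have tm16 := PA.exact (fun v : ℝ => (0) + v * ((2178)))
  have tm17 := PA.mul (r := (fun v : ℝ => (0) + v * ((2178) + v * ((0) + v * ((-3267 / 4) + v * ((0) + v * ((7623 / 64) + v * ((0) + v * ((-22143 / 2560) + v * ((0) + v * ((198561 / 573440) + v * ((0) + v * ((-85063 / 9830400) + v * ((0) + v * ((487157 / 3303014400) + v * ((0) + v * ((-4384391 / 2404594483200) + v * ((0) + v * ((5637071 / 329772957696000)))))))))))))))))))) (t := (fun v : ℝ => (0))) (E := ((1964082551799909000932968927 / 125000000000000000000000000000000000000):ℝ)) tm16 tm2 pb18 pb4 pb15 (by intro v; beta_reduce; ring) (by norm_num) (by norm_num) (by norm_num)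
  have tm18 := PA.exact (fun v : ℝ => (0) + v * ((92160) + v * ((0) + v * ((-30720) + v * ((0) + v * ((-90987349 / 17325) + v * ((0) + v * ((16301796103 / 23648625)))))))))
  have tm19 := PA.mul (r := (fun v : ℝ => (0) + v * ((92160) + v * ((0) + v * ((-88320) + v * ((0) + v * ((511922651 / 17325) + v * ((0) + v * ((-688325264251 / 189189000) + v * ((0) + v * ((-5140095151 / 18345600) + v * ((0) + v * ((5407465939 / 33868800) + v * ((0) + v * ((-178322106064451 / 6974263296000) + v * ((0) + v * ((560040261994979 / 234335246745600) + v * ((0) + v * ((-461075119425410443 / 3093225257041920000)))))))))))))))))))) (t := (fun v : ℝ => (0) + v * ((490975669786270787 / 74237406169006080000) + v * ((0) + v * ((-95725332338837520779 / 432358653528291409920000) + v * ((0) + v * ((2395159014674862343 / 498875369455720857600000)))))))) (E := ((165755489524974944800506730991333467 / 200000000000000000000000000000000000000):ℝ)) tm18 tm4 pb19 pb8 pb20 (by intro v; beta_reduce; ring) (by norm_num) (by norm_num) (by norm_num)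
  have tm20 := PA.add' (r := (fun v : ℝ => (0) + v * ((2232) + v * ((0) + v * ((-1647 / 2) + v * ((0) + v * ((477 / 4) + v * ((0) + v * ((-11073 / 1280) + v * ((0) + v * ((49641 / 143360) + v * ((0) + v * ((-297721 / 34406400) + v * ((0) + v * ((669841 / 4541644800) + v * ((0) + v * ((-24114151 / 13225269657600) + v * ((0) + v * ((108513617 / 6348129435648000)))))))))))))))))))) (E := ((39281651046611321045268500201 / 2500000000000000000000000000000000000000):ℝ)) tm15 tm17 (by intro v; beta_reduce; ring) (by norm_num)
  have tm21 := PA.add' (r := (fun v : ℝ => (0) + v * ((94392) + v * ((0) + v * ((-178287 / 2) + v * ((0) + v * ((2055954629 / 69300) + v * ((0) + v * ((-22078780700957 / 6054048000) + v * ((0) + v * ((-164279764937 / 587059200) + v * ((0) + v * ((346059063673 / 2167603200) + v * ((0) + v * ((-1426568619518923 / 55794106368000) + v * ((0) + v * ((1378559593162747 / 576825222758400) + v * ((0) + v * ((-29508804259229122207 / 197966416450682880000)))))))))))))))))))) (E := ((1657554926675070285294124146128134831 / 2000000000000000000000000000000000000000):ℝ)) tm20 tm19 (by intro v; beta_reduce;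 ring) (by norm_num)
  have tm22 := PA.exact (fun v : ℝ => (0) + v * ((-110592) + v * ((0) + v * ((49152)))))
  have tm23 := PA.mul (r := (fun v : ℝ => (0) + v * ((-110592) + v * ((0) + v * ((118272) + v * ((0) + v * ((-49440) + v * ((0) + v * ((11212) + v * ((0) + v * ((-263573 / 168) + v * ((0) + v * ((972641 / 6720) + v * ((0) + v * ((-97790663 / 10644480) + v * ((0) + v * ((1934555461 / 4649508864) + v * ((0) + v * ((-103769004839 / 7439214182400)))))))))))))))))))) (t := (fun v : ℝ => (0) + v * ((146926081 / 429185433600)))) (E := ((44771063005443949710938911286018941 / 1000000000000000000000000000000000000000):ℝ)) tm22 tm4 pb21 pb8 pb22 (by intro v; beta_reduce; ring) (by norm_num) (by norm_num) (by norm_num)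
  have tm24 := PA.exact (fun v : ℝ => (0) + v * ((0) + v * ((297))))
  have tm25 := PA.mul (r := (fun v : ℝ => (0) + v * ((0) + v * ((297) + v * ((0) + v * ((-891 / 4) + v * ((0) + v * ((297 / 4) + v * ((0) + v * ((-4653 / 320) + v * ((0) + v * ((16731 / 8960) + v * ((0) + v * ((-29887 / 179200) + v * ((0) + v * ((181 / 16800) + v * ((0) + v * ((-203387 / 391372800))))))))))))))))))) (t := (fun v : ℝ => (904999 / 46964736000))) (E := ((192785702337112083759360324748769823 / 10000000000000000000000000000000000000000):ℝ)) tm24 tm5 pb23 pb24 pb25 (by intro v; beta_reduce; ring) (by norm_num) (by norm_num) (by norm_num)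
  have tm26 := PA.exact (fun v : ℝ => (432) + v * ((0) + v * ((-243))))
  have tm27 := PA.mul (r := (fun v : ℝ => (432) + v * ((0) + v * ((-567) + v * ((0) + v * ((1161 / 4) + v * ((0) + v * ((-819 / 10) + v * ((0) + v * ((32733 / 2240) + v * ((0) + v * ((-79313 / 44800) + v * ((0) + v * ((899621 / 5913600) + v * ((0) + v * ((-2575211 / 269068800) + v * ((0) + v * ((29267243 / 64576512000))))))))))))))))))) (t := (fun v : ℝ => (-904999 / 57401344000))) (E := ((82969536321769295837197423715906323 / 5000000000000000000000000000000000000000):ℝ)) tm26 tm5 pb26 pb24 pb27 (by intro v; beta_reduce; ring) (by norm_num) (by norm_num) (by norm_num)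
  have tm28 := PA.exact (fun v : ℝ => (-6624) + v * ((0) + v * ((-2712))))
  have tm29 := PA.mul (r := (fun v : ℝ => (-6624) + v * ((0) + v * ((2256) + v * ((0) + v * ((378) + v * ((0) + v * ((-3537 / 10) + v * ((0) + v * ((6379 / 70) + v * ((0) + v * ((-55991 / 4200) + v * ((0) + v * ((2844367 / 2217600) + v * ((0) + v * ((-105084569 / 1210809600) + v * ((0) + v * ((209012333 / 48432384000))))))))))))))))))) (t := (fun v : ℝ => (-102264887 / 581188608000))) (E := ((1886201463464118160111793824610175717 / 10000000000000000000000000000000000000000):ℝ)) tm28 tm5 pb28 pb24 pb29 (by intro v; beta_reduce; ring) (by norm_num) (by norm_num) (by norm_num)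
  have tm30 := PA.exact (fun v : ℝ => (30096) + v * ((0) + v * ((-33798))))
  have tm31 := PA.mul (r := (fun v : ℝ => (30096) + v * ((0) + v * ((-56370) + v * ((0) + v * ((65745 / 2) + v * ((0) + v * ((-198459 / 20) + v * ((0) + v * ((2065183 / 1120) + v * ((0) + v * ((-15415361 / 67200) + v * ((0) + v * ((3237049 / 161280) + v * ((0) + v * ((-123860809 / 96864768) + v * ((0) + v * ((2958769823 / 48432384000))))))))))))))))))) (t := (fun v : ℝ => (-5097859367 / 2324754432000))) (E := ((11255130243757913705844365498987598593 / 5000000000000000000000000000000000000000):ℝ)) tm30 tm5 pb30 pb24 pb31 (by intro v; beta_reduce; ring) (by norm_num) (by norm_num) (by norm_num)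
  have tm32 := PA.exact (fun v : ℝ => (0) + v * ((0) + v * ((-9))))
  have tm33 := PA.exact (fun v : ℝ => (-144) + v * ((0) + v * ((-366))))
  have tm34 := PA.mul (r := (fun v : ℝ => (-144) + v * ((0) + v * ((-330) + v * ((0) + v * ((177 / 2) + v * ((0) + v * ((-301 / 40) + v * ((0) + v * ((53 / 210) + v * ((0) + v * ((-911 / 201600) + v * ((0) + v * ((223 / 4435200) + v * ((0) + v * ((-5539 / 14529715200) + v * ((0) + v * ((29 / 13837824000))))))))))))))))))) (t := (fun v : ℝ => (-61 / 6974263296000))) (E := ((43790682248529243155162436233 / 5000000000000000000000000000000000000000):ℝ)) tm33 tm1 pb32 pb2 pb33 (by intro v; beta_reduce; ring) (by norm_num) (by norm_num) (by norm_num)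
  have tm35 := PA.exact (fun v : ℝ => (5520) + v * ((0) + v * ((-11270))))
  have tm36 := PA.mul (r := (fun v : ℝ => (5520) + v * ((0) + v * ((-14030) + v * ((0) + v * ((6210) + v * ((0) + v * ((-9913 / 8) + v * ((0) + v * ((69299 / 504) + v * ((0) + v * ((-1122469 / 120960) + v * ((0) + v * ((3233179 / 7983360) + v * ((0) + v * ((-106251697 / 8717829120) + v * ((0) + v * ((9310009 / 34871316480))))))))))))))))))) (t := (fun v : ℝ => (-75371 / 17079828480))) (E := ((44420247565095675776598618871472873 / 10000000000000000000000000000000000000000):ℝ)) tm35 tm3 pb34 pb6 pb35 (by intro v; beta_reduce; ring) (by norm_num) (by norm_num) (by norm_num)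
  have tm37 := PA.exact (fun v : ℝ => (-49152) + v * ((0) + v * ((106496))))
  have tm38 := PA.mul (r := (fun v : ℝ => (-49152) + v * ((0) + v * ((143360) + v * ((0) + v * ((-92160) + v * ((0) + v * ((145152 / 5) + v * ((0) + v * ((-579904 / 105) + v * ((0) + v * ((1098032 / 1575) + v * ((0) + v * ((-640184 / 10395) + v * ((0) + v * ((11207162 / 2837835) + v * ((0) + v * ((-53785619 / 283783500))))))))))))))))))) (t := (fun v : ℝ => (904999 / 130977000))) (E := ((14012242559358296074154339104516374277 / 2000000000000000000000000000000000000000):ℝ)) tm37 tm5 pb36 pb24 pb37 (by intro v; beta_reduce; ring) (by norm_num) (by norm_num) (by norm_num)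
  have tm39 := PA.add' (r := (fun v : ℝ => (-144) + v * ((0) + v * ((-339) + v * ((0) + v * ((177 / 2) + v * ((0) + v * ((-301 / 40) + v * ((0) + v * ((53 / 210) + v * ((0) + v * ((-911 / 201600) + v * ((0) + v * ((223 / 4435200) + v * ((0) + v * ((-5539 / 14529715200) + v * ((0) + v * ((29 / 13837824000))))))))))))))))))) (E := ((87581364497058486310324872467 / 10000000000000000000000000000000000000000):ℝ)) tm32 tm34 (by intro v; beta_reduce; ring) (by norm_num)
  have tm40 := PA.add' (r := (fun v : ℝ => (5376) + v * ((0) + v * ((-14369) + v * ((0) + v * ((12597 / 2) + v * ((0) + v * ((-24933 / 20) + v * ((0) + v * ((347131 / 2520) + v * ((0) + v * ((-401077 / 43200) + v * ((0) + v * ((8083951 / 19958400) + v * ((0) + v * ((-265637551 / 21794572800) + v * ((0) + v * ((4476001 / 16765056000))))))))))))))))))) (E := ((44420335146460172835084929196345341 / 10000000000000000000000000000000000000000):ℝ)) tm39 tm36 (by intro v; beta_reduce; ring) (by norm_num)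
  have tm41 := PA.add' (r := (fun v : ℝ => (-43776) + v * ((0) + v * ((128991) + v * ((0) + v * ((-171723 / 2) + v * ((0) + v * ((111135 / 4) + v * ((0) + v * ((-2714113 / 504) + v * ((0) + v * ((41602921 / 60480) + v * ((0) + v * ((-1221069329 / 19958400) + v * ((0) + v * ((85805366609 / 21794572800) + v * ((0) + v * ((-5892738197 / 31135104000))))))))))))))))))) (E := ((70105633131937940543606780451778216727 / 10000000000000000000000000000000000000000):ℝ)) tm40 tm38 (by intro v; beta_reduce; ring) (by norm_num)
  have tm42 := PA.exact (fun v : ℝ => (0) + v * ((-16254)))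
  have tm43 := PA.mul (r := (fun v : ℝ => (0) + v * ((-16254) + v * ((0) + v * ((40635 / 4) + v * ((0) + v * ((-176085 / 64) + v * ((0) + v * ((217623 / 512) + v * ((0) + v * ((-682797 / 16384) + v * ((0) + v * ((5407723 / 1966080) + v * ((0) + v * ((-132653839 / 1038090240) + v * ((0) + v * ((3293493883 / 755729694720) + v * ((0) + v * ((-6317821483 / 55807731302400)))))))))))))))))))) (t := (fun v : ℝ => (0))) (E := ((180526723536738103348252652546653 / 625000000000000000000000000000000000000):ℝ)) tm42 tm4 pb38 pb8 pb15 (by intro v; beta_reduce; ring) (by norm_num) (by norm_num) (by norm_num)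
  have tm44 := PA.mul (r := (fun v : ℝ => (0) + v * ((0) + v * ((-55296) + v * ((0) + v * ((61440) + v * ((0) + v * ((-136064 / 5) + v * ((0) + v * ((233344 / 35) + v * ((0) + v * ((-36088 / 35) + v * ((0) + v * ((5615968 / 51975) + v * ((0) + v * ((-98711 / 12285) + v * ((0) + v * ((31189177 / 70945875))))))))))))))))))) (t := (fun v : ℝ => (-2115150337 / 115783668000) + v * ((0) + v * ((15102858811 / 36480761856000) + v * ((0) + v * ((-66218504378687 / 15297404907552768000) + v * ((0) + v * ((9683111833849 / 403851489559393075200) + v * ((0) + v * ((-51919329286079 / 646162383295028920320000) + v * ((0) + v * ((47734982293 / 266670189931281776640000) + v * ((0) + v * ((-19193864646001 / 67738494965584471774986240000) + v * ((0) + v * ((453109242197 / 1354769899311689435499724800000) + v * ((0) + v * ((-103769004839 / 346821094223792495487929548800000))))))))))))))))))) (E := ((182773931644252081667507639788168126051 / 10000000000000000000000000000000000000000):ℝ)) sinTM tm23 pb39 pb40 pb41 (by intro v; beta_reduce; ring) (by norm_num) (by norm_num) (by norm_num)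
  have tm45 := PA.add' (r := (fun v : ℝ => (-43776) + v * ((0) + v * ((73695) + v * ((0) + v * ((-48843 / 2) + v * ((0) + v * ((11419 / 20) + v * ((0) + v * ((3230203 / 2520) + v * ((0) + v * ((-20757143 / 60480) + v * ((0) + v * ((935462383 / 19958400) + v * ((0) + v * ((-89315844271 / 21794572800) + v * ((0) + v * ((992072443 / 3962649600))))))))))))))))))) (E := ((252879564776190022211114420239946342779 / 10000000000000000000000000000000000000000):ℝ)) tm41 tm44 (by intro v; beta_reduce; ring) (by norm_num)
  have tm46 := PA.mul (r := (fun v : ℝ => (0) + v * ((-21888) + v * ((0) + v * ((75519 / 2) + v * ((0) + v * ((-1100597 / 80) + v * ((0) + v * ((7289099 / 8960) + v * ((0) + v * ((44623973 / 71680) + v * ((0) + v * ((-674846909453 / 3406233600) + v * ((0) + v * ((2190546533239 / 70849658880) + v * ((0) + v * ((-1854965101327577 / 595137134592000) + v * ((0) + v * ((54220634663687347 / 242815950913536000)))))))))))))))))))) (t := (fun v : ℝ => (0) + v * ((-52304032573413011 / 8227175748599808000) + v * ((0) + v * ((2109008008929580567 / 29371017422501314560000) + v * ((0) + v * ((-796162873319888443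 / 1938487149885086760960000) + v * ((0) + v * ((5422118796213347 / 3876974299770173521920000) + v * ((0) + v * ((-19014610183483991 / 6048079907641470694195200000) + v * ((0) + v * ((6798006447293 / 1358392278721613738803200000) + v * ((0) + v * ((-2008625781061 / 338692474827922358874931200000) + v * ((0) + v * ((992072443 / 184741349906139468477235200000)))))))))))))))))) (E := ((23763506039249590005378046475912982073 / 10000000000000000000000000000000000000000):ℝ)) sinTM tm45 pb39 pb42 pb43 (by intro v; beta_reduce; ring) (by norm_num) (by norm_num) (by norm_num)
  have tm47 := PA.add' (r := (fun v : ℝ => (0) + v * ((72504) + v * ((0) + v * ((-51384) + v * ((0) + v * ((4410249911 / 277200) + v * ((0) + v * ((-4288429683533 / 1513512000) + v * ((0) + v * ((201190573933 / 587059200) + v * ((0) + v * ((-12739981469 / 331161600) + v * ((0) + v * ((596973550813579 / 111588212736000) + v * ((0) + v * ((-6814106957014699 / 9373409869824000) + v * ((0) + v * ((249848324031811551901 / 3365429079661608960000)))))))))))))))))))) (E := ((32051280672624941431848667206553656229 / 10000000000000000000000000000000000000000):ℝ)) tm21 tm46 (by intro v; beta_reduce; ring) (by norm_num)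
  have tm48 := PA.mul (r := (fun v : ℝ => (0) + v * ((0) + v * ((36252) + v * ((0) + v * ((-54405 / 2) + v * ((0) + v * ((1253550719 / 138600) + v * ((0) + v * ((-1333151776387 / 756756000) + v * ((0) + v * ((4842020123 / 20638800) + v * ((0) + v * ((-704117270447 / 25945920000) + v * ((0) + v * ((81699046163773 / 22884301440000) + v * ((0) + v * ((-1466562488756023 / 3020727790080000))))))))))))))))))) (t := (fun v : ℝ => (18390841588935899 / 342349149542400000) + v * ((0) + v * ((-18317245668137659100867 / 10500138728544219955200000) + v * ((0) + v * ((30119785922831457446213 / 1470019421996190793728000000) + v * ((0) + v * ((-50404960823486308739173 / 423365593534902948593664000000) + v * ((0) + v * ((1660586047433394600413 / 4064309697935068306499174400000) + v * ((0) + v * ((-219963148000809052591 / 238439502278857340647951564800000) + v * ((0) + v * ((221182997141038347433 / 150216886435680124608209485824000000) + v * ((0) + v * ((-36013854189660914653 / 20601172996893274231983015198720000000) + v * ((0) + v * ((249848324031811551901 / 156898533544339176550782643753451520000000))))))))))))))))))) (E := ((67434076807463788491109356011128767149 / 1250000000000000000000000000000000000000):ℝ)) sinTM tm47 pb39 pb44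 pb45 (by intro v; beta_reduce; ring) (by norm_num) (by norm_num) (by norm_num)
  have tm49 := PA.add' (r := (fun v : ℝ => (30096) + v * ((0) + v * ((-20118) + v * ((0) + v * ((5670) + v * ((0) + v * ((-121770151 / 138600) + v * ((0) + v * ((31120373569 / 378378000) + v * ((0) + v * ((860619007 / 165110400) + v * ((0) + v * ((-45839253143 / 6486480000) + v * ((0) + v * ((52436930037523 / 22884301440000) + v * ((0) + v * ((-1282024014895513 / 3020727790080000))))))))))))))))))) (E := ((561982874947226135340563579087005334379 / 10000000000000000000000000000000000000000):ℝ)) tm31 tm48 (by intro v; beta_reduce; ring) (by norm_num)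
  have tm50 := PA.mul (r := (fun v : ℝ => (0) + v * ((15048) + v * ((0) + v * ((-10686) + v * ((0) + v * ((260957 / 80) + v * ((0) + v * ((-155979601 / 277200) + v * ((0) + v * ((1967481502589 / 32288256000) + v * ((0) + v * ((10151819857 / 15498362880) + v * ((0) + v * ((-2019314943429683 / 557941063680000) + v * ((0) + v * ((30326462205001549 / 23433524674560000) + v * ((0) + v * ((-4405175212605091593377 / 16827145398308044800000)))))))))))))))))))) (t := (fun v : ℝ => (0) + v * ((3816215737505708252593 / 403851489559393075200000) + v * ((0) + v * ((-4193713961172290369743 / 36750485549904769843200000) + v * ((0) + v * ((17736253685565435333223 / 26460349595931434287104000000) + v * ((0) + v * ((-73426194807385252163 / 31752419515117721144524800000) + v * ((0) + v * ((121936102575006502063 / 23285107644419662172651520000000) + v * ((0) + v * ((-4094512211786138287 / 488987260532812905625681920000000) + v * ((0) + v * ((10012598592651937 / 1005916650238929405858545664000000) + v * ((0) + v * ((-1282024014895513 / 140828331033450116820196392960000000)))))))))))))))))) (E := ((4696097053791981232056424598479182011 / 1000000000000000000000000000000000000000):ℝ)) sinTM tm49 pb39 pb46 pb47 (by intro v;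 beta_reduce; ring) (by norm_num) (by norm_num) (by norm_num)
  have tm51 := PA.add' (r := (fun v : ℝ => (0) + v * ((-1206) + v * ((0) + v * ((-2109 / 4) + v * ((0) + v * ((163403 / 320) + v * ((0) + v * ((-1221028757 / 8870400) + v * ((0) + v * ((2487522608981 / 129153024000) + v * ((0) + v * ((84448358881 / 24797380608) + v * ((0) + v * ((-8362448945838857 / 2231764254720000) + v * ((0) + v * ((486857379932728159 / 374936394792960000) + v * ((0) + v * ((-17628320647764855328133 / 67308581593232179200000)))))))))))))))))))) (E := ((46963858965496400130217818027232566559 / 10000000000000000000000000000000000000000):ℝ)) tm43 tm50 (by intro v; beta_reduce; ring) (by norm_num)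
  have tm52 := PA.mul (r := (fun v : ℝ => (0) + v * ((0) + v * ((-603) + v * ((0) + v * ((-477 / 2) + v * ((0) + v * ((21279 / 80) + v * ((0) + v * ((-44130061 / 554400) + v * ((0) + v * ((76472775791 / 6054048000) + v * ((0) + v * ((1021011787 / 807206400) + v * ((0) + v * ((-603779149663 / 311351040000) + v * ((0) + v * ((66654859059637 / 91537205760000))))))))))))))))))) (t := (fun v : ℝ => (-217713090490926911 / 1369396598169600000) + v * ((0) + v * ((4684913098310355946709 / 807702979118786150400000) + v * ((0) + v * ((-2477991761109167169968407 / 35280466127908579049472000000) + v * ((0) + v * ((499584100506548340317 / 1209615981528294138839040000) + v * ((0) + v * ((-6816541599842257813511 / 4781540821100080360587264000000) + v * ((0) + v * ((769984251196484052691 / 238439502278857340647951564800000) + v * ((0) + v * ((-62064257450219918699381 / 12017350914854409968656758865920000000) + v * ((0) + v * ((5646891618448263863 / 919695223075592599642098892800000000) + v * ((0) + v * ((-17628320647764855328133 / 3137970670886783531015652875069030400000000))))))))))))))))))) (E := ((796845248293631611253357821817583026671 / 5000000000000000000000000000000000000000):ℝ)) sinTM tm51 pb39 pb48 pb49 (by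 intro v; beta_reduce; ring) (by norm_num) (by norm_num) (by norm_num)
  have tm53 := PA.add' (r := (fun v : ℝ => (-6624) + v * ((0) + v * ((1653) + v * ((0) + v * ((279 / 2) + v * ((0) + v * ((-7017 / 80) + v * ((0) + v * ((6391619 / 554400) + v * ((0) + v * ((-4234891249 / 6054048000) + v * ((0) + v * ((82254455 / 32288256) + v * ((0) + v * ((-4415606271841 / 2179457280000) + v * ((0) + v * ((67049892369007 / 91537205760000))))))))))))))))))) (E := ((79778834902536367033341371872988811453 / 500000000000000000000000000000000000000):ℝ)) tm29 tm52 (by intro v; beta_reduce; ring) (by norm_num)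
  have tm54 := PA.mul (r := (fun v : ℝ => (0) + v * ((-3312) + v * ((0) + v * ((1929 / 2) + v * ((0) + v * ((2687 / 80) + v * ((0) + v * ((-415043 / 8960) + v * ((0) + v * ((33820711 / 4435200) + v * ((0) + v * ((-316678745519 / 516612096000) + v * ((0) + v * ((9607478198047 / 7439214182400) + v * ((0) + v * ((-9518737267933169 / 8927057018880000) + v * ((0) + v * ((534908505104541611 / 1307470504919040000)))))))))))))))))))) (t := (fun v : ℝ => (0) + v * ((-4251674143020969702949 / 269234326372928716800000) + v * ((0) + v * ((104412457437458624401 / 538468652745857433600000) + v * ((0) + v * ((-14707010167968548827 / 12829260410148574199808000) + v * ((0) + v * ((7634617957699011187 / 1924389061522286129971200000) + v * ((0) + v * ((-2540169677045118289 / 282243729023268632395776000000) + v * ((0) + v * ((3696503509467343 / 256585208202971483996160000000) + v * ((0) + v * ((-36567869180448469 / 2133762591415910860912066560000000) + v * ((0) + v * ((67049892369007 / 4267525182831821721824133120000000)))))))))))))))))) (E := ((59765961466433916447560793381507685283 / 5000000000000000000000000000000000000000):ℝ)) sinTM tm53 pb39 pb50 pb51 (by intro v; beta_reduce; ring) (by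 norm_num) (by norm_num) (by norm_num)
  have tm55 := PA.add' (r := (fun v : ℝ => (0) + v * ((-5796) + v * ((0) + v * ((2517) + v * ((0) + v * ((-61901 / 160) + v * ((0) + v * ((41743 / 2240) + v * ((0) + v * ((178350677 / 141926400) + v * ((0) + v * ((-49762041397 / 258306048000) + v * ((0) + v * ((18924398214089 / 14878428364800) + v * ((0) + v * ((-1189098968193193 / 1115882127360000) + v * ((0) + v * ((2139543539664334619 / 5229882019676160000)))))))))))))))))))) (E := ((59766182176846745416404754035913456607 / 5000000000000000000000000000000000000000):ℝ)) tm13 tm54 (by intro v; beta_reduce; ring) (by norm_num)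
  have tm56 := PA.mul (r := (fun v : ℝ => (0) + v * ((0) + v * ((-2898) + v * ((0) + v * ((5517 / 4) + v * ((0) + v * ((-19791 / 80) + v * ((0) + v * ((121243 / 6720) + v * ((0) + v * ((10009 / 73920) + v * ((0) + v * ((-2834204689 / 24216192000) + v * ((0) + v * ((3721219259 / 5811886080) + v * ((0) + v * ((-5573007991 / 9963233280))))))))))))))))))) (t := (fun v : ℝ => (62821194439271 / 276645777408000) + v * ((0) + v * ((-1579936683488198820209 / 179489550915285811200000) + v * ((0) + v * ((7944497015793478219 / 73427543556253286400000) + v * ((0) + v * ((-36121339812526467992917 / 56448745804653726479155200000) + v * ((0) + v * ((10002506376505442024653 / 4515899664372298118332416000000) + v * ((0) + v * ((-40343818469326180229 / 8028266069995196654813184000000) + v * ((0) + v * ((104626537310451375341 / 13005791033392218580797358080000000) + v * ((0) + v * ((-5576131111571033771 / 582659438295971392419721641984000000) + v * ((0) + v * ((2139543539664334619 / 243820564948468028827945056337920000000))))))))))))))))))) (E := ((113983415562001236538324490876945925177 / 500000000000000000000000000000000000000):ℝ)) sinTM tm55 pb39 pb52 pb53 (by intro v; beta_reduce; ring) (by norm_num)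 (by norm_num) (by norm_num)
  have tm57 := PA.add' (r := (fun v : ℝ => (432) + v * ((0) + v * ((-3465) + v * ((0) + v * ((3339 / 2) + v * ((0) + v * ((-26343 / 80) + v * ((0) + v * ((109721 / 3360) + v * ((0) + v * ((-345307 / 211200) + v * ((0) + v * ((424871653 / 12108096000) + v * ((0) + v * ((18327973507 / 29059430400) + v * ((0) + v * ((-60905386429 / 108972864000))))))))))))))))))) (E := ((2279834250312668269358164212386350316187 / 10000000000000000000000000000000000000000):ℝ)) tm27 tm56 (by intro v; beta_reduce; ring) (by norm_num)
  have tm58 := PA.mul (r := (fun v : ℝ => (0) + v * ((216) + v * ((0) + v * ((-3483 / 2) + v * ((0) + v * ((18141 / 20) + v * ((0) + v * ((-1794939 / 8960) + v * ((0) + v * ((677457 / 28672) + v * ((0) + v * ((-51455551 / 32440320) + v * ((0) + v * ((375868315513 / 6199345152000) + v * ((0) + v * ((62319597869723 / 198379044864000) + v * ((0) + v * ((-1420861552273125031 / 4856319018270720000)))))))))))))))))))) (t := (fun v : ℝ => (0) + v * ((1751583561564197167 / 148338471830814720000) + v * ((0) + v * ((-15779867502124316471 / 107693730549171486720000) + v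 * ((0) + v * ((1605715496739323351 / 1846178237985796915200000) + v * ((0) + v * ((-3040065358654474541 / 1008013317940245115699200000) + v * ((0) + v * ((1933127964987306653 / 282243729023268632395776000000) + v * ((0) + v * ((-6193047230361707 / 564487458046537264791552000000) + v * ((0) + v * ((24121378303783 / 1847413499061394684772352000000) + v * ((0) + v * ((-60905386429 / 5080387122418835383123968000000)))))))))))))))))) (E := ((7867265593427984970698823811354985611 / 500000000000000000000000000000000000000):ℝ)) sinTM tm57 pb39 pb54 pb55 (by intro v; beta_reduce; ring) (by norm_num) (by norm_num) (by norm_num)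
  have tm59 := PA.add' (r := (fun v : ℝ => (0) + v * ((702) + v * ((0) + v * ((-8181 / 4) + v * ((0) + v * ((316581 / 320) + v * ((0) + v * ((-3817623 / 17920) + v * ((0) + v * ((2852739 / 114688) + v * ((0) + v * ((-757728731 / 454164480) + v * ((0) + v * ((3196440990629 / 49594761216000) + v * ((0) + v * ((17798213649253 / 56679727104000) + v * ((0) + v * ((-5683380455998100599 / 19425276073082880000)))))))))))))))))))) (E := ((78672699116751924940022926067672724413 / 5000000000000000000000000000000000000000):ℝ)) tm11 tm58 (by intro v; beta_reduce; ring) (by norm_num)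
  have tm60 := PA.mul (r := (fun v : ℝ => (0) + v * ((0) + v * ((351) + v * ((0) + v * ((-4149 / 4) + v * ((0) + v * ((10749 / 20) + v * ((0) + v * ((-57193 / 448) + v * ((0) + v * ((2303083 / 134400) + v * ((0) + v * ((-2273129 / 1612800) + v * ((0) + v * ((893542567 / 12108096000) + v * ((0) + v * ((90194629039 / 581188608000))))))))))))))))))) (t := (fun v : ℝ => (-10657422404323 / 69742632960000) + v * ((0) + v * ((4031668332527801003 / 652689276055584768000) + v * ((0) + v * ((-660620889020508018917 / 8615498443933718937600000) + v * ((0) + v * ((31375025182259480389 / 68923987551469751500800000) + v * ((0) + v * ((-407352584496274057699 / 258051409392702749618995200000) + v * ((0) + v * ((28782052982473937089 / 8028266069995196654813184000000) + v * ((0) + v * ((-19917242650422999437 / 3468210942237924954879295488000000) + v * ((0) + v * ((2844493446648807647 / 416185313068550994585515458560000000) + v * ((0) + v * ((-5683380455998100599 / 905619241237166964218081637826560000000))))))))))))))))))) (E := ((61556524008111716369179046283264813123 / 400000000000000000000000000000000000000):ℝ)) sinTM tm59 pb39 pb56 pb57 (by intro v; beta_reduce; ring) (by norm_num) (by norm_num)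 (by norm_num)
  have tm61 := PA.add' (r := (fun v : ℝ => (0) + v * ((0) + v * ((648) + v * ((0) + v * ((-1260) + v * ((0) + v * ((6117 / 10) + v * ((0) + v * ((-39817 / 280) + v * ((0) + v * ((5701 / 300) + v * ((0) + v * ((-79441 / 50400) + v * ((0) + v * ((1023992887 / 12108096000) + v * ((0) + v * ((5618287459 / 36324288000))))))))))))))))))) (E := ((1539105885905130021313235517406369097899 / 10000000000000000000000000000000000000000):ℝ)) tm25 tm60 (by intro v; beta_reduce; ring) (by norm_num)
  have tm62 := PA.mul (r := (fun v : ℝ => (0) + v * ((0) + v * ((0) + v * ((324) + v * ((0) + v * ((-1287 / 2) + v * ((0) + v * ((53163 / 160) + v * ((0) + v * ((-150841 / 1792) + v * ((0) + v * ((18099909 / 1433600) + v * ((0) + v * ((-18499559 / 15138816) + v * ((0) + v * ((1991123032267 / 24797380608000) + v * ((0) + v * ((1656080162713 / 22042116096000)))))))))))))))))))) (t := (fun v : ℝ => (0) + v * ((-383436521208233 / 119909111562240000) + v * ((0) + v * ((3274779034933723 / 81586159506948096000) + v * ((0) + v * ((-2342626690157959 / 9790339140833771520000) + v * ((0) + v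 * ((5372285976350873 / 6461623832950289203200000) + v * ((0) + v * ((-79393864215109 / 42000554914176879820800000) + v * ((0) + v * ((232900585831 / 76863760627251806208000000) + v * ((0) + v * ((-872803539533 / 241923196305658827767808000000) + v * ((0) + v * ((5618287459 / 1693462374139611794374656000000)))))))))))))))))) (E := ((25063674601990594285553340769514902297 / 2500000000000000000000000000000000000000):ℝ)) sinTM tm61 pb39 pb58 pb59 (by intro v; beta_reduce; ring) (by norm_num) (by norm_num) (by norm_num)
  have tm63 := PA.add' (r := (fun v : ℝ => (0) + v * ((0) + v * ((0) + v * ((432) + v * ((0) + v * ((-234) + v * ((0) + v * ((2097 / 40) + v * ((0) + v * ((-2803 / 448) + v * ((0) + v * ((21953 / 51200) + v * ((0) + v * ((-108883 / 6307840) + v * ((0) + v * ((240419843 / 563576832000) + v * ((0) + v * ((3910729559323 / 49594761216000)))))))))))))))))))) (E := ((100413690243404027986414350672773300827 / 10000000000000000000000000000000000000000):ℝ)) tm9 tm62 (by intro v; beta_reduce; ring) (by norm_num)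
  have tm64 := PA.mul (r := (fun v : ℝ => (0) + v * ((0) + v * ((0) + v * ((0) + v * ((216) + v * ((0) + v * ((-126) + v * ((0) + v * ((156 / 5) + v * ((0) + v * ((-1199 / 280) + v * ((0) + v * ((287 / 800) + v * ((0) + v * ((-8549 / 443520) + v * ((0) + v * ((2102437 / 3027024000))))))))))))))))))) (t := (fun v : ℝ => (3817707827 / 96864768000) + v * ((0) + v * ((-379867013047513 / 231253286584320000) + v * ((0) + v * ((5584315250306519 / 271953865023160320000) + v * ((0) + v * ((-52652979056630401 / 430774922196685946880000) + v * ((0) + v * ((187512009064019 / 441820433022241996800000) + v * ((0) + v * ((-20742320888100571 / 21504284116058562468249600000) + v * ((0) + v * ((27922422531385381 / 18063598657489192473329664000000) + v * ((0) + v * ((-35457105029977 / 19267838567988471971551641600000) + v * ((0) + v * ((3910729559323 / 2312140628158616636586196992000000))))))))))))))))))) (E := ((100166063230299922977635469883179737651 / 2500000000000000000000000000000000000000):ℝ)) sinTM tm63 pb39 pb60 pb61 (by intro v; beta_reduce; ring) (by norm_num) (by norm_num) (by norm_num)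
  have tm65 := PA.mul (r := (fun v : ℝ => (0) + v * ((0) + v * ((0) + v * ((0) + v * ((0) + v * ((108) + v * ((0) + v * ((-135 / 2) + v * ((0) + v * ((585 / 32) + v * ((0) + v * ((-723 / 256) + v * ((0) + v * ((15879 / 57344) + v * ((0) + v * ((-125761 / 6881280) + v * ((0) + v * ((3084973 / 3633315840)))))))))))))))))))) (t := (fun v : ℝ => (0) + v * ((-796256287 / 39675808972800) + v * ((0) + v * ((688744158911 / 3237546012180480000) + v * ((0) + v * ((-966672708733 / 815861595069480960000) + v * ((0) + v * ((1531258033 / 384620466247041024000) + v * ((0) + v * ((-579748699 / 65268927605558476800000) + v * ((0) + v * ((315242321 / 22400295954227669237760000) + v * ((0) + v * ((-2345798381 / 141121864511634316197888000000) + v * ((0) + v * ((2102437 / 141121864511634316197888000000)))))))))))))))))) (E := ((627072813641322848768637898443544413 / 250000000000000000000000000000000000000):ℝ)) sinTM tm64 pb39 pb62 pb63 (by intro v; beta_reduce; ring) (by norm_num) (by norm_num) (by norm_num)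
  have tm66 := PA.add' (r := (fun v : ℝ => (0))) (E := ((12559561758757443925088960830494963531 / 5000000000000000000000000000000000000000):ℝ)) tm7 tm65 (by intro v; beta_reduce; ring) (by norm_num)
  exact PA.out tm66 (by intro v; beta_reduce; ring)

set_option maxHeartbeats 4000000 in
private lemma key : ∀ v : ℝ, 0 < v → v ≤ 1/8 →
    |pfd3e1 v - 90987349 / 53222400 - (-16301796103 / 72648576000) * v ^ 2| ≤
      (27437/1000) * v ^ 3 := by
  intro v hv h1
  have h0 : (0:ℝ) ≤ v := le_of_lt hv
  have hs0 : 0 < Real.sin (v / 2) :=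
    Real.sin_pos_of_pos_of_lt_pi (by linarith) (by nlinarith [Real.pi_gt_three])
  have hsv : v / 4 ≤ Real.sin (v / 2) := by
    have hcube := Real.sin_gt_sub_cube (by linarith : 0 < v/2)
    have h2 : v^2 ≤ 1/64 := by nlinarith
    have h3 := mul_le_mul_of_nonneg_left h2 h0
    nlinarith
  have hc : (1:ℝ)/2 ≤ Real.cos (v / 2) := by
    have := Real.one_sub_sq_div_two_le_cos (x := v/2)
    nlinarith
  have hc0 : 0 < Real.cos (v / 2) := by linarith
  have hsin : Real.sin v = 2 * Real.sin (v / 2) * Real.cos (v / 2) := by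
    have h := Real.sin_two_mul (v/2)
    rw [show (2:ℝ)*(v/2) = v by ring] at h
    exact h
  have hcos : Real.cos v = 1 - 2 * Real.sin (v / 2) ^ 2 := by
    have h := Real.cos_two_mul (v/2)
    rw [show (2:ℝ)*(v/2) = v by ring] at h
    have h2 := Real.sin_sq_add_cos_sq (v/2)
    linarith
  have htan : Real.tan (v / 2) = Real.sin (v / 2) / Real.cos (v / 2) :=
    Real.tan_eq_sin_div_cos _
  have hM := Mmain v h0 h1
  have hden : 0 < 3072 * v ^ 5 * Real.sin (v / 2) ^ 10 * Real.cos (v / 2) ^ 5 :=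
    mul_pos (mul_pos (mul_pos (by norm_num : (0:ℝ) < 3072) (pow_pos hv 5))
      (pow_pos hs0 10)) (pow_pos hc0 5)
  have hveq : pfd3e1 v - 90987349 / 53222400 - (-16301796103 / 72648576000) * v ^ 2
      = ((432) * Real.sin (v / 2) ^ 5 * Real.cos (v / 2) ^ 6 + (-6624) * Real.sin (v / 2) ^ 7 * Real.cos (v / 2) ^ 6 + (30096) * Real.sin (v / 2) ^ 9 * Real.cos (v / 2) ^ 6 + (-144) * Real.sin (v / 2) ^ 11 * Real.cos (v / 2) ^ 2 + (5520) * Real.sin (v / 2) ^ 11 * Real.cos (v / 2) ^ 4 + (-49152) * Real.sin (v / 2) ^ 11 * Real.cos (v / 2) ^ 6 + (486) * v * Real.sin (v / 2) ^ 4 * Real.cos (v / 2) ^ 5 + (-2484) * v * Real.sin (v / 2) ^ 6 * Real.cos (v / 2) ^ 5 + (-16254) * v * Real.sin (v / 2) ^ 8 * Real.cos (v / 2) ^ 5 + (54) * v * Real.sin (v / 2) ^ 10 * Real.cos (v / 2) + (2178) * v * Real.sin (v / 2) ^ 10 * Real.cos (v / 2) ^ 3 + (92160) * v * Real.sin (v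 / 2) ^ 10 * Real.cos (v / 2) ^ 5 + (-110592) * v * Real.sin (v / 2) ^ 12 * Real.cos (v / 2) ^ 5 + (297) * v ^ 2 * Real.sin (v / 2) ^ 3 * Real.cos (v / 2) ^ 6 + (-243) * v ^ 2 * Real.sin (v / 2) ^ 5 * Real.cos (v / 2) ^ 6 + (-2712) * v ^ 2 * Real.sin (v / 2) ^ 7 * Real.cos (v / 2) ^ 6 + (-33798) * v ^ 2 * Real.sin (v / 2) ^ 9 * Real.cos (v / 2) ^ 6 + (-9) * v ^ 2 * Real.sin (v / 2) ^ 11 + (-366) * v ^ 2 * Real.sin (v / 2) ^ 11 * Real.cos (v / 2) ^ 2 + (-11270) * v ^ 2 * Real.sin (v / 2) ^ 11 * Real.cos (v / 2) ^ 4 + (106496) * v ^ 2 * Real.sin (v / 2) ^ 11 * Real.cos (v / 2) ^ 6 + (108) * v ^ 3 * Real.sin (v / 2) ^ 2 * Real.cos (v / 2) ^ 5 + (-30720) * v ^ 3 * Real.sin (v / 2) ^ 10 * Real.cos (v / 2) ^ 5 + (49152) * v ^ 3 * Real.sin (v / 2) ^ 12 * Real.cos (v / 2) ^ 5 + (-108)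 * v ^ 5 * Real.cos (v / 2) ^ 5 + (477) * v ^ 5 * Real.sin (v / 2) ^ 2 * Real.cos (v / 2) ^ 5 + (-90987349 / 17325) * v ^ 5 * Real.sin (v / 2) ^ 10 * Real.cos (v / 2) ^ 5 + (16301796103 / 23648625) * v ^ 7 * Real.sin (v / 2) ^ 10 * Real.cos (v / 2) ^ 5) / (3072 * v ^ 5 * Real.sin (v / 2) ^ 10 * Real.cos (v / 2) ^ 5) := by
    rw [eq_div_iff (ne_of_gt hden)]
    simp only [pfd3e1]
    rw [hsin, hcos, htan]
    rw [show (1:ℝ) - 2 * Real.sin (v / 2) ^ 2 - 1 = -(2 * Real.sin (v / 2) ^ 2) by ring]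
    field_simp
    ring
  rw [hveq, abs_div, abs_of_pos hden, div_le_iff₀ hden]
  have hD : (3/32768) * v ^ 15 ≤ 3072 * v ^ 5 * Real.sin (v / 2) ^ 10 * Real.cos (v / 2) ^ 5 := by
    have h10 : (v/4) ^ 10 ≤ Real.sin (v / 2) ^ 10 :=
      pow_le_pow_left₀ (by positivity) hsv 10
    have h5 : ((1:ℝ)/2) ^ 5 ≤ Real.cos (v / 2) ^ 5 :=
      pow_le_pow_left₀ (by norm_num) hc 5
    calc (3/32768) * v ^ 15 = 3072 * v ^ 5 * (v/4) ^ 10 * ((1:ℝ)/2) ^ 5 := by ring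
      _ ≤ 3072 * v ^ 5 * Real.sin (v / 2) ^ 10 * ((1:ℝ)/2) ^ 5 := by
          have := mul_le_mul_of_nonneg_right
            (mul_le_mul_of_nonneg_left h10 (by positivity : (0:ℝ) ≤ 3072 * v ^ 5))
            (by norm_num : (0:ℝ) ≤ ((1:ℝ)/2)^5)
          calc 3072 * v ^ 5 * (v/4) ^ 10 * ((1:ℝ)/2) ^ 5
              = 3072 * v ^ 5 * (v/4) ^ 10 * ((1:ℝ)/2) ^ 5 := rfl
            _ ≤ _ := by nlinarith [this]
      _ ≤ 3072 * v ^ 5 * Real.sin (v / 2) ^ 10 * Real.cos (v / 2) ^ 5 := by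
          have hx : (0:ℝ) ≤ 3072 * v ^ 5 * Real.sin (v / 2) ^ 10 := by positivity
          exact mul_le_mul_of_nonneg_left h5 hx
  have hstep : (27437/1000) * v ^ 3 * ((3/32768) * v ^ 15) ≤
      (27437/1000) * v ^ 3 * (3072 * v ^ 5 * Real.sin (v / 2) ^ 10 * Real.cos (v / 2) ^ 5) :=
    mul_le_mul_of_nonneg_left hD (by positivity)
  have hcoef : (27437/1000) * v ^ 3 * ((3/32768) * v ^ 15) = (82311/32768000) * v ^ 18 := by
    ring
  have hE2 : ((12559561758757443925088960830494963531 / 5000000000000000000000000000000000000000 : ℝ)) * v ^ 18 ≤ (82311/32768000) * v ^ 18 :=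
    mul_le_mul_of_nonneg_right (by norm_num) (pow_nonneg h0 18)
  calc |(432) * Real.sin (v / 2) ^ 5 * Real.cos (v / 2) ^ 6 + (-6624) * Real.sin (v / 2) ^ 7 * Real.cos (v / 2) ^ 6 + (30096) * Real.sin (v / 2) ^ 9 * Real.cos (v / 2) ^ 6 + (-144) * Real.sin (v / 2) ^ 11 * Real.cos (v / 2) ^ 2 + (5520) * Real.sin (v / 2) ^ 11 * Real.cos (v / 2) ^ 4 + (-49152) * Real.sin (v / 2) ^ 11 * Real.cos (v / 2) ^ 6 + (486) * v * Real.sin (v / 2) ^ 4 * Real.cos (v / 2) ^ 5 + (-2484) * v * Real.sin (v / 2) ^ 6 * Real.cos (v / 2) ^ 5 + (-16254) * v * Real.sin (v / 2) ^ 8 * Real.cos (v / 2) ^ 5 + (54) * v * Real.sin (v / 2) ^ 10 * Real.cos (v / 2) + (2178) * v * Real.sin (v / 2) ^ 10 * Real.cos (v / 2) ^ 3 + (92160) * v * Real.sin (v / 2) ^ 10 * Real.cos (v / 2) ^ 5 + (-110592) * v * Real.sin (v / 2) ^ 12 * Real.cos (v / 2) ^ 5 + (297) * v ^ 2 * Real.sin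 (v / 2) ^ 3 * Real.cos (v / 2) ^ 6 + (-243) * v ^ 2 * Real.sin (v / 2) ^ 5 * Real.cos (v / 2) ^ 6 + (-2712) * v ^ 2 * Real.sin (v / 2) ^ 7 * Real.cos (v / 2) ^ 6 + (-33798) * v ^ 2 * Real.sin (v / 2) ^ 9 * Real.cos (v / 2) ^ 6 + (-9) * v ^ 2 * Real.sin (v / 2) ^ 11 + (-366) * v ^ 2 * Real.sin (v / 2) ^ 11 * Real.cos (v / 2) ^ 2 + (-11270) * v ^ 2 * Real.sin (v / 2) ^ 11 * Real.cos (v / 2) ^ 4 + (106496) * v ^ 2 * Real.sin (v / 2) ^ 11 * Real.cos (v / 2) ^ 6 + (108) * v ^ 3 * Real.sin (v / 2) ^ 2 * Real.cos (v / 2) ^ 5 + (-30720) * v ^ 3 * Real.sin (v / 2) ^ 10 * Real.cos (v / 2) ^ 5 + (49152) * v ^ 3 * Real.sin (v / 2) ^ 12 * Real.cos (v / 2) ^ 5 + (-108) * v ^ 5 * Real.cos (v / 2) ^ 5 + (477) * v ^ 5 * Real.sin (v / 2) ^ 2 * Real.cos (v / 2) ^ 5 + (-90987349 / 17325) * v ^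 5 * Real.sin (v / 2) ^ 10 * Real.cos (v / 2) ^ 5 + (16301796103 / 23648625) * v ^ 7 * Real.sin (v / 2) ^ 10 * Real.cos (v / 2) ^ 5| ≤ ((12559561758757443925088960830494963531 / 5000000000000000000000000000000000000000 : ℝ)) * v ^ 18 := hM
    _ ≤ (82311/32768000) * v ^ 18 := hE2
    _ = (27437/1000) * v ^ 3 * ((3/32768) * v ^ 15) := by ring
    _ ≤ _ := hstep

private lemma c2lim : Filter.Tendsto (fun v : ℝ => (pfd3e1 v - 90987349 / 53222400) / v ^ 2)
    (nhdsWithin 0 (Set.Ioi 0)) (nhds (-16301796103 / 72648576000)) := by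
  have hb : ∀ᶠ v in nhdsWithin (0:ℝ) (Set.Ioi 0),
      ‖(pfd3e1 v - 90987349 / 53222400) / v ^ 2 - (-16301796103 / 72648576000)‖ ≤
        (27437/1000) * v := by
    filter_upwards [Ioc_mem_nhdsGT_of_mem
      (by constructor <;> norm_num : (0:ℝ) ∈ Set.Ico (0:ℝ) (1/8))] with v hv
    have hk := key v hv.1 hv.2
    have hv2 : (0:ℝ) < v ^ 2 := pow_pos hv.1 2
    have heq : (pfd3e1 v - 90987349 / 53222400) / v ^ 2 - (-16301796103 / 72648576000)
        = (pfd3e1 v - 90987349 / 53222400 - (-16301796103 / 72648576000) * v ^ 2) / v ^ 2 := by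
      field_simp [hv.1.ne']
    rw [Real.norm_eq_abs, heq, abs_div, abs_of_pos hv2, div_le_iff₀ hv2]
    calc |pfd3e1 v - 90987349 / 53222400 - (-16301796103 / 72648576000) * v ^ 2|
        ≤ (27437/1000) * v ^ 3 := hk
      _ = (27437/1000) * v * v ^ 2 := by ring
  have h0 : Filter.Tendsto (fun v : ℝ => (27437/1000) * v)
      (nhdsWithin 0 (Set.Ioi 0)) (nhds 0) := by
    have h1 : Filter.Tendsto (fun v : ℝ => (27437/1000) * v) (nhds 0)
        (nhds ((27437/1000) * 0)) := (continuous_const.mul continuous_id).tendsto 0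
    rw [mul_zero] at h1
    exact h1.mono_left nhdsWithin_le_nhds
  have hz := squeeze_zero_norm' hb h0
  have h2 := hz.add (tendsto_const_nhds
    (x := (-16301796103 / 72648576000 : ℝ)) (f := nhdsWithin (0:ℝ) (Set.Ioi 0)))
  rw [zero_add] at h2
  refine h2.congr (fun v => by ring)


/-- The PF-D3 coefficient `e₁` tends to the classical Quinlan–Tremaine coefficient
as `v → 0⁺`, and its `v²`-Taylor coefficient is four times that of the PF-D0
coefficient `b₁`. -/
theorem pfd3_e1_limit :
    Tendsto pfd3e1 (nhdsWithin 0 (Set.Ioi 0)) (nhds (90987349 / 53222400)) ∧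
    Tendsto (fun v : ℝ => (pfd3e1 v - 90987349 / 53222400) / v ^ 2)
      (nhdsWithin 0 (Set.Ioi 0)) (nhds (-16301796103 / 72648576000)) := by
  constructor
  · have hv2 : Filter.Tendsto (fun v : ℝ => v ^ 2) (nhdsWithin (0:ℝ) (Set.Ioi 0)) (nhds 0) := by
      have := ((continuous_pow 2).tendsto (0:ℝ)).mono_left
        (nhdsWithin_le_nhds (s := Set.Ioi (0:ℝ)))
      simpa using this
    have h := c2lim.mul hv2
    rw [mul_zero] at h
    have h2 := h.add (tendsto_const_nhds
      (x := (90987349 / 53222400 : ℝ)) (f := nhdsWithin (0:ℝ) (Set.Ioi 0)))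
    rw [zero_add] at h2
    refine h2.congr' ?_
    filter_upwards [self_mem_nhdsWithin] with v hv
    have hvne : (v:ℝ) ≠ 0 := ne_of_gt hv
    field_simp
    ring
  · exact c2lim
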